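/- arXiv:1910.03531 — 5 statements merged into one kernel-verified Lean document; each statement's English description precedes it below -/
import Mathlib

section
/- Assume (A1) and (A3), and fix t ∈ {0,1}. Let λ† : 𝒳 → [ε, 1−ε] be measurable and τ† : 𝒳 → ℝ be bounded measurable, and suppose that either (i) λ†(X) = λ₁(X) almost surely, or (ii) τ†(X) = τ_t(1,X) almost surely. Then the influence-function expression is doubly robust: E[ R·1{T=t}·Y / (λ†(X)·π_{t1}) + (1 − R·1{T=t} / (λ†(X)·π_{t1}))·τ†(X) ] = μ_t. -/
open MeasureTheory ProbabilityTheory Set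
open Filter Topology ENNReal

noncomputable section

/-- The σ-algebra on `Ω` generated by the map `X`. -/
def sigmaX {Ω 𝒳 : Type*} [MeasurableSpace 𝒳] (X : Ω → 𝒳) : MeasurableSpace Ω :=
  MeasurableSpace.comap X inferInstance

/-- Conditional expectation of `f` given the σ-algebra `m'` under the measure `μ`. -/
def cexp {Ω : Type*} (m' : MeasurableSpace Ω) {m0 : MeasurableSpace Ω} (μ : Measure Ω)
    (f : Ω → ℝ) : Ω → ℝ :=
  MeasureTheory.condExp m' μ f

/-- Conditional probability of the event `s` given the σ-algebra `m'`, as a function. -/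
def cprob {Ω : Type*} (m' : MeasurableSpace Ω) {m0 : MeasurableSpace Ω} (μ : Measure Ω)
    (s : Set Ω) : Ω → ℝ :=
  cexp m' μ (s.indicator fun _ => (1 : ℝ))

/-- `f` and `g` are conditionally independent given the σ-algebra `m'` under `μ` :
conditional probabilities of joint events factorize. -/
def CondIndepFunGiven {Ω β γ : Type*} [MeasurableSpace β]
    [MeasurableSpace γ] (m' : MeasurableSpace Ω) {m0 : MeasurableSpace Ω}
    (f : Ω → β) (g : Ω → γ) (μ : Measure Ω) : Prop :=
  ∀ s u, MeasurableSet s → MeasurableSet u →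
    cprob m' μ (f ⁻¹' s ∩ g ⁻¹' u)
      =ᵐ[μ] fun ω => cprob m' μ (f ⁻¹' s) ω * cprob m' μ (g ⁻¹' u) ω

section Aux

variable {Ω : Type*} {m' : MeasurableSpace Ω} {m0 : MeasurableSpace Ω} {P : Measure Ω}
  [IsProbabilityMeasure P]

lemma cprob01 (hm' : m' ≤ m0) {B : Set Ω} (hB : MeasurableSet B) :
    ∀ᵐ ω ∂P, 0 ≤ cprob m' P B ω ∧ cprob m' P B ω ≤ 1 := by
  have h0 : ∀ᵐ ω ∂P, 0 ≤ cprob m' P B ω :=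
    condExp_nonneg (ae_of_all _ fun ω => Set.indicator_nonneg (fun _ _ => zero_le_one) ω)
  have h1 : ∀ᵐ ω ∂P, cprob m' P B ω ≤ 1 := by
    have hint : Integrable (B.indicator fun _ => (1:ℝ)) P :=
      (integrable_const (1:ℝ)).indicator hB
    have hmono := condExp_mono (m := m') (μ := P) hint (integrable_const (1:ℝ))
      (ae_of_all _ fun ω => Set.indicator_le_self' (fun _ _ => zero_le_one) ω)
    have hconst : P[(fun _ => (1:ℝ))|m'] = fun _ => (1:ℝ) := condExp_const hm' 1
    filter_upwards [hmono] with ω hω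
    simpa [cprob, cexp, hconst] using hω
  filter_upwards [h0, h1] with ω a b
  exact ⟨a, b⟩

lemma integral_indicator_one' {α : Type*} {m : MeasurableSpace α} {μ : Measure α} {s : Set α}
    (hs : MeasurableSet s) : ∫ x, s.indicator (fun _ => (1:ℝ)) x ∂μ = (μ s).toReal :=
  integral_indicator_one hs

set_option synthInstance.maxHeartbeats 1000000 in
set_option maxHeartbeats 1000000 in
lemma condexp_mul_of_condIndep (hm' : m' ≤ m0)
    {R : Ω → ℝ} (hR : Measurable R) (hRbin : ∀ ω, R ω = 0 ∨ R ω = 1)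
    {γ : Type*} [MeasurableSpace γ] {W : Ω → γ} (hW : Measurable W)
    (hA3 : CondIndepFunGiven m' R W P)
    {f : γ → ℝ} (hfm : AEStronglyMeasurable f (P.map W))
    (hfi : Integrable (fun ω => f (W ω)) P) :
    P[(fun ω => R ω * f (W ω))|m'] =ᵐ[P]
      fun ω => cprob m' P (R ⁻¹' {1}) ω * (P[(fun ω => f (W ω))|m']) ω := by
  have hRboundae : ∀ᵐ ω ∂P, ‖R ω‖ ≤ 1 := ae_of_all _ fun ω => by
    rcases hRbin ω with h | h <;> simp [h]
  have hWae : AEMeasurable W P := hW.aemeasurable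
  have main : ∀ ⦃g : γ → ℝ⦄, Integrable g (P.map W) →
      P[(fun ω => R ω * g (W ω))|m'] =ᵐ[P]
        fun ω => cprob m' P (R ⁻¹' {1}) ω * (P[(fun ω => g (W ω))|m']) ω := by
    refine Integrable.induction (μ := P.map W)
      (fun g => P[(fun ω => R ω * g (W ω))|m'] =ᵐ[P]
        fun ω => cprob m' P (R ⁻¹' {1}) ω * (P[(fun ω => g (W ω))|m']) ω) ?_ ?_ ?_ ?_
    · -- indicators
      intro c s hs _
      have h1 : (fun ω => R ω * s.indicator (fun _ => c) (W ω)) =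
          c • ((R ⁻¹' {1} ∩ W ⁻¹' s).indicator fun _ => (1:ℝ)) := by
        funext ω
        rcases hRbin ω with h | h <;> by_cases hWs : W ω ∈ s <;>
          simp [Set.indicator_apply, h, hWs, Pi.smul_apply, smul_eq_mul]
      have h2 : (fun ω => s.indicator (fun _ => c) (W ω)) =
          c • ((W ⁻¹' s).indicator fun _ => (1:ℝ)) := by
        funext ω
        by_cases hWs : W ω ∈ s <;>
          simp [Set.indicator_apply, hWs, Pi.smul_apply, smul_eq_mul]
      have e1 : P[(fun ω => R ω * s.indicator (fun _ => c) (W ω))|m'] =ᵐ[P]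
          c • P[((R ⁻¹' {1} ∩ W ⁻¹' s).indicator fun _ => (1:ℝ))|m'] := by
        rw [h1]; exact condExp_smul c _ m'
      have e2 : P[(fun ω => s.indicator (fun _ => c) (W ω))|m'] =ᵐ[P]
          c • P[((W ⁻¹' s).indicator fun _ => (1:ℝ))|m'] := by
        rw [h2]; exact condExp_smul c _ m'
      have hA := hA3 {1} s (measurableSet_singleton 1) hs
      simp only [cprob, cexp] at hA
      filter_upwards [e1, e2, hA] with ω h1ω h2ω hAω
      simp only [Pi.smul_apply, smul_eq_mul] at h1ω h2ω
      simp only [cprob, cexp]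
      rw [h1ω, hAω, h2ω]
      ring
    · -- addition
      intro g₁ g₂ _ hg₁ hg₂ hQ₁ hQ₂
      have hg₁P : Integrable (fun ω => g₁ (W ω)) P :=
        (integrable_map_measure hg₁.aestronglyMeasurable hWae).mp hg₁
      have hg₂P : Integrable (fun ω => g₂ (W ω)) P :=
        (integrable_map_measure hg₂.aestronglyMeasurable hWae).mp hg₂
      have hRg₁ : Integrable (fun ω => R ω * g₁ (W ω)) P :=
        hg₁P.bdd_mul hR.aestronglyMeasurable hRboundae
      have hRg₂ : Integrable (fun ω => R ω * g₂ (W ω)) P :=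
        hg₂P.bdd_mul hR.aestronglyMeasurable hRboundae
      have c1 : P[(fun ω => R ω * (g₁ + g₂) (W ω))|m'] =ᵐ[P]
          P[(fun ω => R ω * g₁ (W ω))|m'] + P[(fun ω => R ω * g₂ (W ω))|m'] := by
        have e1 : (fun ω => R ω * (g₁ + g₂) (W ω)) =
            (fun ω => R ω * g₁ (W ω)) + fun ω => R ω * g₂ (W ω) := by
          funext ω; simp [Pi.add_apply]; ring
        rw [e1]; exact condExp_add hRg₁ hRg₂ m'
      have c2 : P[(fun ω => (g₁ + g₂) (W ω))|m'] =ᵐ[P]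
          P[(fun ω => g₁ (W ω))|m'] + P[(fun ω => g₂ (W ω))|m'] := by
        have e2 : (fun ω => (g₁ + g₂) (W ω)) =
            (fun ω => g₁ (W ω)) + fun ω => g₂ (W ω) := by
          funext ω; simp [Pi.add_apply]
        rw [e2]; exact condExp_add hg₁P hg₂P m'
      filter_upwards [c1, c2, hQ₁, hQ₂] with ω h1 h2 h3 h4
      simp only [Pi.add_apply] at h1 h2 ⊢
      rw [h1, h2, h3, h4]
      ring
    · -- closed
      refine IsSeqClosed.isClosed ?_
      intro fs flim hfs htend
      haveI : Fact ((1 : ENNReal) ≤ 1) := ⟨le_rfl⟩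
      have hconv : Tendsto (fun n => eLpNorm (⇑(fs n) - ⇑flim) 1 (P.map W)) atTop (𝓝 0) :=
        (Lp.tendsto_Lp_iff_tendsto_eLpNorm' fs flim).mp htend
      have hflν : Integrable (⇑flim) (P.map W) := L1.integrable_coeFn flim
      have hflP : Integrable (fun ω => flim (W ω)) P :=
        (integrable_map_measure (Lp.aestronglyMeasurable flim) hWae).mp hflν
      have hRflP : Integrable (fun ω => R ω * flim (W ω)) P :=
        hflP.bdd_mul hR.aestronglyMeasurable hRboundae
      set u := (P[(fun ω => R ω * flim (W ω))|m']) with hu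
      set v : Ω → ℝ := fun ω => cprob m' P (R ⁻¹' {1}) ω * (P[(fun ω => flim (W ω))|m']) ω with hv
      have hvm : AEStronglyMeasurable v P :=
        (stronglyMeasurable_condExp.mono hm').aestronglyMeasurable.mul
          (stronglyMeasurable_condExp.mono hm').aestronglyMeasurable
      have hcB01 := cprob01 (P := P) hm' (hR (measurableSet_singleton (1:ℝ)) : MeasurableSet (R ⁻¹' {1}))
      have hb : ∀ n, eLpNorm (u - v) 1 P ≤ 2 * eLpNorm (⇑(fs n) - ⇑flim) 1 (P.map W) := by
        intro n
        have hfsν : Integrable (⇑(fs n)) (P.map W) := L1.integrable_coeFn (fs n)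
        have hfsP : Integrable (fun ω => (fs n : γ → ℝ) (W ω)) P :=
          (integrable_map_measure (Lp.aestronglyMeasurable (fs n)) hWae).mp hfsν
        have hRfsP : Integrable (fun ω => R ω * (fs n : γ → ℝ) (W ω)) P :=
          hfsP.bdd_mul hR.aestronglyMeasurable hRboundae
        set un := (P[(fun ω => R ω * (fs n : γ → ℝ) (W ω))|m']) with hun
        set vn : Ω → ℝ := fun ω => cprob m' P (R ⁻¹' {1}) ω *
          (P[(fun ω => (fs n : γ → ℝ) (W ω))|m']) ω with hvn
        have hnn : un =ᵐ[P] vn := hfs n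
        -- norm of difference of compositions
        have hmap : eLpNorm (fun ω => flim (W ω) - (fs n : γ → ℝ) (W ω)) 1 P
            = eLpNorm (⇑(fs n) - ⇑flim) 1 (P.map W) := by
          have : eLpNorm (⇑flim - ⇑(fs n)) 1 (P.map W)
              = eLpNorm ((⇑flim - ⇑(fs n)) ∘ W) 1 P :=
            eLpNorm_map_measure ((Lp.aestronglyMeasurable flim).sub
              (Lp.aestronglyMeasurable (fs n))) hWae
          rw [show (fun ω => flim (W ω) - (fs n : γ → ℝ) (W ω)) = (⇑flim - ⇑(fs n)) ∘ W from rfl,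
            ← this, ← eLpNorm_neg, neg_sub]
        have key1 : eLpNorm (u - un) 1 P ≤ eLpNorm (⇑(fs n) - ⇑flim) 1 (P.map W) := by
          have hsub : u - un =ᵐ[P]
              P[(fun ω => R ω * flim (W ω) - R ω * (fs n : γ → ℝ) (W ω))|m'] :=
            (condExp_sub hRflP hRfsP m').symm
          calc eLpNorm (u - un) 1 P
              = eLpNorm (P[(fun ω => R ω * flim (W ω) - R ω * (fs n : γ → ℝ) (W ω))|m']) 1 P :=
                eLpNorm_congr_ae hsub
            _ ≤ eLpNorm (fun ω => R ω * flim (W ω) - R ω * (fs n : γ → ℝ) (W ω)) 1 P :=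
                eLpNorm_one_condExp_le_eLpNorm _
            _ ≤ eLpNorm (fun ω => flim (W ω) - (fs n : γ → ℝ) (W ω)) 1 P := by
                refine eLpNorm_mono_ae (ae_of_all _ fun ω => ?_)
                rcases hRbin ω with h | h <;> simp [h, ← mul_sub, abs_mul, Real.norm_eq_abs]
            _ = eLpNorm (⇑(fs n) - ⇑flim) 1 (P.map W) := hmap
        have key2 : eLpNorm (vn - v) 1 P ≤ eLpNorm (⇑(fs n) - ⇑flim) 1 (P.map W) := by
          have hsub2 : P[(fun ω => (fs n : γ → ℝ) (W ω))|m'] - P[(fun ω => flim (W ω))|m'] =ᵐ[P]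
              P[(fun ω => (fs n : γ → ℝ) (W ω) - flim (W ω))|m'] :=
            (condExp_sub hfsP hflP m').symm
          calc eLpNorm (vn - v) 1 P
              ≤ eLpNorm (P[(fun ω => (fs n : γ → ℝ) (W ω))|m'] - P[(fun ω => flim (W ω))|m']) 1 P := by
                refine eLpNorm_mono_ae ?_
                filter_upwards [hcB01] with ω hω
                simp only [Pi.sub_apply, hvn, hv, Real.norm_eq_abs]
                rw [← mul_sub, abs_mul]
                calc |cprob m' P (R ⁻¹' {1}) ω| *
                    |(P[(fun ω => (fs n : γ → ℝ) (W ω))|m']) ω - (P[(fun ω => flim (W ω))|m']) ω|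
                    ≤ 1 * |(P[(fun ω => (fs n : γ → ℝ) (W ω))|m']) ω - (P[(fun ω => flim (W ω))|m']) ω| := by
                      refine mul_le_mul_of_nonneg_right ?_ (abs_nonneg _)
                      rw [abs_le]; exact ⟨by linarith [hω.1], hω.2⟩
                  _ = _ := by rw [one_mul]
            _ = eLpNorm (P[(fun ω => (fs n : γ → ℝ) (W ω) - flim (W ω))|m']) 1 P :=
                eLpNorm_congr_ae hsub2
            _ ≤ eLpNorm (fun ω => (fs n : γ → ℝ) (W ω) - flim (W ω)) 1 P :=
                eLpNorm_one_condExp_le_eLpNorm _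
            _ = eLpNorm (⇑(fs n) - ⇑flim) 1 (P.map W) := by
                rw [← hmap, ← eLpNorm_neg]
                congr 1
                funext ω
                simp
        calc eLpNorm (u - v) 1 P
            = eLpNorm ((u - un) + (vn - v)) 1 P := by
              refine eLpNorm_congr_ae ?_
              filter_upwards [hnn] with ω hω
              simp only [Pi.sub_apply, Pi.add_apply]
              rw [hω]; ring
          _ ≤ eLpNorm (u - un) 1 P + eLpNorm (vn - v) 1 P := by
              refine eLpNorm_add_le ?_ ?_ le_rfl
              · exact (integrable_condExp.sub integrable_condExp).aestronglyMeasurable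
              · refine AEStronglyMeasurable.sub ?_ hvm
                exact (stronglyMeasurable_condExp.mono hm').aestronglyMeasurable.mul
                  (stronglyMeasurable_condExp.mono hm').aestronglyMeasurable
          _ ≤ 2 * eLpNorm (⇑(fs n) - ⇑flim) 1 (P.map W) := by
              rw [two_mul]; exact add_le_add key1 key2
      have h0 : eLpNorm (u - v) 1 P = 0 := by
        have h2 : Tendsto (fun n => 2 * eLpNorm (⇑(fs n) - ⇑flim) 1 (P.map W)) atTop (𝓝 0) := by
          have := ENNReal.Tendsto.const_mul hconv (Or.inr (by norm_num : (2 : ENNReal) ≠ ⊤))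
          simpa using this
        exact le_zero_iff.mp (ge_of_tendsto' h2 hb)
      have huv : u - v =ᵐ[P] 0 := by
        refine (eLpNorm_eq_zero_iff ?_ one_ne_zero).mp h0
        exact integrable_condExp.aestronglyMeasurable.sub hvm
      show u =ᵐ[P] v
      filter_upwards [huv] with ω hω
      have : u ω - v ω = 0 := hω
      linarith
    · -- ae congruence
      intro g₁ g₂ hgg _ hQ₁
      have hae : ∀ᵐ ω ∂P, g₁ (W ω) = g₂ (W ω) := ae_of_ae_map hWae hgg
      have cc1 : P[(fun ω => R ω * g₁ (W ω))|m'] =ᵐ[P] P[(fun ω => R ω * g₂ (W ω))|m'] :=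
        condExp_congr_ae (hae.mono fun ω h => show R ω * g₁ (W ω) = R ω * g₂ (W ω) by rw [h])
      have cc2 : P[(fun ω => g₁ (W ω))|m'] =ᵐ[P] P[(fun ω => g₂ (W ω))|m'] :=
        condExp_congr_ae hae
      filter_upwards [cc1, cc2, hQ₁] with ω h1 h2 h3
      rw [← h1, h3, h2]
    -- done induction
  exact main ((integrable_map_measure hfm hWae).mpr hfi)

end Aux

theorem stmt7aux
    {Ω 𝒳 : Type*} {m' : MeasurableSpace Ω} [MeasurableSpace Ω] [MeasurableSpace 𝒳] [StandardBorelSpace 𝒳]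
    (P : Measure Ω) [IsProbabilityMeasure P]
    (X : Ω → 𝒳) (R T Y₁ Y₀ Y : Ω → ℝ) (Yt : ℝ → Ω → ℝ)
    (hm's : m' = sigmaX X)
    (hX : Measurable X) (hR : Measurable R) (hT : Measurable T)
    (hY₁m : Measurable Y₁) (hY₀m : Measurable Y₀)
    (hRbin : ∀ ω, R ω = 0 ∨ R ω = 1) (hTbin : ∀ ω, T ω = 0 ∨ T ω = 1)
    (hY₁2 : MemLp Y₁ 2 P) (hY₀2 : MemLp Y₀ 2 P)
    (hY : Y = fun ω => T ω * Y₁ ω + (1 - T ω) * Y₀ ω)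
    (hYt1 : Yt 1 = Y₁) (hYt0 : Yt 0 = Y₀)
    (ε : ℝ) (hε : 0 < ε)
    (hlam_pos : 0 < P {ω | R ω = 1}) (hlam_lt : P {ω | R ω = 1} < 1)
    (hlamX : ∀ᵐ ω ∂P, ε ≤ cprob m' P {ω' | R ω' = 1} ω ∧
      cprob m' P {ω' | R ω' = 1} ω ≤ 1 - ε)
    (hpi : ∀ r ∈ ({0, 1} : Set ℝ), ∀ t ∈ ({0, 1} : Set ℝ), ∀ᵐ ω ∂P,
      ε ≤ cprob m' (ProbabilityTheory.cond P {ω' | R ω' = r}) {ω' | T ω' = t} ω ∧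
      cprob m' (ProbabilityTheory.cond P {ω' | R ω' = r}) {ω' | T ω' = t} ω ≤ 1 - ε)
    (hA1 : IndepFun T (fun ω => (Y₁ ω, Y₀ ω, X ω)) (ProbabilityTheory.cond P {ω | R ω = 1}))
    (hA3 : CondIndepFunGiven m' R (fun ω => (Y₁ ω, Y₀ ω)) P)
    (t : ℝ) (ht : t = 0 ∨ t = 1)
    (lamd : 𝒳 → ℝ) (hlamdm : Measurable lamd) (hlamdr : ∀ x, lamd x ∈ Set.Icc ε (1 - ε))
    (τd : 𝒳 → ℝ) (hτdm : Measurable τd) (hτdb : ∃ C, ∀ x, |τd x| ≤ C)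
    (hrob : (fun ω => lamd (X ω)) =ᵐ[P] cprob m' P {ω' | R ω' = 1} ∨
      (fun ω => τd (X ω)) =ᵐ[P] cexp m' (ProbabilityTheory.cond P {ω' | R ω' = 1}) (Yt t))
    :
    ∫ ω, (R ω * (if T ω = t then (1 : ℝ) else 0) * Y ω / (lamd (X ω) * ((ProbabilityTheory.cond P {ω' | R ω' = 1}) {ω' | T ω' = t}).toReal)
      + (1 - R ω * (if T ω = t then (1 : ℝ) else 0) / (lamd (X ω) * ((ProbabilityTheory.cond P {ω' | R ω' = 1}) {ω' | T ω' = t}).toReal)) * τd (X ω)) ∂P = (∫ ω', Yt t ω' ∂P) := by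
  classical
  have hm' : m' ≤ ‹MeasurableSpace Ω› := by rw [hm's]; exact hX.comap_le
  have hXm' : Measurable[m'] X := by rw [hm's]; exact fun s hs => ⟨s, hs, rfl⟩
  set A : Set Ω := {ω' | R ω' = 1} with hAdef
  have hAmeas : MeasurableSet A := hR (measurableSet_singleton 1)
  have hPA0 : P A ≠ 0 := ne_of_gt hlam_pos
  set μ₁ := ProbabilityTheory.cond P A with hμ₁def
  haveI : IsProbabilityMeasure μ₁ := cond_isProbabilityMeasure hPA0
  set B : Set Ω := {ω' | T ω' = t} with hBdef
  have hBmeas : MeasurableSet B := hT (measurableSet_singleton t)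
  set π := (μ₁ B).toReal with hπdef
  -- basic facts about Z = Yt t
  have hZeq : ∀ ω, Yt t ω = if t = 1 then Y₁ ω else Y₀ ω := by
    intro ω; rcases ht with h | h
    · rw [h, hYt0, if_neg (by norm_num)]
    · rw [h, hYt1, if_pos rfl]
  have hZm : Measurable (Yt t) := by
    rcases ht with h | h
    · rw [h, hYt0]; exact hY₀m
    · rw [h, hYt1]; exact hY₁m
  have hZint : Integrable (Yt t) P := by
    rcases ht with h | h
    · rw [h, hYt0]; exact hY₀2.integrable one_le_two
    · rw [h, hYt1]; exact hY₁2.integrable one_le_two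
  obtain ⟨C, hC⟩ := hτdb
  -- bounds
  have hLpos : ∀ ω, 0 < lamd (X ω) := fun ω => lt_of_lt_of_le hε (hlamdr (X ω)).1
  have hLne : ∀ ω, lamd (X ω) ≠ 0 := fun ω => ne_of_gt (hLpos ω)
  have hLinv : ∀ ω, ‖(lamd (X ω))⁻¹‖ ≤ ε⁻¹ := by
    intro ω
    rw [Real.norm_eq_abs, abs_of_pos (inv_pos.2 (hLpos ω))]
    exact inv_anti₀ hε (hlamdr (X ω)).1
  have hRnorm : ∀ᵐ ω ∂P, ‖R ω‖ ≤ 1 := ae_of_all _ fun ω => by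
    rcases hRbin ω with h | h <;> simp [h]
  have hInorm : ∀ ω, ‖(if T ω = t then (1:ℝ) else 0)‖ ≤ 1 := fun ω => by
    by_cases h : T ω = t <;> simp [h]
  -- integrability
  have hRint : Integrable R P :=
    Integrable.mono' (integrable_const 1) hR.aestronglyMeasurable hRnorm
  have hτint : Integrable (fun ω => τd (X ω)) P := by
    refine Integrable.mono' (integrable_const C) (hτdm.comp hX).aestronglyMeasurable ?_
    exact ae_of_all _ fun ω => by simpa using hC (X ω)
  have hZτint : Integrable (fun ω => Yt t ω - τd (X ω)) P := hZint.sub hτint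
  have hg'int : Integrable (fun ω => (lamd (X ω))⁻¹ * (Yt t ω - τd (X ω))) P :=
    hZτint.bdd_mul ((hlamdm.comp hX).inv).aestronglyMeasurable (ae_of_all _ hLinv)
  have hIg'int : Integrable (fun ω => (if T ω = t then (1:ℝ) else 0) *
      ((lamd (X ω))⁻¹ * (Yt t ω - τd (X ω)))) P := by
    refine hg'int.bdd_mul ?_ (ae_of_all _ hInorm)
    exact (Measurable.ite (hT (measurableSet_singleton t)) measurable_const
      measurable_const).aestronglyMeasurable
  have hRIg'int : Integrable (fun ω => R ω * ((if T ω = t then (1:ℝ) else 0) *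
      ((lamd (X ω))⁻¹ * (Yt t ω - τd (X ω))))) P :=
    hIg'int.bdd_mul hR.aestronglyMeasurable hRnorm
  have hRg'int : Integrable (fun ω => R ω * ((lamd (X ω))⁻¹ * (Yt t ω - τd (X ω)))) P :=
    hg'int.bdd_mul hR.aestronglyMeasurable hRnorm
  have hRZint : Integrable (fun ω => R ω * Yt t ω) P :=
    hZint.bdd_mul hR.aestronglyMeasurable hRnorm
  have hRτint : Integrable (fun ω => R ω * τd (X ω)) P :=
    hτint.bdd_mul hR.aestronglyMeasurable hRnorm
  have hRZτint : Integrable (fun ω => R ω * (Yt t ω - τd (X ω))) P :=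
    hZτint.bdd_mul hR.aestronglyMeasurable hRnorm
  -- R as indicator of A
  have hRind : ∀ ω, R ω = A.indicator (fun _ => (1:ℝ)) ω := by
    intro ω; rcases hRbin ω with h | h
    · have hω : ω ∉ A := by simp [hAdef, h]
      simp [hω, h]
    · have hω : ω ∈ A := by simp [hAdef, h]
      simp [hω, h]
  have hcondRA : P[R|m'] = cprob m' P A := by
    rw [show R = A.indicator (fun _ => (1:ℝ)) from funext hRind]; rfl
  -- integral transfer between P and μ₁
  have hPAtR : (P A).toReal ≠ 0 := ENNReal.toReal_ne_zero.2 ⟨hPA0, measure_ne_top _ _⟩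
  have hcondInt : ∀ h : Ω → ℝ, ∫ ω, R ω * h ω ∂P = (P A).toReal * ∫ ω, h ω ∂μ₁ := by
    intro h
    have h1 : ∫ ω, R ω * h ω ∂P = ∫ ω, A.indicator h ω ∂P := by
      refine integral_congr_ae (ae_of_all _ fun ω => ?_)
      by_cases hω : ω ∈ A
      · simp [hRind ω, Set.indicator_of_mem hω]
      · simp [hRind ω, Set.indicator_of_notMem hω]
    rw [h1, integral_indicator hAmeas, hμ₁def, ProbabilityTheory.cond, integral_smul_measure,
      ENNReal.toReal_inv, smul_eq_mul, ← mul_assoc, mul_inv_cancel₀ hPAtR, one_mul]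
  -- π bounds
  have hacπ : μ₁ ≪ P := by rw [hμ₁def]; exact cond_absolutelyContinuous
  have ht01 : t ∈ ({0, 1} : Set ℝ) := by rcases ht with h | h <;> simp [h]
  have h101 : (1:ℝ) ∈ ({0, 1} : Set ℝ) := by simp
  have hπbd := hpi 1 h101 t ht01
  rw [← hAdef, ← hμ₁def, ← hBdef] at hπbd
  have hπbd' : ∀ᵐ ω ∂μ₁, ε ≤ cprob m' μ₁ B ω :=
    (hπbd.mono fun ω h => h.1).filter_mono hacπ.ae_le
  have hεπ : ε ≤ π := by
    simp only [cprob, cexp] at hπbd'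
    have hmono := integral_mono_ae (integrable_const ε)
      (integrable_condExp : Integrable (μ₁[(B.indicator fun _ => (1:ℝ))|m']) μ₁) hπbd'
    rw [integral_const, integral_condExp hm', integral_indicator_one' hBmeas] at hmono
    simpa using hmono
  have hπpos : 0 < π := lt_of_lt_of_le hε hεπ
  have hπne : π ≠ 0 := ne_of_gt hπpos
  -- consistency: I * Y = I * Z
  have hIY : ∀ ω, T ω = t → Y ω = Yt t ω := by
    intro ω hTt
    simp only [hY, hZeq ω]
    rcases ht with h | h
    · rw [hTt, h]; norm_num
    · rw [hTt, h]; norm_num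
  -- decomposition of the integrand
  have hdecomp : ∀ ω, R ω * (if T ω = t then (1:ℝ) else 0) * Y ω / (lamd (X ω) * π)
      + (1 - R ω * (if T ω = t then (1:ℝ) else 0) / (lamd (X ω) * π)) * τd (X ω)
      = τd (X ω) + π⁻¹ * (R ω * ((if T ω = t then (1:ℝ) else 0) *
        ((lamd (X ω))⁻¹ * (Yt t ω - τd (X ω))))) := by
    intro ω
    by_cases hTt : T ω = t
    · rw [if_pos hTt, hIY ω hTt]
      have hL := hLne ω
      field_simp
      ring
    · rw [if_neg hTt]
      simp
  rw [integral_congr_ae (ae_of_all _ hdecomp)]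
  -- split the integral
  rw [integral_add hτint (hRIg'int.const_mul π⁻¹), integral_const_mul]
  -- independence step under μ₁
  have hIμ : ∫ ω, (if T ω = t then (1:ℝ) else 0) ∂μ₁ = π := by
    have hIB : (fun ω => if T ω = t then (1:ℝ) else 0) = B.indicator (fun _ => (1:ℝ)) := by
      funext ω
      by_cases hω : T ω = t
      · have : ω ∈ B := by simp [hBdef, hω]
        simp [hω, this]
      · have : ω ∉ B := by simp [hBdef, hω]
        simp [hω, this]
    rw [hIB]
    exact integral_indicator_one hBmeas
  have hindep : IndepFun (fun ω => if T ω = t then (1:ℝ) else 0)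
      (fun ω => (lamd (X ω))⁻¹ * (Yt t ω - τd (X ω))) μ₁ := by
    have hφ : Measurable (fun s : ℝ => if s = t then (1:ℝ) else 0) :=
      Measurable.ite (measurableSet_eq) measurable_const measurable_const
    have hψ : Measurable (fun p : ℝ × ℝ × 𝒳 => (lamd p.2.2)⁻¹ *
        ((if t = 1 then p.1 else p.2.1) - τd p.2.2)) := by
      refine ((hlamdm.comp (measurable_snd.snd)).inv).mul (Measurable.sub ?_ (hτdm.comp measurable_snd.snd))
      by_cases h : t = 1
      · simp only [h, if_true]; exact measurable_fst
      · simp only [h, if_false]; exact measurable_snd.fst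
    have := hA1.comp hφ hψ
    have e1 : (fun s : ℝ => if s = t then (1:ℝ) else 0) ∘ T
        = fun ω => if T ω = t then (1:ℝ) else 0 := rfl
    have e2 : (fun p : ℝ × ℝ × 𝒳 => (lamd p.2.2)⁻¹ *
          ((if t = 1 then p.1 else p.2.1) - τd p.2.2)) ∘ (fun ω => (Y₁ ω, Y₀ ω, X ω))
        = fun ω => (lamd (X ω))⁻¹ * (Yt t ω - τd (X ω)) := by
      funext ω
      simp only [Function.comp_apply]
      rw [← hZeq ω]
    rwa [e1, e2] at this
  have hmul : ∫ ω, (if T ω = t then (1:ℝ) else 0) *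
      ((lamd (X ω))⁻¹ * (Yt t ω - τd (X ω))) ∂μ₁
      = π * ∫ ω, (lamd (X ω))⁻¹ * (Yt t ω - τd (X ω)) ∂μ₁ := by
    rw [hindep.integral_fun_mul_eq_mul_integral
      ((Measurable.ite (hT (measurableSet_singleton t)) measurable_const
        measurable_const).aestronglyMeasurable)
      ((((hlamdm.comp hX).inv).mul (hZm.sub (hτdm.comp hX))).aestronglyMeasurable), hIμ]
  have e5 : π⁻¹ * ∫ ω, R ω * ((if T ω = t then (1:ℝ) else 0) *
      ((lamd (X ω))⁻¹ * (Yt t ω - τd (X ω)))) ∂P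
      = ∫ ω, R ω * ((lamd (X ω))⁻¹ * (Yt t ω - τd (X ω))) ∂P := by
    rw [hcondInt _, hmul, hcondInt _]
    field_simp
  rw [e5]
  -- conditional expectation computation
  have hW2 : Measurable (fun ω => (Y₁ ω, Y₀ ω)) := hY₁m.prodMk hY₀m
  have hRZcond : P[(fun ω => R ω * Yt t ω)|m'] =ᵐ[P]
      fun ω => cprob m' P A ω * (P[Yt t|m']) ω := by
    have hfp : Measurable (fun p : ℝ × ℝ => if t = 1 then p.1 else p.2) := by
      by_cases h : t = 1
      · simp only [h, if_true]; exact measurable_fst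
      · simp only [h, if_false]; exact measurable_snd
    have hfi : Integrable (fun ω => (fun p : ℝ × ℝ => if t = 1 then p.1 else p.2)
        ((fun ω => (Y₁ ω, Y₀ ω)) ω)) P :=
      hZint.congr (ae_of_all _ fun ω => hZeq ω)
    have hmain := condexp_mul_of_condIndep hm' hR hRbin hW2 hA3
      (f := fun p : ℝ × ℝ => if t = 1 then p.1 else p.2) hfp.aestronglyMeasurable hfi
    have hA' : R ⁻¹' {1} = A := by ext ω; simp [hAdef]
    have hcomp : (fun ω => (fun p : ℝ × ℝ => if t = 1 then p.1 else p.2)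
        ((fun ω => (Y₁ ω, Y₀ ω)) ω)) = Yt t := by
      funext ω; exact (hZeq ω).symm
    rw [hA'] at hmain
    have hcomp2 : (fun ω => R ω * (fun p : ℝ × ℝ => if t = 1 then p.1 else p.2)
        ((fun ω => (Y₁ ω, Y₀ ω)) ω)) = fun ω => R ω * Yt t ω := by
      funext ω; rw [show (fun p : ℝ × ℝ => if t = 1 then p.1 else p.2)
        ((fun ω => (Y₁ ω, Y₀ ω)) ω) = Yt t ω from (hZeq ω).symm]
    rw [hcomp, hcomp2] at hmain
    exact hmain
  have hRτcond : P[(fun ω => R ω * τd (X ω))|m'] =ᵐ[P]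
      fun ω => τd (X ω) * cprob m' P A ω := by
    have hτm' : StronglyMeasurable[m'] (fun ω => τd (X ω)) :=
      (hτdm.comp hXm').stronglyMeasurable
    have h := condExp_stronglyMeasurable_mul_of_bound hm' hτm' hRint C
      (ae_of_all _ fun ω => by simpa using hC (X ω))
    rw [hcondRA] at h
    have e : (fun ω => R ω * τd (X ω)) = (fun ω => τd (X ω)) * R := by
      funext ω; simp [mul_comm]
    rw [e]
    exact h
  have hkey : P[(fun ω => R ω * ((lamd (X ω))⁻¹ * (Yt t ω - τd (X ω))))|m'] =ᵐ[P]
      fun ω => cprob m' P A ω * (lamd (X ω))⁻¹ * ((P[Yt t|m']) ω - τd (X ω)) := by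
    have hLinvSM : StronglyMeasurable[m'] (fun ω => (lamd (X ω))⁻¹) :=
      ((hlamdm.comp hXm').inv).stronglyMeasurable
    have hpull := condExp_stronglyMeasurable_mul_of_bound hm' hLinvSM hRZτint ε⁻¹
      (ae_of_all _ hLinv)
    have e : (fun ω => R ω * ((lamd (X ω))⁻¹ * (Yt t ω - τd (X ω))))
        = (fun ω => (lamd (X ω))⁻¹) * (fun ω => R ω * (Yt t ω - τd (X ω))) := by
      funext ω; simp [Pi.mul_apply]; ring
    have esub : (fun ω => R ω * (Yt t ω - τd (X ω)))
        = (fun ω => R ω * Yt t ω) - fun ω => R ω * τd (X ω) := by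
      funext ω; simp [Pi.sub_apply]; ring
    have hsub : P[(fun ω => R ω * (Yt t ω - τd (X ω)))|m'] =ᵐ[P]
        P[(fun ω => R ω * Yt t ω)|m'] - P[(fun ω => R ω * τd (X ω))|m'] := by
      rw [esub]; exact condExp_sub hRZint hRτint m'
    rw [e]
    refine hpull.trans ?_
    have : (fun ω => (lamd (X ω))⁻¹) * P[(fun ω => R ω * (Yt t ω - τd (X ω)))|m'] =ᵐ[P]
        (fun ω => (lamd (X ω))⁻¹) *
          (P[(fun ω => R ω * Yt t ω)|m'] - P[(fun ω => R ω * τd (X ω))|m']) := by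
      filter_upwards [hsub] with ω hω
      simp only [Pi.mul_apply, Pi.sub_apply] at *
      rw [hω]
    refine this.trans ?_
    filter_upwards [hRZcond, hRτcond] with ω h1 h2
    simp only [Pi.mul_apply, Pi.sub_apply]
    rw [h1, h2]
    ring
  have e6 : ∫ ω, R ω * ((lamd (X ω))⁻¹ * (Yt t ω - τd (X ω))) ∂P
      = ∫ ω, cprob m' P A ω * (lamd (X ω))⁻¹ * ((P[Yt t|m']) ω - τd (X ω)) ∂P := by
    rw [← integral_condExp hm' (f := fun ω => R ω * ((lamd (X ω))⁻¹ * (Yt t ω - τd (X ω))))]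
    exact integral_congr_ae hkey
  rw [e6]
  have hcZint : Integrable (P[Yt t|m']) P := integrable_condExp
  have hintcZ : ∫ ω, (P[Yt t|m']) ω ∂P = ∫ ω, Yt t ω ∂P := integral_condExp hm'
  -- the two cases of double robustness
  rcases hrob with hrobL | hrobτ
  · -- λ† = λ₁(X)
    have hcAbd : ∀ᵐ ω ∂P, ε ≤ cprob m' P A ω ∧ cprob m' P A ω ≤ 1 - ε := by
      exact hlamX
    have hae : (fun ω => cprob m' P A ω * (lamd (X ω))⁻¹ * ((P[Yt t|m']) ω - τd (X ω)))
        =ᵐ[P] fun ω => (P[Yt t|m']) ω - τd (X ω) := by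
      filter_upwards [hrobL] with ω hω
      have : cprob m' P A ω = lamd (X ω) := hω.symm
      rw [this, mul_inv_cancel₀ (hLne ω), one_mul]
    rw [integral_congr_ae hae, integral_sub hcZint hτint, hintcZ]
    ring
  · -- τ† = τ_t(1, X)
    haveI : SigmaFinite (μ₁.trim hm') := by infer_instance
    have hZμ₁ : Integrable (Yt t) μ₁ := by
      rw [hμ₁def, ProbabilityTheory.cond]
      exact (hZint.restrict).smul_measure (ENNReal.inv_ne_top.2 hPA0)
    have hcZμ₁ : Integrable (P[Yt t|m']) μ₁ := by
      rw [hμ₁def, ProbabilityTheory.cond]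
      exact (hcZint.restrict).smul_measure (ENNReal.inv_ne_top.2 hPA0)
    have hcZRint : Integrable ((P[Yt t|m']) * R) P := by
      refine (hcZint.bdd_mul hR.aestronglyMeasurable hRnorm).congr (ae_of_all _ fun ω => ?_)
      simp [Pi.mul_apply, mul_comm]
    have hcZcond : P[((P[Yt t|m']) * R)|m'] =ᵐ[P]
        fun ω => (P[Yt t|m']) ω * cprob m' P A ω := by
      have h := condExp_mul_of_stronglyMeasurable_left stronglyMeasurable_condExp hcZRint hRint
      rw [hcondRA] at h
      exact h
    -- set-integral characterization of the conditional expectation under μ₁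
    have hindR : ∀ (h : Ω → ℝ) ω, A.indicator h ω = R ω * h ω := by
      intro h ω
      by_cases hω : ω ∈ A
      · simp [Set.indicator_of_mem hω, hRind ω]
      · simp [Set.indicator_of_notMem hω, hRind ω]
    have hgeq : ∀ s, MeasurableSet[m'] s → μ₁ s < ⊤ →
        ∫ ω in s, (P[Yt t|m']) ω ∂μ₁ = ∫ ω in s, Yt t ω ∂μ₁ := by
      intro s hs _
      have hs0 : MeasurableSet s := hm' s hs
      have hred : ∀ h : Ω → ℝ, ∫ ω in s, h ω ∂μ₁
          = (P A).toReal⁻¹ * ∫ ω in s, A.indicator h ω ∂P := by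
        intro h
        rw [hμ₁def, ProbabilityTheory.cond, Measure.restrict_smul, integral_smul_measure,
          ENNReal.toReal_inv, smul_eq_mul, Measure.restrict_restrict hs0,
          setIntegral_indicator hAmeas]
      rw [hred, hred]
      congr 1
      have hL1 : ∫ ω in s, A.indicator (P[Yt t|m']) ω ∂P
          = ∫ ω in s, (P[Yt t|m']) ω * cprob m' P A ω ∂P := by
        calc ∫ ω in s, A.indicator (P[Yt t|m']) ω ∂P
            = ∫ ω in s, ((P[Yt t|m']) * R) ω ∂P := by
              refine setIntegral_congr_ae hs0 (ae_of_all _ fun ω _ => ?_)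
              rw [hindR]; simp only [Pi.mul_apply]; ring
          _ = ∫ ω in s, (P[((P[Yt t|m']) * R)|m']) ω ∂P :=
              (setIntegral_condExp hm' hcZRint hs).symm
          _ = ∫ ω in s, (P[Yt t|m']) ω * cprob m' P A ω ∂P :=
              setIntegral_congr_ae hs0 (hcZcond.mono fun ω hω _ => hω)
      have hL2 : ∫ ω in s, A.indicator (Yt t) ω ∂P
          = ∫ ω in s, cprob m' P A ω * (P[Yt t|m']) ω ∂P := by
        calc ∫ ω in s, A.indicator (Yt t) ω ∂P
            = ∫ ω in s, (fun ω => R ω * Yt t ω) ω ∂P := by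
              refine setIntegral_congr_ae hs0 (ae_of_all _ fun ω _ => ?_)
              rw [hindR]
          _ = ∫ ω in s, (P[(fun ω => R ω * Yt t ω)|m']) ω ∂P :=
              (setIntegral_condExp hm' hRZint hs).symm
          _ = ∫ ω in s, cprob m' P A ω * (P[Yt t|m']) ω ∂P :=
              setIntegral_congr_ae hs0 (hRZcond.mono fun ω hω _ => hω)
      rw [hL1, hL2]
      refine setIntegral_congr_ae hs0 (ae_of_all _ fun ω _ => ?_)
      ring
    have ha : (P[Yt t|m']) =ᵐ[μ₁] μ₁[Yt t|m'] :=
      ae_eq_condExp_of_forall_setIntegral_eq hm' hZμ₁ (fun s _ _ => hcZμ₁.integrableOn)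
        hgeq stronglyMeasurable_condExp.aestronglyMeasurable
    have hτμ₁2 : (fun ω => τd (X ω)) =ᵐ[μ₁] (P[Yt t|m']) := by
      have h1 : (fun ω => τd (X ω)) =ᵐ[μ₁] μ₁[Yt t|m'] := by
        have := hrobτ.filter_mono hacπ.ae_le
        exact this
      exact h1.trans ha.symm
    -- transfer the a.e. equality from μ₁ back to P
    have hcAbd : ∀ᵐ ω ∂P, ε ≤ cprob m' P A ω ∧ cprob m' P A ω ≤ 1 - ε := by
      exact hlamX
    have hτcZ : (fun ω => τd (X ω)) =ᵐ[P] P[Yt t|m'] := by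
      have hτm'' : Measurable[m'] (fun ω => τd (X ω)) := hτdm.comp hXm'
      have hDm'eq : MeasurableSet[m'] {ω | τd (X ω) = (P[Yt t|m']) ω} :=
        measurableSet_eq_fun hτm'' stronglyMeasurable_condExp.measurable
      set D : Set Ω := {ω | ¬ τd (X ω) = (P[Yt t|m']) ω} with hDdef
      have hDm' : MeasurableSet[m'] D := hDm'eq.compl
      have hDm : MeasurableSet D := hm' D hDm'
      have hμ₁D : μ₁ D = 0 := by
        have h2 := hτμ₁2
        rw [Filter.EventuallyEq, ae_iff] at h2
        exact h2
      have hPAD : P (A ∩ D) = 0 := by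
        have hca := ProbabilityTheory.cond_apply hAmeas P D
        rw [← hμ₁def, hμ₁D] at hca
        rcases mul_eq_zero.mp hca.symm with h | h
        · exact absurd (ENNReal.inv_eq_zero.mp h) (measure_ne_top _ _)
        · exact h
      have hDind : ∀ ω, ‖D.indicator (fun _ => (1:ℝ)) ω‖ ≤ 1 := fun ω => by
        by_cases hω : ω ∈ D <;> simp [hω]
      have hDSM : StronglyMeasurable[m'] (D.indicator (fun _ => (1:ℝ))) :=
        stronglyMeasurable_const.indicator hDm'
      have hcD := condExp_stronglyMeasurable_mul_of_bound hm' hDSM hRint 1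
        (ae_of_all _ hDind)
      rw [hcondRA] at hcD
      have hcAint : Integrable (cprob m' P A) P :=
        (integrable_condExp : Integrable (P[(A.indicator fun _ => (1:ℝ))|m']) P)
      have hval : ∫ ω, (D.indicator (fun _ => (1:ℝ)) * R) ω ∂P = 0 := by
        have heq : (D.indicator (fun _ => (1:ℝ)) * R) = (D ∩ A).indicator (fun _ => (1:ℝ)) := by
          funext ω
          simp only [Pi.mul_apply]
          by_cases hω : ω ∈ D <;> by_cases hω2 : ω ∈ A <;>
            simp [hω, hω2, hRind ω, Set.indicator_apply]
        rw [heq, integral_indicator_one' (hDm.inter hAmeas), Set.inter_comm, hPAD]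
        simp
      have h2 : ∫ ω, D.indicator (fun _ => (1:ℝ)) ω * cprob m' P A ω ∂P = 0 := by
        have h3 : ∫ ω, (D.indicator (fun _ => (1:ℝ)) * R) ω ∂P
            = ∫ ω, D.indicator (fun _ => (1:ℝ)) ω * cprob m' P A ω ∂P := by
          rw [← integral_condExp hm' (f := D.indicator (fun _ => (1:ℝ)) * R)]
          exact integral_congr_ae hcD
        rw [← h3, hval]
      have hintD1 : Integrable (D.indicator (fun _ => (ε:ℝ))) P :=
        (integrable_const ε).indicator hDm
      have hintD2 : Integrable (fun ω => D.indicator (fun _ => (1:ℝ)) ω * cprob m' P A ω) P :=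
        hcAint.bdd_mul ((measurable_const.indicator hDm).aestronglyMeasurable)
          (ae_of_all _ hDind)
      have hmono : ∫ ω, D.indicator (fun _ => (ε:ℝ)) ω ∂P
          ≤ ∫ ω, D.indicator (fun _ => (1:ℝ)) ω * cprob m' P A ω ∂P := by
        refine integral_mono_ae hintD1 hintD2 ?_
        filter_upwards [hcAbd] with ω hω
        by_cases hωD : ω ∈ D
        · simp only [Set.indicator_of_mem hωD, one_mul]
          exact hω.1
        · simp [Set.indicator_of_notMem hωD]
      have hεPD : ε * (P D).toReal ≤ 0 := by
        have hconstint : ∫ ω, D.indicator (fun _ => (ε:ℝ)) ω ∂P = (P D).toReal * ε := by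
          rw [integral_indicator_const (ε:ℝ) hDm]; simp [smul_eq_mul, measureReal_def]
        rw [hconstint, h2] at hmono
        linarith
      have hPDtoReal : (P D).toReal = 0 := by
        have h0 : 0 ≤ (P D).toReal := ENNReal.toReal_nonneg
        nlinarith
      have hPD : P D = 0 := by
        rcases (ENNReal.toReal_eq_zero_iff _).mp hPDtoReal with h | h
        · exact h
        · exact absurd h (measure_ne_top _ _)
      rw [Filter.EventuallyEq, ae_iff]
      exact hPD
    have hae0 : (fun ω => cprob m' P A ω * (lamd (X ω))⁻¹ * ((P[Yt t|m']) ω - τd (X ω)))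
        =ᵐ[P] fun _ => (0:ℝ) := by
      filter_upwards [hτcZ] with ω hω
      rw [hω]
      simp
    rw [integral_congr_ae hae0, integral_zero, integral_congr_ae hτcZ, hintcZ]
    ring

theorem stmt7
    {Ω 𝒳 : Type*} [MeasurableSpace Ω] [MeasurableSpace 𝒳] [StandardBorelSpace 𝒳]
    (P : Measure Ω) [IsProbabilityMeasure P]
    (X : Ω → 𝒳) (R T Y₁ Y₀ Y : Ω → ℝ) (Yt : ℝ → Ω → ℝ)
    (hX : Measurable X) (hR : Measurable R) (hT : Measurable T)
    (hY₁m : Measurable Y₁) (hY₀m : Measurable Y₀)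
    (hRbin : ∀ ω, R ω = 0 ∨ R ω = 1) (hTbin : ∀ ω, T ω = 0 ∨ T ω = 1)
    (hY₁2 : MemLp Y₁ 2 P) (hY₀2 : MemLp Y₀ 2 P)
    (hY : Y = fun ω => T ω * Y₁ ω + (1 - T ω) * Y₀ ω)
    (hYt1 : Yt 1 = Y₁) (hYt0 : Yt 0 = Y₀)
    (ε : ℝ) (hε : 0 < ε)
    (hlam_pos : 0 < P {ω | R ω = 1}) (hlam_lt : P {ω | R ω = 1} < 1)
    (hlamX : ∀ᵐ ω ∂P, ε ≤ cprob (sigmaX X) P {ω' | R ω' = 1} ω ∧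
      cprob (sigmaX X) P {ω' | R ω' = 1} ω ≤ 1 - ε)
    (hpi : ∀ r ∈ ({0, 1} : Set ℝ), ∀ t ∈ ({0, 1} : Set ℝ), ∀ᵐ ω ∂P,
      ε ≤ cprob (sigmaX X) (ProbabilityTheory.cond P {ω' | R ω' = r}) {ω' | T ω' = t} ω ∧
      cprob (sigmaX X) (ProbabilityTheory.cond P {ω' | R ω' = r}) {ω' | T ω' = t} ω ≤ 1 - ε)
    (hA1 : IndepFun T (fun ω => (Y₁ ω, Y₀ ω, X ω)) (ProbabilityTheory.cond P {ω | R ω = 1}))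
    (hA3 : CondIndepFunGiven (sigmaX X) R (fun ω => (Y₁ ω, Y₀ ω)) P)
    (t : ℝ) (ht : t = 0 ∨ t = 1)
    (lamd : 𝒳 → ℝ) (hlamdm : Measurable lamd) (hlamdr : ∀ x, lamd x ∈ Set.Icc ε (1 - ε))
    (τd : 𝒳 → ℝ) (hτdm : Measurable τd) (hτdb : ∃ C, ∀ x, |τd x| ≤ C)
    (hrob : (fun ω => lamd (X ω)) =ᵐ[P] cprob (sigmaX X) P {ω' | R ω' = 1} ∨
      (fun ω => τd (X ω)) =ᵐ[P] cexp (sigmaX X) (ProbabilityTheory.cond P {ω' | R ω' = 1}) (Yt t))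
    :
    ∫ ω, (R ω * (if T ω = t then (1 : ℝ) else 0) * Y ω / (lamd (X ω) * ((ProbabilityTheory.cond P {ω' | R ω' = 1}) {ω' | T ω' = t}).toReal)
      + (1 - R ω * (if T ω = t then (1 : ℝ) else 0) / (lamd (X ω) * ((ProbabilityTheory.cond P {ω' | R ω' = 1}) {ω' | T ω' = t}).toReal)) * τd (X ω)) ∂P = (∫ ω', Yt t ω' ∂P) :=
  stmt7aux P X R T Y₁ Y₀ Y Yt rfl hX hR hT hY₁m hY₀m hRbin hTbin hY₁2 hY₀2 hY hYt1 hYt0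
    ε hε hlam_pos hlam_lt hlamX hpi hA1 hA3 t ht lamd hlamdm hlamdr τd hτdm hτdb hrob
end
end

section
/- Assume (A1) and (A3), and fix t ∈ {0,1}. Let λ† : 𝒳 → [ε, 1−ε] be measurable and τ† : 𝒳 → ℝ be bounded measurable. Then the remainder term of the one-step expansion satisfies the second-order identity E[ R·1{T=t}·Y / (λ†(X)·π_{t1}) + (1 − R·1{T=t} / (λ†(X)·π_{t1}))·τ†(X) ] − μ_t = E[ ( λ₁(X)/λ†(X) − 1 )·( τ_t(1,X) − τ†(X) ) ]. -/
open MeasureTheory ProbabilityTheory Set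
open scoped ENNReal NNReal

noncomputable section

namespace Stmt8Aux

variable {Ω : Type*} {m' m0 : MeasurableSpace Ω} {P : Measure Ω} [IsProbabilityMeasure P]
  (hm : m' ≤ m0)

include hm

/-- Trim engine: the measure with density `lam` and the restriction to `B` agree on `m'`. -/
lemma density_trim_eq {B : Set Ω} (hB : MeasurableSet B)
    {lam : Ω → ℝ} (hlam_int : Integrable lam P) (hlam_nn : 0 ≤ᵐ[P] lam)
    (hset : ∀ s : Set Ω, MeasurableSet[m'] s → ∫ ω in s, lam ω ∂P = (P (B ∩ s)).toReal) :
    (P.withDensity (fun ω => ENNReal.ofReal (lam ω))).trim hm = (P.restrict B).trim hm := by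
  refine @Measure.ext Ω m' _ _ fun s hs => ?_
  have hs0 : MeasurableSet[m0] s := hm s hs
  have h1 : (P.withDensity fun ω => ENNReal.ofReal (lam ω)) s
      = ENNReal.ofReal (∫ ω in s, lam ω ∂P) := by
    rw [withDensity_apply _ hs0,
      ← ofReal_integral_eq_lintegral_ofReal hlam_int.integrableOn (ae_restrict_of_ae hlam_nn)]
  have h2 : (P.restrict B) s = P (B ∩ s) := by
    rw [Measure.restrict_apply hs0, inter_comm]
  rw [trim_measurableSet_eq hm hs, trim_measurableSet_eq hm hs, h1, h2, hset s hs,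
    ENNReal.ofReal_toReal (measure_ne_top _ _)]

lemma integral_lam_mul {B : Set Ω} (hB : MeasurableSet B)
    {lam : Ω → ℝ} (hlam_sm : StronglyMeasurable[m'] lam)
    (hlam_int : Integrable lam P) (hlam_nn : 0 ≤ᵐ[P] lam)
    (hset : ∀ s : Set Ω, MeasurableSet[m'] s → ∫ ω in s, lam ω ∂P = (P (B ∩ s)).toReal)
    {φ : Ω → ℝ} (hφ : StronglyMeasurable[m'] φ) :
    ∫ ω, lam ω * φ ω ∂P = ∫ ω in B, φ ω ∂P := by
  have hlam_m : Measurable lam := (hlam_sm.measurable).mono hm le_rfl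
  have hwm : Measurable fun ω => (lam ω).toNNReal := hlam_m.real_toNNReal
  have h0 : ∫ ω, lam ω * φ ω ∂P
      = ∫ ω, ((lam ω).toNNReal : ℝ) • φ ω ∂P := by
    refine integral_congr_ae ?_
    filter_upwards [hlam_nn] with ω h
    simp [Real.coe_toNNReal _ h, smul_eq_mul]
  have h1 : ∫ ω, ((lam ω).toNNReal : ℝ) • φ ω ∂P
      = ∫ ω, φ ω ∂(P.withDensity fun ω => ((lam ω).toNNReal : ℝ≥0∞)) :=
    (integral_withDensity_eq_integral_smul (μ := P) hwm φ).symm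
  have hd : (fun ω => ((lam ω).toNNReal : ℝ≥0∞)) = fun ω => ENNReal.ofReal (lam ω) := rfl
  rw [h0, h1, hd, integral_trim hm hφ,
    density_trim_eq hm hB hlam_int hlam_nn hset, ← integral_trim hm hφ]

lemma integrable_of_restrict_of_density {B : Set Ω} (hB : MeasurableSet B)
    {lam : Ω → ℝ} (hlam_sm : StronglyMeasurable[m'] lam)
    (hlam_int : Integrable lam P) (hlam_nn : 0 ≤ᵐ[P] lam)
    (hset : ∀ s : Set Ω, MeasurableSet[m'] s → ∫ ω in s, lam ω ∂P = (P (B ∩ s)).toReal)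
    {ε : ℝ} (hε : 0 < ε) (hlam_ge : ∀ᵐ ω ∂P, ε ≤ lam ω)
    {φ : Ω → ℝ} (hφ : StronglyMeasurable[m'] φ) (hint : Integrable φ (P.restrict B)) :
    Integrable φ P := by
  have hlam_m : Measurable lam := (hlam_sm.measurable).mono hm le_rfl
  have hφm0 : Measurable φ := (hφ.measurable).mono hm le_rfl
  have hnb : Measurable[m'] fun ω => (‖φ ω‖₊ : ℝ≥0∞) := by
    letI : MeasurableSpace Ω := m'
    exact hφ.measurable.enorm
  have hnb0 : Measurable fun ω => (‖φ ω‖₊ : ℝ≥0∞) := hφm0.enorm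
  refine ⟨(hφ.mono hm).aestronglyMeasurable, ?_⟩
  rw [hasFiniteIntegral_def]
  have key : ENNReal.ofReal ε * ∫⁻ ω, (‖φ ω‖₊ : ℝ≥0∞) ∂P
      ≤ ∫⁻ ω, (‖φ ω‖₊ : ℝ≥0∞) ∂(P.restrict B) := by
    have h1 : ENNReal.ofReal ε * ∫⁻ ω, (‖φ ω‖₊ : ℝ≥0∞) ∂P
        = ∫⁻ ω, ENNReal.ofReal ε * (‖φ ω‖₊ : ℝ≥0∞) ∂P := (lintegral_const_mul (μ := P) _ hnb0).symm
    have h2 : ∫⁻ ω, ENNReal.ofReal ε * (‖φ ω‖₊ : ℝ≥0∞) ∂P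
        ≤ ∫⁻ ω, ENNReal.ofReal (lam ω) * (‖φ ω‖₊ : ℝ≥0∞) ∂P := by
      refine lintegral_mono_ae ?_
      filter_upwards [hlam_ge] with ω h
      exact mul_le_mul_left (ENNReal.ofReal_le_ofReal h) _
    have h3 : ∫⁻ ω, ENNReal.ofReal (lam ω) * (‖φ ω‖₊ : ℝ≥0∞) ∂P
        = ∫⁻ ω, (‖φ ω‖₊ : ℝ≥0∞) ∂(P.withDensity fun ω => ENNReal.ofReal (lam ω)) := by
      rw [lintegral_withDensity_eq_lintegral_mul _ hlam_m.ennreal_ofReal hnb0]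
      rfl
    have h4 : ∫⁻ ω, (‖φ ω‖₊ : ℝ≥0∞) ∂(P.withDensity fun ω => ENNReal.ofReal (lam ω))
        = ∫⁻ ω, (‖φ ω‖₊ : ℝ≥0∞) ∂(P.restrict B) := by
      rw [← lintegral_trim hm hnb, density_trim_eq hm hB hlam_int hlam_nn hset,
        lintegral_trim hm hnb]
    rw [h1, ← h4, ← h3]
    exact h2
  have hfin : ∫⁻ ω, (‖φ ω‖₊ : ℝ≥0∞) ∂(P.restrict B) < ∞ := hint.2
  have := lt_of_le_of_lt key hfin
  exact ENNReal.lt_top_of_mul_ne_top_right this.ne (by simp [hε, ENNReal.ofReal_pos])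

lemma integral_mul_eq_zero_of_setIntegral_zero [SigmaFinite (P.trim hm)]
    {ψ : Ω → ℝ} (hψ : Integrable ψ P)
    (h0 : ∀ s : Set Ω, MeasurableSet[m'] s → ∫ ω in s, ψ ω ∂P = 0)
    {h : Ω → ℝ} (hh : StronglyMeasurable[m'] h) {C : ℝ} (hC : ∀ ω, ‖h ω‖ ≤ C) :
    ∫ ω, h ω * ψ ω ∂P = 0 := by
  have hcond : (0 : Ω → ℝ) =ᵐ[P] P[ψ|m'] := by
    refine ae_eq_condExp_of_forall_setIntegral_eq hm hψ
      (fun s _ _ => (integrable_zero _ _ _).integrableOn)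
      (fun s hs hμs => by simp [h0 s hs]) ?_
    exact StronglyMeasurable.aestronglyMeasurable stronglyMeasurable_zero
  have hint : Integrable (fun ω => h ω * ψ ω) P :=
    hψ.bdd_mul (c := C) (hh.mono hm).aestronglyMeasurable (ae_of_all _ hC)
  have hpull : P[fun ω => h ω * ψ ω|m'] =ᵐ[P] fun ω => h ω * (P[ψ|m']) ω :=
    condExp_mul_of_stronglyMeasurable_left hh hint hψ
  calc ∫ ω, h ω * ψ ω ∂P = ∫ ω, (P[fun ω => h ω * ψ ω|m']) ω ∂P :=
        (integral_condExp hm).symm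
    _ = ∫ ω, h ω * (P[ψ|m']) ω ∂P := integral_congr_ae hpull
    _ = ∫ ω, h ω * (0 : Ω → ℝ) ω ∂P := by
        refine integral_congr_ae ?_
        filter_upwards [hcond] with ω hω
        rw [← hω]
    _ = 0 := by simp

omit hm in
lemma key_density {μ : Measure Ω} [IsFiniteMeasure μ] {B : Set Ω} (hB : MeasurableSet B)
    {Z : Ω → ℝ × ℝ} (hZ : Measurable Z) {lam : Ω → ℝ} (hlam_m : Measurable lam)
    (hlam_nn : 0 ≤ᵐ[μ] lam) (hlam_int : Integrable lam μ)
    (heq : ∀ u : Set (ℝ × ℝ), MeasurableSet u →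
      (μ (B ∩ Z ⁻¹' u)).toReal = ∫ ω in Z ⁻¹' u, lam ω ∂μ)
    {ζ : ℝ × ℝ → ℝ} (hζ : Measurable ζ) :
    ∫ ω in B, ζ (Z ω) ∂μ = ∫ ω, lam ω * ζ (Z ω) ∂μ := by
  have hwm : Measurable fun ω => (lam ω).toNNReal := hlam_m.real_toNNReal
  have hmeq : Measure.map Z (μ.restrict B)
      = Measure.map Z (μ.withDensity fun ω => ((lam ω).toNNReal : ℝ≥0∞)) := by
    apply Measure.ext
    intro u hu
    rw [Measure.map_apply hZ hu, Measure.map_apply hZ hu,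
      Measure.restrict_apply (hZ hu),
      withDensity_apply _ (hZ hu)]
    have hd : (fun ω => ((lam ω).toNNReal : ℝ≥0∞)) = fun ω => ENNReal.ofReal (lam ω) := rfl
    rw [hd, ← ofReal_integral_eq_lintegral_ofReal hlam_int.integrableOn
      (ae_restrict_of_ae hlam_nn), ← heq u hu, inter_comm,
      ENNReal.ofReal_toReal (measure_ne_top _ _)]
  have h1 : ∫ ω in B, ζ (Z ω) ∂μ = ∫ p, ζ p ∂(Measure.map Z (μ.restrict B)) :=
    (integral_map hZ.aemeasurable hζ.aestronglyMeasurable).symm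
  have h2 : ∫ p, ζ p ∂(Measure.map Z (μ.withDensity fun ω => ((lam ω).toNNReal : ℝ≥0∞)))
      = ∫ ω, ζ (Z ω) ∂(μ.withDensity fun ω => ((lam ω).toNNReal : ℝ≥0∞)) :=
    integral_map hZ.aemeasurable hζ.aestronglyMeasurable
  have h3 : ∫ ω, ζ (Z ω) ∂(μ.withDensity fun ω => ((lam ω).toNNReal : ℝ≥0∞))
      = ∫ ω, ((lam ω).toNNReal : ℝ) • ζ (Z ω) ∂μ :=
    integral_withDensity_eq_integral_smul hwm _
  rw [h1, hmeq, h2, h3]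
  refine integral_congr_ae ?_
  filter_upwards [hlam_nn] with ω h
  simp [Real.coe_toNNReal _ h, smul_eq_mul]

end Stmt8Aux


theorem stmt8
    {Ω 𝒳 : Type*} [MeasurableSpace Ω] [MeasurableSpace 𝒳] [StandardBorelSpace 𝒳]
    (P : Measure Ω) [IsProbabilityMeasure P]
    (X : Ω → 𝒳) (R T Y₁ Y₀ Y : Ω → ℝ) (Yt : ℝ → Ω → ℝ)
    (hX : Measurable X) (hR : Measurable R) (hT : Measurable T)
    (hY₁m : Measurable Y₁) (hY₀m : Measurable Y₀)
    (hRbin : ∀ ω, R ω = 0 ∨ R ω = 1) (hTbin : ∀ ω, T ω = 0 ∨ T ω = 1)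
    (hY₁2 : MemLp Y₁ 2 P) (hY₀2 : MemLp Y₀ 2 P)
    (hY : Y = fun ω => T ω * Y₁ ω + (1 - T ω) * Y₀ ω)
    (hYt1 : Yt 1 = Y₁) (hYt0 : Yt 0 = Y₀)
    (ε : ℝ) (hε : 0 < ε)
    (hlam_pos : 0 < P {ω | R ω = 1}) (hlam_lt : P {ω | R ω = 1} < 1)
    (hlamX : ∀ᵐ ω ∂P, ε ≤ cprob (sigmaX X) P {ω' | R ω' = 1} ω ∧
      cprob (sigmaX X) P {ω' | R ω' = 1} ω ≤ 1 - ε)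
    (hpi : ∀ r ∈ ({0, 1} : Set ℝ), ∀ t ∈ ({0, 1} : Set ℝ), ∀ᵐ ω ∂P,
      ε ≤ cprob (sigmaX X) (ProbabilityTheory.cond P {ω' | R ω' = r}) {ω' | T ω' = t} ω ∧
      cprob (sigmaX X) (ProbabilityTheory.cond P {ω' | R ω' = r}) {ω' | T ω' = t} ω ≤ 1 - ε)
    (hA1 : IndepFun T (fun ω => (Y₁ ω, Y₀ ω, X ω)) (ProbabilityTheory.cond P {ω | R ω = 1}))
    (hA3 : CondIndepFunGiven (sigmaX X) R (fun ω => (Y₁ ω, Y₀ ω)) P)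
    (t : ℝ) (ht : t = 0 ∨ t = 1)
    (lamd : 𝒳 → ℝ) (hlamdm : Measurable lamd) (hlamdr : ∀ x, lamd x ∈ Set.Icc ε (1 - ε))
    (τd : 𝒳 → ℝ) (hτdm : Measurable τd) (hτdb : ∃ C, ∀ x, |τd x| ≤ C)
    :
    (∫ ω, (R ω * (if T ω = t then (1 : ℝ) else 0) * Y ω / (lamd (X ω) * ((ProbabilityTheory.cond P {ω' | R ω' = 1}) {ω' | T ω' = t}).toReal)
      + (1 - R ω * (if T ω = t then (1 : ℝ) else 0) / (lamd (X ω) * ((ProbabilityTheory.cond P {ω' | R ω' = 1}) {ω' | T ω' = t}).toReal)) * τd (X ω)) ∂P) - (∫ ω', Yt t ω' ∂P)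
      = ∫ ω, (cprob (sigmaX X) P {ω' | R ω' = 1} ω / lamd (X ω) - 1) * (cexp (sigmaX X) (ProbabilityTheory.cond P {ω' | R ω' = 1}) (Yt t) ω - τd (X ω)) ∂P := by
  classical
  obtain ⟨C₀, hC₀⟩ := hτdb
  have hC : ∀ x, |τd x| ≤ max C₀ 0 := fun x => (hC₀ x).trans (le_max_left _ _)
  set C := max C₀ 0 with hCdef
  have hm : sigmaX X ≤ ‹MeasurableSpace Ω› := hX.comap_le
  haveI hSFP : SigmaFinite (P.trim hm) := by infer_instance
  set B : Set Ω := {ω' | R ω' = 1} with hBdef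
  have hB : MeasurableSet B := hR (measurableSet_singleton 1)
  have hPB0 : P B ≠ 0 := hlam_pos.ne'
  have hPBtop : P B ≠ ∞ := measure_ne_top P B
  have hPBrpos : 0 < (P B).toReal := ENNReal.toReal_pos hPB0 hPBtop
  set Q := ProbabilityTheory.cond P B with hQdef
  have hQdef' : Q = (P B)⁻¹ • P.restrict B := rfl
  haveI hQprob : IsProbabilityMeasure Q := cond_isProbabilityMeasure hPB0
  haveI hSFQ : SigmaFinite (Q.trim hm) := by infer_instance
  have hQP : Q ≪ P := cond_absolutelyContinuous
  have hrestQ : P.restrict B = P B • Q := by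
    rw [hQdef', smul_smul, ENNReal.mul_inv_cancel hPB0 hPBtop, one_smul]
  have setQint : ∀ f : Ω → ℝ, ∫ ω in B, f ω ∂P = (P B).toReal * ∫ ω, f ω ∂Q := by
    intro f
    rw [hrestQ, integral_smul_measure, smul_eq_mul]
  -- Yt facts
  have hYtm : Measurable (Yt t) := by
    rcases ht with h | h
    · rw [h, hYt0]; exact hY₀m
    · rw [h, hYt1]; exact hY₁m
  have hYtint : Integrable (Yt t) P := by
    rcases ht with h | h
    · rw [h, hYt0]; exact hY₀2.integrable one_le_two
    · rw [h, hYt1]; exact hY₁2.integrable one_le_two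
  have hYtQint : Integrable (Yt t) Q := by
    rw [hQdef']
    exact (hYtint.restrict).smul_measure (ENNReal.inv_ne_top.2 hPB0)
  -- sigmaX measurability
  have hXm' : Measurable[sigmaX X] X := Measurable.of_comap_le le_rfl
  have hLm' : Measurable[sigmaX X] fun ω => lamd (X ω) := hlamdm.comp hXm'
  have hkm' : StronglyMeasurable[sigmaX X] fun ω => (lamd (X ω))⁻¹ :=
    (hLm'.inv).stronglyMeasurable
  have hτm' : StronglyMeasurable[sigmaX X] fun ω => τd (X ω) :=
    (hτdm.comp hXm').stronglyMeasurable
  have hLpos : ∀ ω, 0 < lamd (X ω) := fun ω => lt_of_lt_of_le hε (hlamdr (X ω)).1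
  have hLne : ∀ ω, lamd (X ω) ≠ 0 := fun ω => (hLpos ω).ne'
  have hkbound : ∀ ω, ‖(lamd (X ω))⁻¹‖ ≤ ε⁻¹ := by
    intro ω
    rw [Real.norm_eq_abs, abs_of_pos (inv_pos.2 (hLpos ω))]
    exact inv_anti₀ hε (hlamdr (X ω)).1
  -- lamhat
  set lam := cprob (sigmaX X) P B with hlamdef
  have hlam_eq : lam = MeasureTheory.condExp (sigmaX X) P (B.indicator fun _ => (1 : ℝ)) := rfl
  have hlam_sm : StronglyMeasurable[sigmaX X] lam := stronglyMeasurable_condExp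
  have hlam_int : Integrable lam P := integrable_condExp
  have hlam_m : Measurable lam := (hlam_sm.measurable).mono hm le_rfl
  have hlam_ge : ∀ᵐ ω ∂P, ε ≤ lam ω := by filter_upwards [hlamX] with ω h using h.1
  have hlam_nn : 0 ≤ᵐ[P] lam := by filter_upwards [hlam_ge] with ω h using hε.le.trans h
  have hlam_le1 : ∀ᵐ ω ∂P, lam ω ≤ 1 := by
    filter_upwards [hlamX] with ω h
    linarith [h.2, hε]
  have hset : ∀ s : Set Ω, MeasurableSet[sigmaX X] s →
      ∫ ω in s, lam ω ∂P = (P (B ∩ s)).toReal := by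
    intro s hs
    have h1 : ∫ ω in s, lam ω ∂P = ∫ ω in s, B.indicator (fun _ => (1 : ℝ)) ω ∂P := by
      rw [hlam_eq]
      exact setIntegral_condExp hm ((integrable_const (1 : ℝ)).indicator hB) hs
    rw [h1, integral_indicator_const (1 : ℝ) hB, measureReal_def, Measure.restrict_apply hB, smul_eq_mul, mul_one]
  -- g
  set g := cexp (sigmaX X) Q (Yt t) with hgdef
  have hg_eq : g = MeasureTheory.condExp (sigmaX X) Q (Yt t) := rfl
  have hg_sm : StronglyMeasurable[sigmaX X] g := stronglyMeasurable_condExp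
  have hg_m : Measurable g := (hg_sm.measurable).mono hm le_rfl
  have hg_intQ : Integrable g Q := integrable_condExp
  have hg_intB : Integrable g (P.restrict B) := by
    rw [hrestQ]; exact hg_intQ.smul_measure hPBtop
  have hg_intP : Integrable g P :=
    Stmt8Aux.integrable_of_restrict_of_density hm hB hlam_sm hlam_int hlam_nn hset hε
      hlam_ge hg_sm hg_intB
  -- π
  set π := (Q {ω' | T ω' = t}).toReal with hπdef
  have hTt : MeasurableSet {ω | T ω = t} := hT (measurableSet_singleton t)
  have hit : (fun ω => if T ω = t then (1 : ℝ) else 0)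
      = ({ω | T ω = t}).indicator (fun _ => (1 : ℝ)) := by
    funext ω; by_cases h : T ω = t <;> simp [Set.indicator, h]
  have hπ_eq : ∫ ω, (if T ω = t then (1 : ℝ) else 0) ∂Q = π := by
    rw [hit, integral_indicator_const (1 : ℝ) hTt, measureReal_def, smul_eq_mul, mul_one]
  have hπε : ε ≤ π := by
    have hcpi := hpi 1 (by norm_num) t (by rcases ht with h | h <;> simp [h])
    have hcpiQ : ∀ᵐ ω ∂Q, ε ≤ cprob (sigmaX X) Q {ω' | T ω' = t} ω := by
      refine hQP.ae_le ?_
      filter_upwards [hcpi] with ω h using h.1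
    have h1 : ∫ ω, (if T ω = t then (1 : ℝ) else 0) ∂Q
        = ∫ ω, cprob (sigmaX X) Q {ω' | T ω' = t} ω ∂Q := by
      rw [hit]
      exact (integral_condExp hm).symm
    calc ε = ∫ _, ε ∂Q := by simp
      _ ≤ ∫ ω, cprob (sigmaX X) Q {ω' | T ω' = t} ω ∂Q := by
          refine integral_mono_ae (integrable_const ε) integrable_condExp hcpiQ
      _ = π := by rw [← h1, hπ_eq]
  have hπpos : 0 < π := lt_of_lt_of_le hε hπε
  have hπ0 : π ≠ 0 := hπpos.ne'
  -- A1 machinery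
  set it' : ℝ → ℝ := fun x => if x = t then 1 else 0 with hit'def
  set sel : ℝ × ℝ × 𝒳 → ℝ := fun p => if t = 1 then p.1 else p.2.1 with hseldef
  set φt : ℝ × ℝ × 𝒳 → ℝ := fun p => (lamd p.2.2)⁻¹ * (sel p - τd p.2.2) with hφtdef
  have hitm : Measurable it' := by
    refine Measurable.ite ?_ measurable_const measurable_const
    exact measurableSet_eq
  have hselm : Measurable sel := by
    by_cases h : t = 1 <;> simp only [hseldef, h, if_true, if_false] <;>
      [exact measurable_fst; exact measurable_snd.fst]
  have hφtm : Measurable φt :=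
    ((hlamdm.comp measurable_snd.snd).inv).mul (hselm.sub (hτdm.comp measurable_snd.snd))
  have hφtZ : (fun ω => φt (Y₁ ω, Y₀ ω, X ω))
      = fun ω => (lamd (X ω))⁻¹ * (Yt t ω - τd (X ω)) := by
    funext ω
    rcases ht with h | h
    · subst h; simp [hφtdef, hseldef, hYt0]
    · subst h; simp [hφtdef, hseldef, hYt1]
  have hτintP : Integrable (fun ω => τd (X ω)) P := by
    refine (integrable_const C).mono' ((hτdm.comp hX).aestronglyMeasurable) ?_
    exact ae_of_all _ fun ω => by simpa [Real.norm_eq_abs] using hC (X ω)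
  have hτintQ : Integrable (fun ω => τd (X ω)) Q := by
    refine (integrable_const C).mono' ((hτdm.comp hX).aestronglyMeasurable) ?_
    exact ae_of_all _ fun ω => by simpa [Real.norm_eq_abs] using hC (X ω)
  have hkYτQ : Integrable (fun ω => (lamd (X ω))⁻¹ * (Yt t ω - τd (X ω))) Q := by
    refine Integrable.bdd_mul (c := ε⁻¹) (hYtQint.sub hτintQ)
      ((hlamdm.comp hX).inv).aestronglyMeasurable (ae_of_all _ hkbound)
  have hφtZQ : Integrable (fun ω => φt (Y₁ ω, Y₀ ω, X ω)) Q := by rw [hφtZ]; exact hkYτQ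
  have hitTQ : Integrable (fun ω => it' (T ω)) Q := by
    refine (integrable_const (1 : ℝ)).mono' ((hitm.comp hT).aestronglyMeasurable) ?_
    refine ae_of_all _ fun ω => ?_
    by_cases h : T ω = t <;> simp [hit'def, h]
  have hIndep : IndepFun (it' ∘ T) (φt ∘ fun ω => (Y₁ ω, Y₀ ω, X ω)) Q :=
    hA1.comp hitm hφtm
  have hmulQ : ∫ ω, it' (T ω) * φt (Y₁ ω, Y₀ ω, X ω) ∂Q
      = π * ∫ ω, (lamd (X ω))⁻¹ * (Yt t ω - τd (X ω)) ∂Q := by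
    have h1 := hIndep.integral_mul_eq_mul_integral hitTQ.aestronglyMeasurable hφtZQ.aestronglyMeasurable
    have h2 : ∫ ω, it' (T ω) ∂Q = π := hπ_eq
    calc ∫ ω, it' (T ω) * φt (Y₁ ω, Y₀ ω, X ω) ∂Q
        = ∫ ω, ((it' ∘ T) * (φt ∘ fun ω => (Y₁ ω, Y₀ ω, X ω))) ω ∂Q := rfl
      _ = (∫ ω, it' (T ω) ∂Q) * ∫ ω, φt (Y₁ ω, Y₀ ω, X ω) ∂Q := h1
      _ = π * ∫ ω, (lamd (X ω))⁻¹ * (Yt t ω - τd (X ω)) ∂Q := by rw [h2, hφtZ]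
  -- pointwise rewrite of LHS integrand
  set q2 : Ω → ℝ := fun ω => it' (T ω) * φt (Y₁ ω, Y₀ ω, X ω) with hq2def
  have hq2P : Integrable q2 P := by
    have h1 : Integrable (fun ω => (lamd (X ω))⁻¹ * (Yt t ω - τd (X ω))) P :=
      Integrable.bdd_mul (c := ε⁻¹) (hYtint.sub hτintP)
        ((hlamdm.comp hX).inv).aestronglyMeasurable (ae_of_all _ hkbound)
    have h2 : Integrable (fun ω => φt (Y₁ ω, Y₀ ω, X ω)) P := by rw [hφtZ]; exact h1
    refine Integrable.bdd_mul (c := 1) h2 ((hitm.comp hT).aestronglyMeasurable) ?_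
    refine ae_of_all _ fun ω => ?_
    by_cases h : T ω = t <;> simp [hit'def, h]
  have hq2indP : Integrable (B.indicator q2) P := hq2P.indicator hB
  have hpoint : ∀ ω, R ω * (if T ω = t then (1 : ℝ) else 0) * Y ω / (lamd (X ω) * π)
      + (1 - R ω * (if T ω = t then (1 : ℝ) else 0) / (lamd (X ω) * π)) * τd (X ω)
      = π⁻¹ * B.indicator q2 ω + τd (X ω) := by
    intro ω
    have hYc : R ω * (if T ω = t then (1 : ℝ) else 0) * Y ω
        = R ω * (if T ω = t then (1 : ℝ) else 0) * Yt t ω := by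
      by_cases hTω : T ω = t
      · rcases ht with h | h
        · subst h; rw [hY]; simp [hTω, hYt0]
        · subst h; rw [hY]; simp [hTω, hYt1]
      · simp [hTω]
    have hBind : B.indicator q2 ω = R ω * q2 ω := by
      by_cases hRω : R ω = 1
      · rw [Set.indicator_of_mem (by exact hRω : ω ∈ B), hRω, one_mul]
      · have hR0 : R ω = 0 := (hRbin ω).resolve_right hRω
        rw [Set.indicator_of_notMem (by exact hRω : ω ∉ B), hR0, zero_mul]
    have hq2ω : q2 ω = (if T ω = t then (1 : ℝ) else 0)
        * ((lamd (X ω))⁻¹ * (Yt t ω - τd (X ω))) := by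
      have h1 : φt (Y₁ ω, Y₀ ω, X ω) = (lamd (X ω))⁻¹ * (Yt t ω - τd (X ω)) :=
        congrFun hφtZ ω
      simp only [hq2def, hit'def]
      rw [h1]
    rw [hYc, hBind, hq2ω]
    by_cases hTω : T ω = t
    · simp only [if_pos hTω]
      field_simp
      ring
    · simp only [if_neg hTω]
      field_simp
      ring
  -- LHS computation
  have hLHS1 : (∫ ω, (R ω * (if T ω = t then (1 : ℝ) else 0) * Y ω / (lamd (X ω) * π)
      + (1 - R ω * (if T ω = t then (1 : ℝ) else 0) / (lamd (X ω) * π)) * τd (X ω)) ∂P)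
      = π⁻¹ * ∫ ω, B.indicator q2 ω ∂P + ∫ ω, τd (X ω) ∂P := by
    rw [show (fun ω => R ω * (if T ω = t then (1 : ℝ) else 0) * Y ω / (lamd (X ω) * π)
      + (1 - R ω * (if T ω = t then (1 : ℝ) else 0) / (lamd (X ω) * π)) * τd (X ω))
      = fun ω => π⁻¹ * B.indicator q2 ω + τd (X ω) from funext hpoint]
    rw [integral_add (hq2indP.const_mul _) hτintP, integral_const_mul]
  have hLHS2 : π⁻¹ * ∫ ω, B.indicator q2 ω ∂P
      = ∫ ω in B, (lamd (X ω))⁻¹ * (Yt t ω - τd (X ω)) ∂P := by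
    rw [integral_indicator hB, setQint q2, hq2def]
    rw [hmulQ]
    rw [setQint (fun ω => (lamd (X ω))⁻¹ * (Yt t ω - τd (X ω)))]
    field_simp
  -- key integral identities
  have hkY_intB : Integrable (fun ω => (lamd (X ω))⁻¹ * Yt t ω) (P.restrict B) := by
    refine Integrable.bdd_mul (c := ε⁻¹) (hYtint.restrict)
      ((hlamdm.comp hX).inv).aestronglyMeasurable ?_
    exact ae_of_all _ hkbound
  have hkτ_intB : Integrable (fun ω => (lamd (X ω))⁻¹ * τd (X ω)) (P.restrict B) := by
    refine Integrable.bdd_mul (c := ε⁻¹) (hτintP.restrict)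
      ((hlamdm.comp hX).inv).aestronglyMeasurable ?_
    exact ae_of_all _ hkbound
  have hsplitB : ∫ ω in B, (lamd (X ω))⁻¹ * (Yt t ω - τd (X ω)) ∂P
      = (∫ ω in B, (lamd (X ω))⁻¹ * Yt t ω ∂P) - ∫ ω in B, (lamd (X ω))⁻¹ * τd (X ω) ∂P := by
    rw [← integral_sub hkY_intB hkτ_intB]
    refine integral_congr_ae (ae_of_all _ fun ω => ?_)
    ring
  -- (i)
  have hi : ∫ ω, lam ω * ((lamd (X ω))⁻¹ * τd (X ω)) ∂P
      = ∫ ω in B, (lamd (X ω))⁻¹ * τd (X ω) ∂P :=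
    Stmt8Aux.integral_lam_mul hm hB hlam_sm hlam_int hlam_nn hset (hkm'.mul hτm')
  -- Q pull-out helper
  have hpullQ : ∀ b : Ω → ℝ, StronglyMeasurable[sigmaX X] b → (∀ ω, ‖b ω‖ ≤ ε⁻¹) →
      ∫ ω, b ω * g ω ∂Q = ∫ ω, b ω * Yt t ω ∂Q := by
    intro b hbsm hbbd
    have hbY : Integrable (b * Yt t) Q :=
      Integrable.bdd_mul (c := ε⁻¹) hYtQint ((hbsm.mono hm).aestronglyMeasurable)
        (ae_of_all _ hbbd)
    have hpull : Q[b * Yt t|sigmaX X] =ᵐ[Q] b * Q[Yt t|sigmaX X] :=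
      condExp_mul_of_stronglyMeasurable_left hbsm hbY hYtQint
    calc ∫ ω, b ω * g ω ∂Q = ∫ ω, (b * Q[Yt t|sigmaX X]) ω ∂Q := by rw [hg_eq]; rfl
      _ = ∫ ω, (Q[b * Yt t|sigmaX X]) ω ∂Q := (integral_congr_ae hpull).symm
      _ = ∫ ω, (b * Yt t) ω ∂Q := integral_condExp hm
      _ = ∫ ω, b ω * Yt t ω ∂Q := rfl
  -- (ii)
  have hii : ∫ ω, lam ω * ((lamd (X ω))⁻¹ * g ω) ∂P
      = ∫ ω in B, (lamd (X ω))⁻¹ * Yt t ω ∂P := by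
    have h1 : ∫ ω, lam ω * ((lamd (X ω))⁻¹ * g ω) ∂P
        = ∫ ω in B, (lamd (X ω))⁻¹ * g ω ∂P :=
      Stmt8Aux.integral_lam_mul hm hB hlam_sm hlam_int hlam_nn hset (hkm'.mul hg_sm)
    have h2 : ∫ ω in B, (lamd (X ω))⁻¹ * g ω ∂P
        = (P B).toReal * ∫ ω, (lamd (X ω))⁻¹ * g ω ∂Q := setQint _
    have h3 : ∫ ω, (lamd (X ω))⁻¹ * g ω ∂Q = ∫ ω, (lamd (X ω))⁻¹ * Yt t ω ∂Q :=
      hpullQ _ hkm' hkbound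
    have h4 : (P B).toReal * ∫ ω, (lamd (X ω))⁻¹ * Yt t ω ∂Q
        = ∫ ω in B, (lamd (X ω))⁻¹ * Yt t ω ∂P := (setQint _).symm
    rw [h1, h2, h3, h4]
  -- (iii) via A3
  have hZm : Measurable fun ω => (Y₁ ω, Y₀ ω) := hY₁m.prodMk hY₀m
  have hψ0 : ∀ s : Set Ω, MeasurableSet[sigmaX X] s →
      ∫ ω in s, B.indicator (Yt t) ω ∂P = ∫ ω in s, lam ω * Yt t ω ∂P := by
    intro s hs
    have hs0 : MeasurableSet s := hm s hs
    -- heq from hA3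
    have heq : ∀ u : Set (ℝ × ℝ), MeasurableSet u →
        ((P.restrict s) (B ∩ (fun ω => (Y₁ ω, Y₀ ω)) ⁻¹' u)).toReal
          = ∫ ω in (fun ω => (Y₁ ω, Y₀ ω)) ⁻¹' u, lam ω ∂(P.restrict s) := by
      intro u hu
      have hD : MeasurableSet ((fun ω => (Y₁ ω, Y₀ ω)) ⁻¹' u) := hZm hu
      have hBpre : R ⁻¹' ({1} : Set ℝ) = B := rfl
      have hA3' := hA3 {1} u (measurableSet_singleton 1) hu
      rw [hBpre] at hA3'
      -- integrate the a.e. identity over s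
      have hL : ∫ ω in s, cprob (sigmaX X) P (B ∩ (fun ω => (Y₁ ω, Y₀ ω)) ⁻¹' u) ω ∂P
          = (P ((B ∩ (fun ω => (Y₁ ω, Y₀ ω)) ⁻¹' u) ∩ s)).toReal := by
        have := setIntegral_condExp (μ := P) hm
          ((integrable_const (1 : ℝ)).indicator (hB.inter hD)) hs
          (f := (B ∩ (fun ω => (Y₁ ω, Y₀ ω)) ⁻¹' u).indicator fun _ => (1 : ℝ))
        rw [cprob, cexp, this, integral_indicator_const (1 : ℝ) (hB.inter hD),
          measureReal_def, Measure.restrict_apply (hB.inter hD), smul_eq_mul, mul_one]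
      have hR' : ∫ ω in s, lam ω * cprob (sigmaX X) P ((fun ω => (Y₁ ω, Y₀ ω)) ⁻¹' u) ω ∂P
          = ∫ ω in s, lam ω * ((fun ω => (Y₁ ω, Y₀ ω)) ⁻¹' u).indicator (fun _ => (1 : ℝ)) ω ∂P := by
        set D := (fun ω => (Y₁ ω, Y₀ ω)) ⁻¹' u
        have hDind : Integrable (D.indicator fun _ => (1 : ℝ)) P :=
          (integrable_const (1 : ℝ)).indicator hD
        have hb_sm : StronglyMeasurable[sigmaX X] (s.indicator lam) := hlam_sm.indicator hs
        have hbf_int : Integrable (s.indicator lam * D.indicator fun _ => (1 : ℝ)) P := by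
          refine Integrable.mono' hlam_int.abs ?_ (ae_of_all _ fun ω => ?_)
          · exact (((hlam_m.indicator hs0).mul
              ((measurable_const.indicator hD))).aestronglyMeasurable)
          · simp only [Pi.mul_apply, norm_mul, Real.norm_eq_abs]
            by_cases h1 : ω ∈ s <;> by_cases h2 : ω ∈ D <;>
              simp [Set.indicator_of_mem, Set.indicator_of_notMem, h1, h2, abs_nonneg]
        have hpull2 : P[s.indicator lam * D.indicator fun _ => (1 : ℝ)|sigmaX X]
            =ᵐ[P] s.indicator lam * P[D.indicator fun _ => (1 : ℝ)|sigmaX X] :=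
          condExp_mul_of_stronglyMeasurable_left hb_sm hbf_int hDind
        have key : ∫ ω, s.indicator lam ω * D.indicator (fun _ => (1 : ℝ)) ω ∂P
            = ∫ ω, s.indicator lam ω * cprob (sigmaX X) P D ω ∂P := by
          calc ∫ ω, s.indicator lam ω * D.indicator (fun _ => (1 : ℝ)) ω ∂P
              = ∫ ω, (s.indicator lam * D.indicator fun _ => (1 : ℝ)) ω ∂P := rfl
            _ = ∫ ω, (P[s.indicator lam * D.indicator fun _ => (1 : ℝ)|sigmaX X]) ω ∂P :=
                (integral_condExp hm).symm
            _ = ∫ ω, (s.indicator lam * P[D.indicator fun _ => (1 : ℝ)|sigmaX X]) ω ∂P :=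
                integral_congr_ae hpull2
            _ = ∫ ω, s.indicator lam ω * cprob (sigmaX X) P D ω ∂P := rfl
        have hindmul : ∀ h' : Ω → ℝ, ∫ ω, s.indicator lam ω * h' ω ∂P
            = ∫ ω in s, lam ω * h' ω ∂P := by
          intro h'
          rw [← integral_indicator hs0]
          refine integral_congr_ae (ae_of_all _ fun ω => ?_)
          by_cases h1 : ω ∈ s <;>
            simp [Set.indicator_of_mem, Set.indicator_of_notMem, h1]
        rw [← hindmul (cprob (sigmaX X) P D), ← key, hindmul]
      have hcongr : ∫ ω in s, cprob (sigmaX X) P (B ∩ (fun ω => (Y₁ ω, Y₀ ω)) ⁻¹' u) ω ∂P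
          = ∫ ω in s, lam ω * cprob (sigmaX X) P ((fun ω => (Y₁ ω, Y₀ ω)) ⁻¹' u) ω ∂P := by
        refine setIntegral_congr_ae hs0 ?_
        filter_upwards [hA3'] with ω h _
        exact h
      have hfin : ∫ ω in s, lam ω * ((fun ω => (Y₁ ω, Y₀ ω)) ⁻¹' u).indicator (fun _ => (1 : ℝ)) ω ∂P
          = ∫ ω in (fun ω => (Y₁ ω, Y₀ ω)) ⁻¹' u, lam ω ∂(P.restrict s) := by
        rw [← integral_indicator hD]
        refine integral_congr_ae (ae_of_all _ fun ω => ?_)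
        by_cases h1 : ω ∈ (fun ω => (Y₁ ω, Y₀ ω)) ⁻¹' u <;>
          simp [Set.indicator_of_mem, Set.indicator_of_notMem, h1]
      rw [Measure.restrict_apply (hB.inter hD)] at *
      rw [← hfin, ← hR', ← hcongr, hL]
    -- apply key_density
    set selζ : ℝ × ℝ → ℝ := fun p => if t = 1 then p.1 else p.2 with hselζdef
    have hselζm : Measurable selζ := by
      by_cases h : t = 1 <;> simp only [hselζdef, h, if_true, if_false] <;>
        [exact measurable_fst; exact measurable_snd]
    have hselζY : (fun ω => selζ (Y₁ ω, Y₀ ω)) = Yt t := by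
      funext ω
      rcases ht with h | h
      · subst h; simp [hselζdef, hYt0]
      · subst h; simp [hselζdef, hYt1]
    haveI : IsFiniteMeasure (P.restrict s) := inferInstance
    have hkd := Stmt8Aux.key_density (μ := P.restrict s) hB hZm hlam_m
      (ae_restrict_of_ae hlam_nn) hlam_int.restrict heq hselζm
    calc ∫ ω in s, B.indicator (Yt t) ω ∂P
        = ∫ ω in B, Yt t ω ∂(P.restrict s) := integral_indicator hB
      _ = ∫ ω in B, selζ (Y₁ ω, Y₀ ω) ∂(P.restrict s) :=
          integral_congr_ae (ae_of_all _ fun ω => (congrFun hselζY ω).symm)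
      _ = ∫ ω, lam ω * selζ (Y₁ ω, Y₀ ω) ∂(P.restrict s) := hkd
      _ = ∫ ω in s, lam ω * Yt t ω ∂P :=
          integral_congr_ae (ae_of_all _ fun ω => by
            show lam ω * selζ (Y₁ ω, Y₀ ω) = lam ω * Yt t ω
            rw [congrFun hselζY ω])
  have hlamYt_int : Integrable (fun ω => lam ω * Yt t ω) P := by
    refine Integrable.mono' hYtint.abs ((hlam_m.mul hYtm).aestronglyMeasurable) ?_
    filter_upwards [hlam_nn, hlam_le1] with ω h0 h1
    rw [Real.norm_eq_abs, abs_mul, abs_of_nonneg h0]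
    exact mul_le_of_le_one_left (abs_nonneg _) h1
  have hψint : Integrable (fun ω => B.indicator (Yt t) ω - lam ω * Yt t ω) P :=
    (hYtint.indicator hB).sub hlamYt_int
  have hψzero : ∀ s : Set Ω, MeasurableSet[sigmaX X] s →
      ∫ ω in s, (B.indicator (Yt t) ω - lam ω * Yt t ω) ∂P = 0 := by
    intro s hs
    rw [integral_sub ((hYtint.indicator hB).restrict) (hlamYt_int.restrict), hψ0 s hs, sub_self]
  -- hεfun
  set hEps : Ω → ℝ := fun ω => (max ε (lam ω))⁻¹ with hEpsdef
  have hEps_sm : StronglyMeasurable[sigmaX X] hEps :=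
    ((measurable_const.max hlam_sm.measurable).inv).stronglyMeasurable
  have hEps_bd : ∀ ω, ‖hEps ω‖ ≤ ε⁻¹ := by
    intro ω
    have h1 : 0 < max ε (lam ω) := lt_of_lt_of_le hε (le_max_left _ _)
    rw [Real.norm_eq_abs, abs_of_pos (inv_pos.2 h1)]
    exact inv_anti₀ hε (le_max_left _ _)
  have hEps_lam : ∀ᵐ ω ∂P, lam ω * hEps ω = 1 := by
    filter_upwards [hlam_ge] with ω h
    rw [hEpsdef]
    simp only [max_eq_right h]
    exact mul_inv_cancel₀ (by linarith)
  have hA3final : ∫ ω, hEps ω * (B.indicator (Yt t) ω - lam ω * Yt t ω) ∂P = 0 :=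
    Stmt8Aux.integral_mul_eq_zero_of_setIntegral_zero hm hψint hψzero hEps_sm hEps_bd
  have hiii : ∫ ω, g ω ∂P = ∫ ω, Yt t ω ∂P := by
    have hA : ∫ ω, g ω ∂P = ∫ ω, lam ω * (hEps ω * g ω) ∂P := by
      refine integral_congr_ae ?_
      filter_upwards [hEps_lam] with ω h
      rw [← mul_assoc, h, one_mul]
    have hB' : ∫ ω, lam ω * (hEps ω * g ω) ∂P = ∫ ω in B, hEps ω * g ω ∂P :=
      Stmt8Aux.integral_lam_mul hm hB hlam_sm hlam_int hlam_nn hset (hEps_sm.mul hg_sm)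
    have hC' : ∫ ω in B, hEps ω * g ω ∂P = ∫ ω in B, hEps ω * Yt t ω ∂P := by
      rw [setQint, setQint, hpullQ _ hEps_sm hEps_bd]
    have hD' : ∫ ω in B, hEps ω * Yt t ω ∂P = ∫ ω, hEps ω * (lam ω * Yt t ω) ∂P := by
      have h1 : ∫ ω, hEps ω * B.indicator (Yt t) ω ∂P
          = ∫ ω, hEps ω * (lam ω * Yt t ω) ∂P := by
        have h2 : Integrable (fun ω => hEps ω * (lam ω * Yt t ω)) P :=
          Integrable.bdd_mul (c := ε⁻¹) hlamYt_int
            ((hEps_sm.mono hm).aestronglyMeasurable) (ae_of_all _ hEps_bd)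
        have h3 : Integrable (fun ω => hEps ω * B.indicator (Yt t) ω) P :=
          Integrable.bdd_mul (c := ε⁻¹) (hYtint.indicator hB)
            ((hEps_sm.mono hm).aestronglyMeasurable) (ae_of_all _ hEps_bd)
        have := hA3final
        rw [show (fun ω => hEps ω * (B.indicator (Yt t) ω - lam ω * Yt t ω))
          = fun ω => hEps ω * B.indicator (Yt t) ω - hEps ω * (lam ω * Yt t ω) from
          funext fun ω => by ring] at this
        rw [integral_sub h3 h2] at this
        linarith
      have h4 : ∫ ω, hEps ω * B.indicator (Yt t) ω ∂P = ∫ ω in B, hEps ω * Yt t ω ∂P := by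
        rw [← integral_indicator hB]
        refine integral_congr_ae (ae_of_all _ fun ω => ?_)
        by_cases h1 : ω ∈ B <;>
          simp [Set.indicator_of_mem, Set.indicator_of_notMem, h1]
      rw [← h4, h1]
    have hE' : ∫ ω, hEps ω * (lam ω * Yt t ω) ∂P = ∫ ω, Yt t ω ∂P := by
      refine integral_congr_ae ?_
      filter_upwards [hEps_lam] with ω h
      rw [← mul_assoc, mul_comm (hEps ω) (lam ω), h, one_mul]
    rw [hA, hB', hC', hD', hE']
  -- RHS split
  have hRHS : ∫ ω, (lam ω / lamd (X ω) - 1) * (g ω - τd (X ω)) ∂P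
      = (∫ ω, lam ω * ((lamd (X ω))⁻¹ * g ω) ∂P)
        - (∫ ω, lam ω * ((lamd (X ω))⁻¹ * τd (X ω)) ∂P)
        - (∫ ω, g ω ∂P) + ∫ ω, τd (X ω) ∂P := by
    have e1 : Integrable (fun ω => lam ω * ((lamd (X ω))⁻¹ * g ω)) P := by
      refine Integrable.mono' ((hg_intP.abs).const_mul ε⁻¹)
        ((hlam_m.mul ((hlamdm.comp hX).inv.mul hg_m)).aestronglyMeasurable) ?_
      filter_upwards [hlam_nn, hlam_le1] with ω h0 h1
      rw [Real.norm_eq_abs, abs_mul, abs_mul]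
      have hk := hkbound ω
      rw [Real.norm_eq_abs] at hk
      calc |lam ω| * (|(lamd (X ω))⁻¹| * |g ω|) ≤ 1 * (ε⁻¹ * |g ω|) := by
            refine mul_le_mul ?_ ?_ (by positivity) zero_le_one
            · rw [abs_of_nonneg h0]; exact h1
            · exact mul_le_mul_of_nonneg_right hk (abs_nonneg _)
        _ = ε⁻¹ * |g ω| := by ring
    have e2 : Integrable (fun ω => lam ω * ((lamd (X ω))⁻¹ * τd (X ω))) P := by
      refine Integrable.mono' (integrable_const (ε⁻¹ * C))
        ((hlam_m.mul ((hlamdm.comp hX).inv.mul (hτdm.comp hX))).aestronglyMeasurable) ?_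
      filter_upwards [hlam_nn, hlam_le1] with ω h0 h1
      rw [Real.norm_eq_abs, abs_mul, abs_mul]
      have hk := hkbound ω
      rw [Real.norm_eq_abs] at hk
      have hC' := hC (X ω)
      have hC0 : (0:ℝ) ≤ C := le_max_right _ _
      calc |lam ω| * (|(lamd (X ω))⁻¹| * |τd (X ω)|) ≤ 1 * (ε⁻¹ * C) := by
            refine mul_le_mul ?_ ?_ (by positivity) zero_le_one
            · rw [abs_of_nonneg h0]; exact h1
            · exact mul_le_mul hk hC' (abs_nonneg _) (by positivity)
        _ = ε⁻¹ * C := by ring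
    have hpt : (fun ω => (lam ω / lamd (X ω) - 1) * (g ω - τd (X ω)))
        = fun ω => (lam ω * ((lamd (X ω))⁻¹ * g ω) - lam ω * ((lamd (X ω))⁻¹ * τd (X ω)))
            - (g ω - τd (X ω)) := by
      funext ω
      rw [div_eq_mul_inv]
      ring
    have e12 : Integrable (fun ω => lam ω * ((lamd (X ω))⁻¹ * g ω)
        - lam ω * ((lamd (X ω))⁻¹ * τd (X ω))) P := e1.sub e2
    have egτ : Integrable (fun ω => g ω - τd (X ω)) P := hg_intP.sub hτintP
    rw [hpt, integral_sub e12 egτ, integral_sub e1 e2, integral_sub hg_intP hτintP]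
    ring
  -- final assembly
  rw [hLHS1, hLHS2, hsplitB, hRHS, hi, hii, hiii]
  ring
end
end

section
/- Assume (A1), and fix t ∈ {0,1}. Then for every bounded measurable function τ† : 𝒳 → ℝ, the influence-function expression for ν_t has mean zero regardless of whether τ† equals the true outcome regression: E[ (R/λ₁)·( 1{T=t}·Y / π_{t1} + (1 − 1{T=t} / π_{t1})·τ†(X) − ν_t ) ] = 0. -/
open MeasureTheory ProbabilityTheory Set

noncomputable section

theorem stmt13
    {Ω 𝒳 : Type*} [MeasurableSpace Ω] [MeasurableSpace 𝒳] [StandardBorelSpace 𝒳]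
    (P : Measure Ω) [IsProbabilityMeasure P]
    (X : Ω → 𝒳) (R T Y₁ Y₀ Y : Ω → ℝ) (Yt : ℝ → Ω → ℝ)
    (hX : Measurable X) (hR : Measurable R) (hT : Measurable T)
    (hY₁m : Measurable Y₁) (hY₀m : Measurable Y₀)
    (hRbin : ∀ ω, R ω = 0 ∨ R ω = 1) (hTbin : ∀ ω, T ω = 0 ∨ T ω = 1)
    (hY₁2 : MemLp Y₁ 2 P) (hY₀2 : MemLp Y₀ 2 P)
    (hY : Y = fun ω => T ω * Y₁ ω + (1 - T ω) * Y₀ ω)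
    (hYt1 : Yt 1 = Y₁) (hYt0 : Yt 0 = Y₀)
    (ε : ℝ) (hε : 0 < ε)
    (hlam_pos : 0 < P {ω | R ω = 1}) (hlam_lt : P {ω | R ω = 1} < 1)
    (hlamX : ∀ᵐ ω ∂P, ε ≤ cprob (sigmaX X) P {ω' | R ω' = 1} ω ∧
      cprob (sigmaX X) P {ω' | R ω' = 1} ω ≤ 1 - ε)
    (hpi : ∀ r ∈ ({0, 1} : Set ℝ), ∀ t ∈ ({0, 1} : Set ℝ), ∀ᵐ ω ∂P,
      ε ≤ cprob (sigmaX X) (ProbabilityTheory.cond P {ω' | R ω' = r}) {ω' | T ω' = t} ω ∧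
      cprob (sigmaX X) (ProbabilityTheory.cond P {ω' | R ω' = r}) {ω' | T ω' = t} ω ≤ 1 - ε)
    (hA1 : IndepFun T (fun ω => (Y₁ ω, Y₀ ω, X ω)) (ProbabilityTheory.cond P {ω | R ω = 1}))
    (t : ℝ) (ht : t = 0 ∨ t = 1)
    :
    ∀ τd : 𝒳 → ℝ, Measurable τd → (∃ C, ∀ x, |τd x| ≤ C) →
      ∫ ω, (R ω / (P {ω' | R ω' = 1}).toReal) * ((if T ω = t then (1 : ℝ) else 0) * Y ω / ((ProbabilityTheory.cond P {ω' | R ω' = 1}) {ω' | T ω' = t}).toReal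
        + (1 - (if T ω = t then (1 : ℝ) else 0) / ((ProbabilityTheory.cond P {ω' | R ω' = 1}) {ω' | T ω' = t}).toReal) * τd (X ω) - (∫ ω', Yt t ω' ∂(ProbabilityTheory.cond P {ω'' | R ω'' = 1}))) ∂P = 0 := by
  intro τd hτdm hτdbdd
  obtain ⟨C, hC⟩ := hτdbdd
  -- basic set-up
  set s : Set Ω := {ω | R ω = 1} with hs_def
  have hsm : MeasurableSet s := hR (measurableSet_singleton 1)
  have hPs0 : P s ≠ 0 := hlam_pos.ne'
  set P1 : Measure Ω := ProbabilityTheory.cond P s with hP1_def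
  haveI : IsProbabilityMeasure P1 := ProbabilityTheory.cond_isProbabilityMeasure hPs0
  have hP1ac : P1 ≪ P := ProbabilityTheory.cond_absolutelyContinuous
  set A : Set Ω := {ω | T ω = t} with hA_def
  have hAm : MeasurableSet A := hT (measurableSet_singleton t)
  set πr : ℝ := (P1 A).toReal with hπr_def
  set lam : ℝ := (P s).toReal with hlam_def
  have hlamne : lam ≠ 0 := by
    rw [hlam_def]
    exact ENNReal.toReal_ne_zero.mpr ⟨hPs0, measure_ne_top _ _⟩
  -- the indicator of {T = t}
  set I : Ω → ℝ := fun ω => if T ω = t then 1 else 0 with hI_def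
  have hIind : I = A.indicator (fun _ => (1 : ℝ)) := by
    funext ω
    by_cases h : T ω = t <;> simp [hI_def, hA_def, Set.indicator_apply, h]
  have hIm : Measurable I := by
    rw [hIind]; exact (measurable_const.indicator hAm)
  -- positivity of πr
  have hmemt : t ∈ ({0, 1} : Set ℝ) := by
    rcases ht with h | h <;> simp [h]
  have hmem1 : (1 : ℝ) ∈ ({0, 1} : Set ℝ) := by simp
  have hcomap_le : sigmaX X ≤ (inferInstance : MeasurableSpace Ω) := hX.comap_le
  have hεπ : ε ≤ πr := by
    have hae : ∀ᵐ ω ∂P, ε ≤ cprob (sigmaX X) P1 A ω := by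
      filter_upwards [hpi 1 hmem1 t hmemt] with ω hω using hω.1
    have hae1 : ∀ᵐ ω ∂P1, ε ≤ cprob (sigmaX X) P1 A ω := hP1ac.ae_le hae
    have hcint : Integrable (cprob (sigmaX X) P1 A) P1 := integrable_condExp
    have h1 : ∫ ω, cprob (sigmaX X) P1 A ω ∂P1 = πr := by
      have h2 : ∫ ω, cprob (sigmaX X) P1 A ω ∂P1
          = ∫ ω, A.indicator (fun _ => (1 : ℝ)) ω ∂P1 := integral_condExp hcomap_le
      rw [h2, integral_indicator_const (1 : ℝ) hAm, smul_eq_mul, mul_one, measureReal_def]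
    calc ε = ∫ _, ε ∂P1 := by simp
      _ ≤ ∫ ω, cprob (sigmaX X) P1 A ω ∂P1 :=
          integral_mono_ae (integrable_const ε) hcint hae1
      _ = πr := h1
  have hπpos : 0 < πr := lt_of_lt_of_le hε hεπ
  have hπne : πr ≠ 0 := hπpos.ne'
  -- measurability and integrability of Yt t
  have hYtm : Measurable (Yt t) := by
    rcases ht with h | h <;> subst h
    · rw [hYt0]; exact hY₀m
    · rw [hYt1]; exact hY₁m
  have hYtP : Integrable (Yt t) P := by
    rcases ht with h | h <;> subst h
    · rw [hYt0]; exact hY₀2.integrable one_le_two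
    · rw [hYt1]; exact hY₁2.integrable one_le_two
  have hint_P1 : ∀ f : Ω → ℝ, Integrable f P → Integrable f P1 := by
    intro f hf
    rw [hP1_def, ProbabilityTheory.cond]
    exact (hf.restrict).smul_measure (ENNReal.inv_ne_top.mpr hPs0)
  have hYtP1 : Integrable (Yt t) P1 := hint_P1 _ hYtP
  have hIint : Integrable I P1 := by
    rw [hIind]; exact (integrable_const (1 : ℝ)).indicator hAm
  have hτint : Integrable (fun ω => τd (X ω)) P1 := by
    refine Integrable.mono' (integrable_const C) ((hτdm.comp hX).aestronglyMeasurable) ?_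
    filter_upwards with ω using hC _
  have hIabs : ∀ ω, |I ω| ≤ 1 := by
    intro ω; rw [hI_def]; dsimp only
    by_cases h : T ω = t <;> simp [h]
  have hIYtint : Integrable (fun ω => I ω * Yt t ω) P1 := by
    refine Integrable.mono' hYtP1.abs ((hIm.mul hYtm).aestronglyMeasurable) ?_
    filter_upwards with ω
    rw [Real.norm_eq_abs, abs_mul]
    calc |I ω| * |Yt t ω| ≤ 1 * |Yt t ω| :=
          mul_le_mul_of_nonneg_right (hIabs ω) (abs_nonneg _)
      _ = |Yt t ω| := one_mul _
  have hIτint : Integrable (fun ω => I ω * τd (X ω)) P1 := by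
    refine Integrable.mono' (integrable_const (1 * |C|)) ((hIm.mul (hτdm.comp hX)).aestronglyMeasurable) ?_
    filter_upwards with ω
    rw [Real.norm_eq_abs, abs_mul]
    exact mul_le_mul (hIabs ω) ((hC _).trans (le_abs_self C)) (abs_nonneg _) zero_le_one
  -- key pointwise identity : I * Y = I * Yt t
  have hIY : ∀ ω, I ω * Y ω = I ω * Yt t ω := by
    intro ω
    rw [hI_def]; dsimp only
    by_cases h : T ω = t
    · rw [hY]; dsimp only
      rcases ht with h' | h' <;> subst h'
      · rw [hYt0, h]; ring
      · rw [hYt1, h]; ring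
    · simp [h]
  -- independence consequences
  have hφm : Measurable (fun x : ℝ => if x = t then (1 : ℝ) else 0) :=
    measurable_const.ite (measurableSet_singleton t) measurable_const
  have hIeq : I = (fun x : ℝ => if x = t then (1 : ℝ) else 0) ∘ T := rfl
  have hψYm : Measurable (fun p : ℝ × ℝ × 𝒳 => t * p.1 + (1 - t) * p.2.1) := by
    exact (measurable_fst.const_mul t).add ((measurable_fst.comp measurable_snd).const_mul (1 - t))
  have hYtW : Yt t = (fun p : ℝ × ℝ × 𝒳 => t * p.1 + (1 - t) * p.2.1) ∘
      (fun ω => (Y₁ ω, Y₀ ω, X ω)) := by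
    funext ω
    rcases ht with h | h <;> subst h
    · rw [hYt0]; simp
    · rw [hYt1]; simp
  have hIndY : IndepFun I (Yt t) P1 := by
    rw [hIeq, hYtW]
    exact hA1.comp hφm hψYm
  have hIndτ : IndepFun I (fun ω => τd (X ω)) P1 := by
    have h : (fun ω => τd (X ω)) = (fun p : ℝ × ℝ × 𝒳 => τd p.2.2) ∘
        (fun ω => (Y₁ ω, Y₀ ω, X ω)) := rfl
    rw [hIeq, h]
    exact hA1.comp hφm (hτdm.comp (measurable_snd.comp measurable_snd))
  -- values of integrals
  have hIval : ∫ ω, I ω ∂P1 = πr := by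
    rw [hIind, integral_indicator_const (1 : ℝ) hAm, smul_eq_mul, mul_one, measureReal_def]
  set ν : ℝ := ∫ ω', Yt t ω' ∂P1 with hν_def
  set τbar : ℝ := ∫ ω, τd (X ω) ∂P1 with hτbar_def
  have hkeyY : ∫ ω, I ω * Yt t ω ∂P1 = πr * ν := by
    have h := hIndY.integral_mul_eq_mul_integral hIint.1 hYtP1.1
    rw [hIval] at h
    exact h
  have hkeyτ : ∫ ω, I ω * τd (X ω) ∂P1 = πr * τbar := by
    have h := hIndτ.integral_mul_eq_mul_integral hIint.1 hτint.1
    rw [hIval] at h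
    exact h
  -- the integrand under P1
  set g : Ω → ℝ := fun ω => I ω * Y ω / πr + (1 - I ω / πr) * τd (X ω) - ν with hg_def
  -- rewrite g
  have hg_eq : g = fun ω => (πr⁻¹ * (I ω * Yt t ω) +
      (τd (X ω) - πr⁻¹ * (I ω * τd (X ω)))) - ν := by
    funext ω
    rw [hg_def]; dsimp only
    rw [hIY ω]; ring
  have hgint1 : Integrable (fun ω => πr⁻¹ * (I ω * Yt t ω)) P1 := hIYtint.const_mul _
  have hgint2 : Integrable (fun ω => τd (X ω) - πr⁻¹ * (I ω * τd (X ω))) P1 :=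
    hτint.sub (hIτint.const_mul _)
  have hgP1 : ∫ ω, g ω ∂P1 = 0 := by
    rw [hg_eq]
    have hgint12 : Integrable (fun ω => πr⁻¹ * (I ω * Yt t ω) +
        (τd (X ω) - πr⁻¹ * (I ω * τd (X ω)))) P1 := hgint1.add hgint2
    rw [integral_sub hgint12 (integrable_const ν)]
    rw [integral_add hgint1 hgint2, integral_sub hτint (hIτint.const_mul _)]
    rw [integral_const_mul, integral_const_mul, hkeyY, hkeyτ, integral_const]
    simp only [measure_univ, probReal_univ, ENNReal.toReal_one, one_smul]
    field_simp
    rw [hτbar_def]; ring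
  -- reduce the P-integral to the P1-integral
  have hptwise : ∀ ω, (R ω / lam) * g ω = s.indicator (fun ω' => lam⁻¹ * g ω') ω := by
    intro ω
    rcases hRbin ω with h | h
    · have hns : ω ∉ s := by simp [hs_def, h]
      rw [Set.indicator_of_notMem hns, h]
      ring
    · have hins : ω ∈ s := by simp [hs_def, h]
      rw [Set.indicator_of_mem hins, h]
      ring
  have hred : ∫ ω, (R ω / lam) * g ω ∂P = ∫ ω, g ω ∂P1 := by
    have h1 : ∫ ω, (R ω / lam) * g ω ∂P = ∫ ω, s.indicator (fun ω' => lam⁻¹ * g ω') ω ∂P := by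
      exact integral_congr_ae (Filter.Eventually.of_forall hptwise)
    rw [h1, integral_indicator hsm]
    have h2 : ∫ ω, g ω ∂P1 = ((P s)⁻¹).toReal * ∫ ω, g ω ∂(P.restrict s) := by
      rw [hP1_def, ProbabilityTheory.cond, integral_smul_measure, smul_eq_mul]
    rw [h2, ENNReal.toReal_inv, ← hlam_def, ← integral_const_mul]
  -- conclude
  calc ∫ ω, (R ω / lam) * g ω ∂P = ∫ ω, g ω ∂P1 := hred
    _ = 0 := hgP1
end
end

section
/- Assume (A1), and fix t ∈ {0,1}. Then for every scalar l ∈ (0,1), every scalar v ∈ ℝ, and every bounded measurable function τ† : 𝒳 → ℝ, the remainder term of the one-step expansion for ν_t satisfies the exact identity v + E[ (R/l)·( 1{T=t}·Y / π_{t1} + (1 − 1{T=t} / π_{t1})·τ†(X) − v ) ] − ν_t = (1 − λ₁/l)·(v − ν_t). -/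
open MeasureTheory ProbabilityTheory Set

noncomputable section

theorem stmt14
    {Ω 𝒳 : Type*} [MeasurableSpace Ω] [MeasurableSpace 𝒳] [StandardBorelSpace 𝒳]
    (P : Measure Ω) [IsProbabilityMeasure P]
    (X : Ω → 𝒳) (R T Y₁ Y₀ Y : Ω → ℝ) (Yt : ℝ → Ω → ℝ)
    (hX : Measurable X) (hR : Measurable R) (hT : Measurable T)
    (hY₁m : Measurable Y₁) (hY₀m : Measurable Y₀)
    (hRbin : ∀ ω, R ω = 0 ∨ R ω = 1) (hTbin : ∀ ω, T ω = 0 ∨ T ω = 1)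
    (hY₁2 : MemLp Y₁ 2 P) (hY₀2 : MemLp Y₀ 2 P)
    (hY : Y = fun ω => T ω * Y₁ ω + (1 - T ω) * Y₀ ω)
    (hYt1 : Yt 1 = Y₁) (hYt0 : Yt 0 = Y₀)
    (ε : ℝ) (hε : 0 < ε)
    (hlam_pos : 0 < P {ω | R ω = 1}) (hlam_lt : P {ω | R ω = 1} < 1)
    (hlamX : ∀ᵐ ω ∂P, ε ≤ cprob (sigmaX X) P {ω' | R ω' = 1} ω ∧
      cprob (sigmaX X) P {ω' | R ω' = 1} ω ≤ 1 - ε)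
    (hpi : ∀ r ∈ ({0, 1} : Set ℝ), ∀ t ∈ ({0, 1} : Set ℝ), ∀ᵐ ω ∂P,
      ε ≤ cprob (sigmaX X) (ProbabilityTheory.cond P {ω' | R ω' = r}) {ω' | T ω' = t} ω ∧
      cprob (sigmaX X) (ProbabilityTheory.cond P {ω' | R ω' = r}) {ω' | T ω' = t} ω ≤ 1 - ε)
    (hA1 : IndepFun T (fun ω => (Y₁ ω, Y₀ ω, X ω)) (ProbabilityTheory.cond P {ω | R ω = 1}))
    (t : ℝ) (ht : t = 0 ∨ t = 1)
    :
    ∀ l : ℝ, 0 < l → l < 1 → ∀ v : ℝ,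
      ∀ τd : 𝒳 → ℝ, Measurable τd → (∃ C, ∀ x, |τd x| ≤ C) →
      v + (∫ ω, (R ω / l) * ((if T ω = t then (1 : ℝ) else 0) * Y ω / ((ProbabilityTheory.cond P {ω' | R ω' = 1}) {ω' | T ω' = t}).toReal
        + (1 - (if T ω = t then (1 : ℝ) else 0) / ((ProbabilityTheory.cond P {ω' | R ω' = 1}) {ω' | T ω' = t}).toReal) * τd (X ω) - v) ∂P) - (∫ ω', Yt t ω' ∂(ProbabilityTheory.cond P {ω'' | R ω'' = 1}))
      = (1 - (P {ω' | R ω' = 1}).toReal / l) * (v - (∫ ω', Yt t ω' ∂(ProbabilityTheory.cond P {ω'' | R ω'' = 1}))) := by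
  intro l hl0 hl1 v τd hτd hτdbdd
  classical
  set A : Set Ω := {ω | R ω = 1} with hA
  have hAm : MeasurableSet A := hR (measurableSet_singleton 1)
  set μ : Measure Ω := ProbabilityTheory.cond P A with hμ
  haveI hprob : IsProbabilityMeasure μ := cond_isProbabilityMeasure hlam_pos.ne'
  set S : Set Ω := {ω | T ω = t} with hS
  have hSm : MeasurableSet S := hT (measurableSet_singleton t)
  set πr : ℝ := (μ S).toReal with hπr
  set lamr : ℝ := (P A).toReal with hlamr
  have hlamr_pos : 0 < lamr := ENNReal.toReal_pos hlam_pos.ne' (measure_ne_top P A)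
  -- transfer integrability to μ
  have hInt : ∀ f : Ω → ℝ, Integrable f P → Integrable f μ := by
    intro f hf
    rw [hμ, ProbabilityTheory.cond]
    exact (hf.restrict).smul_measure (by simp [hlam_pos.ne'])
  have hμ_ac : μ ≪ P := cond_absolutelyContinuous
  -- Yt t is integrable
  have hYtm : Measurable (Yt t) := by rcases ht with h | h <;> rw [h] <;> simpa [hYt0, hYt1]
  have hYtiP : Integrable (Yt t) P := by
    rcases ht with h | h <;> rw [h]
    · rw [hYt0]; exact hY₀2.integrable one_le_two
    · rw [hYt1]; exact hY₁2.integrable one_le_two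
  have hYti : Integrable (Yt t) μ := hInt _ hYtiP
  -- the indicator of T = t
  set iT : Ω → ℝ := fun ω => if T ω = t then (1 : ℝ) else 0 with hiT
  have hiTm : Measurable iT := Measurable.ite (hT (measurableSet_singleton t))
    measurable_const measurable_const
  have hiT_ind : iT = S.indicator (fun _ => (1 : ℝ)) := by
    funext ω; simp [hiT, Set.indicator_apply, hS, Set.mem_setOf_eq]
  have hiT_int : Integrable iT μ := by
    rw [hiT_ind]; exact (integrable_const (1 : ℝ)).indicator hSm
  have hiT_integral : ∫ ω, iT ω ∂μ = πr := by
    rw [hiT_ind, integral_indicator_const _ hSm]; simp [hπr, measureReal_def]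
  -- πr > 0 via hpi
  have hπr_pos : 0 < πr := by
    have ht' : t ∈ ({0, 1} : Set ℝ) := by rcases ht with h | h <;> simp [h]
    have h1 : (1 : ℝ) ∈ ({0, 1} : Set ℝ) := by simp
    have hpi1 := hpi 1 h1 t ht'
    have hA1' : {ω | R ω = (1:ℝ)} = A := rfl
    rw [hA1'] at hpi1
    have hpiμ : ∀ᵐ ω ∂μ, ε ≤ cprob (sigmaX X) μ S ω := by
      have := hμ_ac.ae_le hpi1
      filter_upwards [this] with ω hω using hω.1
    have hm : sigmaX X ≤ (inferInstance : MeasurableSpace Ω) := hX.comap_le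
    haveI : SigmaFinite (μ.trim hm) := by
      have : IsFiniteMeasure (μ.trim hm) := isFiniteMeasure_trim hm
      infer_instance
    have hcint : Integrable (cprob (sigmaX X) μ S) μ := integrable_condExp
    have hle : ε ≤ ∫ ω, cprob (sigmaX X) μ S ω ∂μ := by
      have := integral_mono_ae (integrable_const ε) hcint hpiμ
      simpa using this
    have heq : ∫ ω, cprob (sigmaX X) μ S ω ∂μ = πr := by
      rw [cprob, cexp, integral_condExp hm, integral_indicator_const _ hSm]
      simp [hπr, measureReal_def]
    linarith
  -- independence lemmas
  have hInd1 : IndepFun iT (Yt t) μ := by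
    have hφ : Measurable (fun x : ℝ => if x = t then (1 : ℝ) else 0) :=
      Measurable.ite (measurableSet_singleton t) measurable_const measurable_const
    rcases ht with h | h
    · have := hA1.comp hφ (measurable_fst.comp measurable_snd)
      rw [h, hYt0]; exact this
    · have := hA1.comp hφ measurable_fst
      rw [h, hYt1]; exact this
  have hInd2 : IndepFun iT (fun ω => τd (X ω)) μ := by
    have hφ : Measurable (fun x : ℝ => if x = t then (1 : ℝ) else 0) :=
      Measurable.ite (measurableSet_singleton t) measurable_const measurable_const
    exact hA1.comp hφ (hτd.comp (measurable_snd.comp measurable_snd))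
  -- integrability of auxiliary functions
  obtain ⟨C, hC⟩ := hτdbdd
  have hτdXi : Integrable (fun ω => τd (X ω)) μ := by
    refine (integrable_const C).mono' ((hτd.comp hX).aestronglyMeasurable) ?_
    filter_upwards with ω using by simpa [Real.norm_eq_abs] using hC (X ω)
  have hiTbdd : ∃ C, ∀ ω, ‖iT ω‖ ≤ C := ⟨1, fun ω => by
    by_cases h : T ω = t <;> simp [hiT, h]⟩
  have hiTYt : Integrable (fun ω => iT ω * Yt t ω) μ :=
    hYti.bdd_mul hiTm.aestronglyMeasurable (ae_of_all _ (Classical.choose_spec hiTbdd))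
  have hiTτd : Integrable (fun ω => iT ω * τd (X ω)) μ :=
    hτdXi.bdd_mul hiTm.aestronglyMeasurable (ae_of_all _ (Classical.choose_spec hiTbdd))
  set ν : ℝ := ∫ ω, Yt t ω ∂μ with hν
  -- product integrals
  have hI1 : ∫ ω, iT ω * Yt t ω ∂μ = πr * ν := by
    have := hInd1.integral_fun_mul_eq_mul_integral hiT_int.aestronglyMeasurable hYti.aestronglyMeasurable
    rw [← hiT_integral]; exact this
  have hI2 : ∫ ω, iT ω * τd (X ω) ∂μ = πr * ∫ ω, τd (X ω) ∂μ := by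
    have := hInd2.integral_fun_mul_eq_mul_integral hiT_int.aestronglyMeasurable hτdXi.aestronglyMeasurable
    rw [← hiT_integral]; exact this
  -- key pointwise identity: iT * Y = iT * Yt t
  have hkey : ∀ ω, iT ω * Y ω = iT ω * Yt t ω := by
    intro ω
    by_cases h : T ω = t
    · rcases ht with h' | h' <;>
        simp [hiT, h, hY, h', hYt0, hYt1, h' ▸ h]
    · simp [hiT, h]
  -- the inner function
  set f : Ω → ℝ := fun ω => iT ω * Y ω / πr + (1 - iT ω / πr) * τd (X ω) - v with hf
  -- rewrite f for integration
  have hint1 : Integrable (fun ω => (iT ω * Yt t ω) * πr⁻¹) μ := hiTYt.mul_const _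
  have hint2 : Integrable (fun ω => τd (X ω) - (iT ω * τd (X ω)) * πr⁻¹) μ :=
    hτdXi.sub (hiTτd.mul_const _)
  have hint12 : Integrable (fun ω => (iT ω * Yt t ω) * πr⁻¹ +
      (τd (X ω) - (iT ω * τd (X ω)) * πr⁻¹)) μ := hint1.add hint2
  have hfeq : f = fun ω => (iT ω * Yt t ω) * πr⁻¹ +
      (τd (X ω) - (iT ω * τd (X ω)) * πr⁻¹) - v := by
    funext ω; rw [hf]; simp only; rw [hkey ω]; ring
  have hf_int : Integrable f μ := by
    rw [hfeq]; exact hint12.sub (integrable_const v)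
  have hfμ : ∫ ω, f ω ∂μ = ν - v := by
    rw [hfeq]
    rw [integral_sub hint12 (integrable_const v), integral_add hint1 hint2,
      integral_mul_const, integral_sub hτdXi (hiTτd.mul_const _), integral_mul_const,
      hI1, hI2, integral_const]
    field_simp
    simp
  -- integrability of f over P on A, via indicator
  have hRf : ∀ ω, R ω * f ω = A.indicator f ω := by
    intro ω
    rcases hRbin ω with h | h
    · have : ω ∉ A := by simp [hA, Set.mem_setOf_eq, h]
      simp [h, Set.indicator_of_notMem this]
    · have : ω ∈ A := by simp [hA, Set.mem_setOf_eq, h]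
      simp [h, Set.indicator_of_mem this]
  -- relate ∫ f dμ with ∫_A f dP
  have hcond_int : ∫ ω, f ω ∂μ = lamr⁻¹ * ∫ ω in A, f ω ∂P := by
    rw [hμ, ProbabilityTheory.cond, integral_smul_measure, ENNReal.toReal_inv, smul_eq_mul, hlamr]
  have hsetint : ∫ ω in A, f ω ∂P = lamr * (ν - v) := by
    have := hcond_int
    rw [hfμ] at this
    field_simp at this
    linarith [this]
  -- whole integral
  have hmain : ∫ ω, (R ω / l) * f ω ∂P = l⁻¹ * (lamr * (ν - v)) := by
    have h1 : ∀ ω, (R ω / l) * f ω = l⁻¹ * (R ω * f ω) := by intro ω; ring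
    simp_rw [h1, hRf]
    rw [integral_const_mul, integral_indicator hAm, hsetint]
  -- match against the statement
  have hAeq : {ω | R ω = (1:ℝ)} = A := rfl
  have hgoal_f : ∀ ω, (if T ω = t then (1 : ℝ) else 0) * Y ω / (μ S).toReal
      + (1 - (if T ω = t then (1 : ℝ) else 0) / (μ S).toReal) * τd (X ω) - v = f ω := by
    intro ω; rw [hf]
  calc v + (∫ ω, (R ω / l) * ((if T ω = t then (1 : ℝ) else 0) * Y ω / ((ProbabilityTheory.cond P {ω' | R ω' = 1}) {ω' | T ω' = t}).toReal
        + (1 - (if T ω = t then (1 : ℝ) else 0) / ((ProbabilityTheory.cond P {ω' | R ω' = 1}) {ω' | T ω' = t}).toReal) * τd (X ω) - v) ∂P) - (∫ ω', Yt t ω' ∂(ProbabilityTheory.cond P {ω'' | R ω'' = 1}))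
      = v + (∫ ω, (R ω / l) * f ω ∂P) - ν := by rfl
    _ = v + l⁻¹ * (lamr * (ν - v)) - ν := by rw [hmain]
    _ = (1 - lamr / l) * (v - ν) := by field_simp; ring
end
end

section
/- Assume (A1), (A2) and (A3), and fix t ∈ {0,1}. Let λ† : 𝒳 → [ε, 1−ε] and π† : 𝒳 → [ε, 1−ε] be measurable, let τ† : 𝒳 → ℝ be bounded measurable, and set π̃(X) = λ†(X)·π_{t1} + (1−λ†(X))·π†(X). Suppose that either (i) τ†(X) = τ_t(X) almost surely, or (ii) both λ†(X) = λ₁(X) and π†(X) = π_t(0,X) almost surely. Then the influence-function expression for ν_t has mean zero: E[ 1{T=t}·λ†(X)·Y / (λ₁·π̃(X)) + ( R − 1{T=t}·λ†(X) / π̃(X) )·τ†(X)/λ₁ − (R/λ₁)·ν_t ] = 0. -/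
open MeasureTheory ProbabilityTheory Set

noncomputable section

namespace Stmt16Aux

variable {Ω : Type*} {m' : MeasurableSpace Ω} {m0 : MeasurableSpace Ω} {μ : Measure Ω}

/-- Pull-out trick: integrating a bounded `m'`-measurable function against `h` is the same
as against `condexp m' μ h`. -/
lemma int_mul_condexp (hm : m' ≤ m0) [IsFiniteMeasure μ] {G h : Ω → ℝ}
    (hG : StronglyMeasurable[m'] G) {C : ℝ} (hGb : ∀ᵐ ω ∂μ, ‖G ω‖ ≤ C)
    (hh : Integrable h μ) :
    ∫ ω, G ω * h ω ∂μ = ∫ ω, G ω * (MeasureTheory.condExp m' μ h) ω ∂μ := by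
  have hGh : Integrable (fun ω => G ω * h ω) μ :=
    hh.bdd_mul ((hG.mono hm).aestronglyMeasurable) hGb
  have h1 : MeasureTheory.condExp m' μ (G * h) =ᵐ[μ] G * MeasureTheory.condExp m' μ h :=
    condExp_stronglyMeasurable_mul_of_bound hm hG hh C hGb
  have h2 : ∫ ω, MeasureTheory.condExp m' μ (G * h) ω ∂μ = ∫ ω, (G * h) ω ∂μ :=
    integral_condExp hm
  calc ∫ ω, G ω * h ω ∂μ = ∫ ω, (G * h) ω ∂μ := rfl
    _ = ∫ ω, MeasureTheory.condExp m' μ (G * h) ω ∂μ := h2.symm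
    _ = ∫ ω, (G * MeasureTheory.condExp m' μ h) ω ∂μ := integral_congr_ae h1
    _ = ∫ ω, G ω * MeasureTheory.condExp m' μ h ω ∂μ := rfl

/-- Conditional probabilities are a.e. in `[0,1]`. -/
lemma condexp_indicator_mem (hm : m' ≤ m0) [IsProbabilityMeasure μ] {s : Set Ω}
    (hs : MeasurableSet[m0] s) :
    ∀ᵐ ω ∂μ, 0 ≤ MeasureTheory.condExp m' μ (s.indicator fun _ => (1:ℝ)) ω ∧
      MeasureTheory.condExp m' μ (s.indicator fun _ => (1:ℝ)) ω ≤ 1 := by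
  have hint : Integrable (s.indicator fun _ => (1:ℝ)) μ := (integrable_const 1).indicator hs
  have h0 : 0 ≤ᵐ[μ] MeasureTheory.condExp m' μ (s.indicator fun _ => (1:ℝ)) :=
    condExp_nonneg (ae_of_all μ fun ω => Set.indicator_nonneg (fun _ _ => zero_le_one) ω)
  have h1 : MeasureTheory.condExp m' μ (s.indicator fun _ => (1:ℝ)) ≤ᵐ[μ]
      MeasureTheory.condExp m' μ (fun _ => (1:ℝ)) :=
    condExp_mono hint (integrable_const 1)
      (ae_of_all μ fun ω => Set.indicator_le_self' (fun _ _ => zero_le_one) ω)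
  have hc : MeasureTheory.condExp m' μ (fun _ : Ω => (1:ℝ)) = fun _ => (1:ℝ) :=
    condExp_const hm (1:ℝ)
  rw [hc] at h1
  filter_upwards [h0, h1] with ω hω0 hω1
  exact ⟨hω0, hω1⟩

end Stmt16Aux

namespace Stmt16Aux

variable {Ω : Type*} {m' : MeasurableSpace Ω} {m0 : MeasurableSpace Ω} {μ : Measure Ω}

lemma cont_int {g2 : Ω → ℝ × ℝ} (hg2 : AEMeasurable g2 μ) (K : Ω → ℝ)
    (hK : AEStronglyMeasurable K μ) {C : ℝ} (hC : 0 ≤ C) (hKb : ∀ᵐ ω ∂μ, ‖K ω‖ ≤ C) :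
    Continuous fun φ : (ℝ × ℝ) →₁[μ.map g2] ℝ => ∫ ω, K ω * φ (g2 ω) ∂μ := by
  have hcomp : ∀ φ : (ℝ × ℝ) →₁[μ.map g2] ℝ, Integrable (fun ω => φ (g2 ω)) μ := fun φ =>
    (integrable_map_measure (Lp.aestronglyMeasurable φ) hg2).mp (L1.integrable_coeFn φ)
  have hKint : ∀ φ : (ℝ × ℝ) →₁[μ.map g2] ℝ, Integrable (fun ω => K ω * φ (g2 ω)) μ := fun φ =>
    (hcomp φ).bdd_mul hK hKb
  refine (LipschitzWith.of_dist_le_mul (K := C.toNNReal) fun a b => ?_).continuous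
  have hsub : Integrable (fun ω => ‖a (g2 ω) - b (g2 ω)‖) μ := ((hcomp a).sub (hcomp b)).norm
  have e1 : (∫ ω, K ω * a (g2 ω) ∂μ) - ∫ ω, K ω * b (g2 ω) ∂μ
      = ∫ ω, K ω * (a (g2 ω) - b (g2 ω)) ∂μ := by
    rw [← integral_sub (hKint a) (hKint b)]
    congr 1; funext ω; ring
  have e2 : ‖∫ ω, K ω * (a (g2 ω) - b (g2 ω)) ∂μ‖ ≤ ∫ ω, C * ‖a (g2 ω) - b (g2 ω)‖ ∂μ := by
    refine norm_integral_le_of_norm_le (hsub.const_mul C) ?_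
    filter_upwards [hKb] with ω hω
    rw [norm_mul]
    exact mul_le_mul_of_nonneg_right hω (norm_nonneg _)
  have e3 : ∫ ω, ‖a (g2 ω) - b (g2 ω)‖ ∂μ = dist a b := by
    have hmeas : AEStronglyMeasurable (fun y => ‖a y - b y‖) (μ.map g2) :=
      ((Lp.aestronglyMeasurable a).sub (Lp.aestronglyMeasurable b)).norm
    have h4 : ∫ ω, ‖a (g2 ω) - b (g2 ω)‖ ∂μ = ∫ y, ‖a y - b y‖ ∂(μ.map g2) :=
      (integral_map hg2 hmeas).symm
    have h5 : ∫ y, ‖a y - b y‖ ∂(μ.map g2) = ∫ y, ‖(a - b) y‖ ∂(μ.map g2) := by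
      refine integral_congr_ae ?_
      filter_upwards [Lp.coeFn_sub a b] with y hy
      rw [hy]; rfl
    rw [h4, h5, ← L1.norm_eq_integral_norm, dist_eq_norm]
  rw [dist_eq_norm, e1]
  calc ‖∫ ω, K ω * (a (g2 ω) - b (g2 ω)) ∂μ‖ ≤ ∫ ω, C * ‖a (g2 ω) - b (g2 ω)‖ ∂μ := e2
    _ = C * ∫ ω, ‖a (g2 ω) - b (g2 ω)‖ ∂μ := integral_const_mul C _
    _ = C.toNNReal * dist a b := by rw [e3, Real.coe_toNNReal _ hC]

end Stmt16Aux

namespace Stmt16Aux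

variable {Ω : Type*} {m' : MeasurableSpace Ω} {m0 : MeasurableSpace Ω} {μ : Measure Ω}

lemma factor (hm : m' ≤ m0) [IsProbabilityMeasure μ] {f : Ω → ℝ} {g2 : Ω → ℝ × ℝ}
    (hf : Measurable f) (hg2 : Measurable g2)
    (hCI : ∀ (s : Set ℝ) (u : Set (ℝ × ℝ)), MeasurableSet s → MeasurableSet u →
      MeasureTheory.condExp m' μ ((f ⁻¹' s ∩ g2 ⁻¹' u).indicator fun _ => (1:ℝ))
        =ᵐ[μ] fun ω => MeasureTheory.condExp m' μ ((f ⁻¹' s).indicator fun _ => (1:ℝ)) ω *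
          MeasureTheory.condExp m' μ ((g2 ⁻¹' u).indicator fun _ => (1:ℝ)) ω)
    {s : Set ℝ} (hs : MeasurableSet s)
    {G : Ω → ℝ} (hG : StronglyMeasurable[m'] G) {C : ℝ} (hGb : ∀ᵐ ω ∂μ, ‖G ω‖ ≤ C)
    {φ : ℝ × ℝ → ℝ} (hφ : Integrable φ (μ.map g2)) :
    ∫ ω, (f ⁻¹' s).indicator (fun _ => (1:ℝ)) ω * G ω * φ (g2 ω) ∂μ
      = ∫ ω, MeasureTheory.condExp m' μ ((f ⁻¹' s).indicator fun _ => (1:ℝ)) ω * G ω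
          * φ (g2 ω) ∂μ := by
  haveI : (MeasureTheory.ae μ).NeBot := ae_neBot.mpr (IsProbabilityMeasure.ne_zero μ)
  have hC0 : 0 ≤ C := by
    obtain ⟨ω, hω⟩ := hGb.exists
    exact le_trans (norm_nonneg _) hω
  set A : Set Ω := f ⁻¹' s with hAdef
  have hA : MeasurableSet[m0] A := hf hs
  set I : Ω → ℝ := A.indicator (fun _ => (1:ℝ)) with hIdef
  set q : Ω → ℝ := MeasureTheory.condExp m' μ I with hqdef
  have hq01 : ∀ᵐ ω ∂μ, 0 ≤ q ω ∧ q ω ≤ 1 := condexp_indicator_mem hm hA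
  have hIb : ∀ ω, ‖I ω‖ ≤ 1 := by
    intro ω
    by_cases h : ω ∈ A <;> simp [hIdef, Set.indicator_apply, h]
  have hIGmeas : AEStronglyMeasurable (fun ω => I ω * G ω) μ :=
    ((measurable_const.indicator hA).aestronglyMeasurable).mul (hG.mono hm).aestronglyMeasurable
  have hIGb : ∀ᵐ ω ∂μ, ‖I ω * G ω‖ ≤ C := by
    filter_upwards [hGb] with ω hω
    rw [norm_mul]
    calc ‖I ω‖ * ‖G ω‖ ≤ 1 * C := mul_le_mul (hIb ω) hω (norm_nonneg _) zero_le_one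
      _ = C := one_mul C
  have hqGmeas : AEStronglyMeasurable (fun ω => q ω * G ω) μ :=
    ((stronglyMeasurable_condExp.mono hm).aestronglyMeasurable).mul (hG.mono hm).aestronglyMeasurable
  have hqGb : ∀ᵐ ω ∂μ, ‖q ω * G ω‖ ≤ C := by
    filter_upwards [hGb, hq01] with ω hω hq
    rw [norm_mul]
    have : ‖q ω‖ ≤ 1 := by rw [Real.norm_eq_abs, abs_le]; constructor <;> linarith [hq.1, hq.2]
    calc ‖q ω‖ * ‖G ω‖ ≤ 1 * C := mul_le_mul this hω (norm_nonneg _) zero_le_one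
      _ = C := one_mul C
  have hcomp : ∀ {ψ : ℝ × ℝ → ℝ}, Integrable ψ (μ.map g2) →
      Integrable (fun ω => ψ (g2 ω)) μ := fun hψ =>
    (integrable_map_measure hψ.aestronglyMeasurable hg2.aemeasurable).mp hψ
  have hIGint : ∀ {ψ : ℝ × ℝ → ℝ}, Integrable ψ (μ.map g2) →
      Integrable (fun ω => I ω * G ω * ψ (g2 ω)) μ := fun hψ =>
    (hcomp hψ).bdd_mul hIGmeas hIGb
  have hqGint : ∀ {ψ : ℝ × ℝ → ℝ}, Integrable ψ (μ.map g2) →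
      Integrable (fun ω => q ω * G ω * ψ (g2 ω)) μ := fun hψ =>
    (hcomp hψ).bdd_mul hqGmeas hqGb
  -- the predicate for the induction
  set Pp : (ℝ × ℝ → ℝ) → Prop := fun ψ =>
    ∫ ω, I ω * G ω * ψ (g2 ω) ∂μ = ∫ ω, q ω * G ω * ψ (g2 ω) ∂μ with hPpdef
  suffices h : Pp φ by exact h
  refine Integrable.induction Pp ?_ ?_ ?_ ?_ hφ
  · -- indicator case
    intro c' u hu _
    have hB : MeasurableSet[m0] (g2 ⁻¹' u) := hg2 hu
    set B : Set Ω := g2 ⁻¹' u with hBdef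
    set J : Ω → ℝ := B.indicator (fun _ => (1:ℝ)) with hJdef
    set qB : Ω → ℝ := MeasureTheory.condExp m' μ J with hqBdef
    have hABint : Integrable ((A ∩ B).indicator fun _ => (1:ℝ)) μ :=
      (integrable_const 1).indicator (hA.inter hB)
    have hJint : Integrable J μ := (integrable_const 1).indicator hB
    have e1 : (fun ω => I ω * G ω * ((u.indicator fun _ => c') (g2 ω)))
        = fun ω => c' * (G ω * (A ∩ B).indicator (fun _ => (1:ℝ)) ω) := by
      funext ω
      by_cases h1 : ω ∈ A <;> by_cases h2 : g2 ω ∈ u <;>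
        simp [hIdef, Set.indicator_apply, h1, h2, Set.mem_inter_iff, Set.mem_preimage, hBdef] <;>
        ring
    have e2 : (fun ω => q ω * G ω * ((u.indicator fun _ => c') (g2 ω)))
        = fun ω => c' * ((fun ω' => G ω' * q ω') ω * J ω) := by
      funext ω
      by_cases h2 : g2 ω ∈ u <;>
        simp [hJdef, Set.indicator_apply, h2, Set.mem_preimage, hBdef] <;> ring
    have hGq : StronglyMeasurable[m'] (fun ω => G ω * q ω) := hG.mul stronglyMeasurable_condExp
    have hGqb : ∀ᵐ ω ∂μ, ‖G ω * q ω‖ ≤ C := by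
      filter_upwards [hqGb] with ω hω
      rw [mul_comm]; exact hω
    have key : ∫ ω, G ω * (A ∩ B).indicator (fun _ => (1:ℝ)) ω ∂μ
        = ∫ ω, (fun ω' => G ω' * q ω') ω * J ω ∂μ := by
      calc ∫ ω, G ω * (A ∩ B).indicator (fun _ => (1:ℝ)) ω ∂μ
          = ∫ ω, G ω * (MeasureTheory.condExp m' μ ((A ∩ B).indicator fun _ => (1:ℝ))) ω ∂μ :=
            int_mul_condexp hm hG hGb hABint
        _ = ∫ ω, G ω * (q ω * qB ω) ∂μ := by
            refine integral_congr_ae ?_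
            filter_upwards [hCI s u hs hu] with ω hω
            rw [hω]
        _ = ∫ ω, (fun ω' => G ω' * q ω') ω * (MeasureTheory.condExp m' μ J) ω ∂μ := by
            refine integral_congr_ae (ae_of_all μ fun ω => ?_)
            simp only [hqBdef]
            ring
        _ = ∫ ω, (fun ω' => G ω' * q ω') ω * J ω ∂μ :=
            (int_mul_condexp hm hGq hGqb hJint).symm
    show ∫ ω, I ω * G ω * ((u.indicator fun _ => c') (g2 ω)) ∂μ
        = ∫ ω, q ω * G ω * ((u.indicator fun _ => c') (g2 ω)) ∂μ
    rw [e1, e2, integral_const_mul, integral_const_mul, key]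
  · -- additivity
    intro φ1 φ2 _ h1 h2 hP1 hP2
    have i1 := hIGint h1
    have i2 := hIGint h2
    have j1 := hqGint h1
    have j2 := hqGint h2
    have e1 : ∫ ω, I ω * G ω * ((φ1 + φ2) (g2 ω)) ∂μ
        = (∫ ω, I ω * G ω * φ1 (g2 ω) ∂μ) + ∫ ω, I ω * G ω * φ2 (g2 ω) ∂μ := by
      rw [← integral_add i1 i2]
      refine integral_congr_ae (ae_of_all μ fun ω => ?_)
      simp only [Pi.add_apply]
      ring
    have e2 : ∫ ω, q ω * G ω * ((φ1 + φ2) (g2 ω)) ∂μ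
        = (∫ ω, q ω * G ω * φ1 (g2 ω) ∂μ) + ∫ ω, q ω * G ω * φ2 (g2 ω) ∂μ := by
      rw [← integral_add j1 j2]
      refine integral_congr_ae (ae_of_all μ fun ω => ?_)
      simp only [Pi.add_apply]
      ring
    show ∫ ω, I ω * G ω * ((φ1 + φ2) (g2 ω)) ∂μ = ∫ ω, q ω * G ω * ((φ1 + φ2) (g2 ω)) ∂μ
    rw [e1, e2, hP1, hP2]
  · -- closedness
    exact isClosed_eq
      (cont_int hg2.aemeasurable (fun ω => I ω * G ω) hIGmeas hC0 hIGb)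
      (cont_int hg2.aemeasurable (fun ω => q ω * G ω) hqGmeas hC0 hqGb)
  · -- a.e. congruence
    intro φ1 φ2 hae _ hP1
    have hcg : (fun ω => φ1 (g2 ω)) =ᵐ[μ] fun ω => φ2 (g2 ω) :=
      ae_eq_comp hg2.aemeasurable hae
    show ∫ ω, I ω * G ω * (φ2 (g2 ω)) ∂μ = ∫ ω, q ω * G ω * (φ2 (g2 ω)) ∂μ
    have e1 : ∫ ω, I ω * G ω * φ1 (g2 ω) ∂μ = ∫ ω, I ω * G ω * φ2 (g2 ω) ∂μ := by
      refine integral_congr_ae ?_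
      filter_upwards [hcg] with ω hω
      rw [hω]
    have e2 : ∫ ω, q ω * G ω * φ1 (g2 ω) ∂μ = ∫ ω, q ω * G ω * φ2 (g2 ω) ∂μ := by
      refine integral_congr_ae ?_
      filter_upwards [hcg] with ω hω
      rw [hω]
    rw [← e1, ← e2]
    exact hP1

end Stmt16Aux



namespace Stmt16Aux

variable {Ω : Type*} {m0 : MeasurableSpace Ω} {μ : Measure Ω}

lemma integral_cond [IsFiniteMeasure μ] {A : Set Ω} (hA : MeasurableSet A) (F : Ω → ℝ) :
    (μ A).toReal * ∫ ω, F ω ∂(ProbabilityTheory.cond μ A)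
      = ∫ ω, A.indicator (fun _ => (1:ℝ)) ω * F ω ∂μ := by
  have hind : (fun ω => A.indicator (fun _ => (1:ℝ)) ω * F ω) = A.indicator F := by
    funext ω
    by_cases h : ω ∈ A <;> simp [Set.indicator_apply, h]
  rw [hind, integral_indicator hA]
  show (μ A).toReal * ∫ ω, F ω ∂((μ A)⁻¹ • μ.restrict A) = _
  rw [integral_smul_measure, ENNReal.toReal_inv, smul_eq_mul]
  by_cases h0 : μ A = 0
  · rw [h0]
    simp [Measure.restrict_eq_zero.mpr h0]
  · rw [← mul_assoc, mul_inv_cancel₀ (ENNReal.toReal_ne_zero.mpr ⟨h0, measure_ne_top μ A⟩),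
      one_mul]

end Stmt16Aux


namespace Stmt16Aux

set_option maxHeartbeats 1000000 in
lemma main_aux {Ω 𝒳 : Type*} [MeasurableSpace Ω] [MeasurableSpace 𝒳]
    (P : Measure Ω) [IsProbabilityMeasure P]
    (X : Ω → 𝒳) (R T Y₁ Y₀ Y Y' : Ω → ℝ) (pr : ℝ × ℝ → ℝ)
    (hX : Measurable X) (hR : Measurable R) (hT : Measurable T)
    (hY₁m : Measurable Y₁) (hY₀m : Measurable Y₀)
    (hpr : Measurable pr) (hprY : ∀ ω, pr (Y₁ ω, Y₀ ω) = Y' ω)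
    (hRbin : ∀ ω, R ω = 0 ∨ R ω = 1)
    (hY'i : Integrable Y' P)
    (t : ℝ)
    (hcons : ∀ ω, T ω = t → Y ω = Y' ω)
    (ε : ℝ) (hε : 0 < ε)
    (hlam_pos : 0 < P {ω | R ω = 1}) (hlam_lt : P {ω | R ω = 1} < 1)
    (hpi0 : ∀ᵐ ω ∂P,
      ε ≤ cprob (sigmaX X) (ProbabilityTheory.cond P {ω' | R ω' = 0}) {ω' | T ω' = t} ω ∧
      cprob (sigmaX X) (ProbabilityTheory.cond P {ω' | R ω' = 0}) {ω' | T ω' = t} ω ≤ 1 - ε)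
    (hA1 : IndepFun T (fun ω => (Y₁ ω, Y₀ ω, X ω)) (ProbabilityTheory.cond P {ω | R ω = 1}))
    (hA2 : CondIndepFunGiven (sigmaX X) T (fun ω => (Y₁ ω, Y₀ ω))
      (ProbabilityTheory.cond P {ω' | R ω' = 0}))
    (hA3 : CondIndepFunGiven (sigmaX X) R (fun ω => (Y₁ ω, Y₀ ω)) P)
    (lamd : 𝒳 → ℝ) (hlamdm : Measurable lamd) (hlamdr : ∀ x, lamd x ∈ Set.Icc ε (1 - ε))
    (πd : 𝒳 → ℝ) (hπdm : Measurable πd) (hπdr : ∀ x, πd x ∈ Set.Icc ε (1 - ε))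
    (τd : 𝒳 → ℝ) (hτdm : Measurable τd) (hτdb : ∃ C, ∀ x, |τd x| ≤ C)
    (hrob : (fun ω => τd (X ω)) =ᵐ[P] cexp (sigmaX X) P Y' ∨
      ((fun ω => lamd (X ω)) =ᵐ[P] cprob (sigmaX X) P {ω' | R ω' = 1} ∧
        (fun ω => πd (X ω)) =ᵐ[P] cprob (sigmaX X)
          (ProbabilityTheory.cond P {ω' | R ω' = 0}) {ω' | T ω' = t})) :
    ∫ ω, ((if T ω = t then (1 : ℝ) else 0) * lamd (X ω) * Y ω / ((P {ω' | R ω' = 1}).toReal * (lamd (X ω) * ((ProbabilityTheory.cond P {ω' | R ω' = 1}) {ω' | T ω' = t}).toReal + (1 - lamd (X ω)) * πd (X ω)))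
      + (R ω - (if T ω = t then (1 : ℝ) else 0) * lamd (X ω) / (lamd (X ω) * ((ProbabilityTheory.cond P {ω' | R ω' = 1}) {ω' | T ω' = t}).toReal + (1 - lamd (X ω)) * πd (X ω))) * τd (X ω) / (P {ω' | R ω' = 1}).toReal
      - (R ω / (P {ω' | R ω' = 1}).toReal) * (∫ ω', Y' ω' ∂(ProbabilityTheory.cond P {ω'' | R ω'' = 1}))) ∂P = 0 := by
  obtain ⟨C0, hC0b⟩ := hτdb
  have hm : sigmaX X ≤ ‹MeasurableSpace Ω› := measurable_iff_comap_le.mp hX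
  have hXsm : Measurable[(sigmaX X)] X := fun s hs => ⟨s, hs, rfl⟩
  set A1 : Set Ω := {ω | R ω = 1} with hA1def
  set A0 : Set Ω := {ω' | R ω' = 0} with hA0def
  set Tset : Set Ω := {ω' | T ω' = t} with hTsetdef
  have hA1meas : MeasurableSet A1 := hR (measurableSet_singleton 1)
  have hA0meas : MeasurableSet A0 := hR (measurableSet_singleton 0)
  have hTmeas : MeasurableSet Tset := hT (measurableSet_singleton t)
  have hA0compl : A0 = A1ᶜ := by
    ext ω
    simp only [hA0def, hA1def, Set.mem_setOf_eq, Set.mem_compl_iff]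
    constructor
    · intro h h1
      rw [h1] at h
      norm_num at h
    · intro h
      rcases hRbin ω with h0 | h1
      · exact h0
      · exact absurd h1 h
  set lam1 : ℝ := (P A1).toReal with hlam1def
  have hlam1pos : 0 < lam1 := ENNReal.toReal_pos hlam_pos.ne' (measure_ne_top _ _)
  have hPA0 : P A0 ≠ 0 := by
    intro h
    rw [hA0compl, prob_compl_eq_one_sub hA1meas] at h
    exact absurd (tsub_eq_zero_iff_le.mp h) (not_le.mpr hlam_lt)
  set P₁ := ProbabilityTheory.cond P A1 with hP₁def
  set P₀ := ProbabilityTheory.cond P A0 with hP₀def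
  haveI hP1prob : IsProbabilityMeasure P₁ := cond_isProbabilityMeasure hlam_pos.ne'
  haveI hP0prob : IsProbabilityMeasure P₀ := cond_isProbabilityMeasure hPA0
  set c : ℝ := (P₁ Tset).toReal with hcdef
  have hc0 : 0 ≤ c := ENNReal.toReal_nonneg
  have hc1 : c ≤ 1 := by
    rw [hcdef]
    exact ENNReal.toReal_le_of_le_ofReal zero_le_one (by simpa using prob_le_one (μ := P₁) (s := Tset))
  have hne : Nonempty Ω := by
    by_contra h
    rw [not_nonempty_iff] at h
    refine hlam_pos.ne' ?_
    rw [Set.eq_empty_of_isEmpty A1]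
    exact measure_empty
  have x₀ : 𝒳 := X (Classical.arbitrary Ω)
  have hεle : ε ≤ 1 - ε := le_trans (hlamdr x₀).1 (hlamdr x₀).2
  have hC0pos : 0 ≤ C0 := le_trans (abs_nonneg _) (hC0b x₀)
  set dfun : 𝒳 → ℝ := fun x => lamd x * c + (1 - lamd x) * πd x with hdfundef
  have hdlb : ∀ x, ε * ε ≤ dfun x := by
    intro x
    have h1 := hlamdr x
    have h2 := hπdr x
    simp only [hdfundef]
    nlinarith [h1.1, h1.2, h2.1, h2.2, hc0, hε]
  have hdub : ∀ x, dfun x ≤ 1 := by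
    intro x
    have h1 := hlamdr x
    have h2 := hπdr x
    simp only [hdfundef]
    nlinarith [h1.1, h1.2, h2.1, h2.2, hc0, hc1, hε]
  have hdpos : ∀ x, 0 < dfun x := fun x => lt_of_lt_of_le (by positivity) (hdlb x)
  set gfun : 𝒳 → ℝ := fun x => lamd x / dfun x with hgfundef
  have hgfunm : Measurable gfun :=
    hlamdm.div ((hlamdm.mul measurable_const).add ((measurable_const.sub hlamdm).mul hπdm))
  set B : ℝ := 1 / (ε * ε) with hBdef
  have hB0 : 0 ≤ B := by positivity
  have hgfunb : ∀ x, ‖gfun x‖ ≤ B := by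
    intro x
    rw [Real.norm_eq_abs, hgfundef,
      abs_of_nonneg (div_nonneg (le_trans hε.le (hlamdr x).1) (hdpos x).le)]
    exact div_le_div₀ zero_le_one (by linarith [(hlamdr x).2]) (by positivity) (hdlb x)
  set g : Ω → ℝ := fun ω => gfun (X ω) with hgdef
  have hgSM : StronglyMeasurable[(sigmaX X)] g := (hgfunm.comp hXsm).stronglyMeasurable
  have hgb : ∀ᵐ ω ∂P, ‖g ω‖ ≤ B := ae_of_all _ fun ω => hgfunb (X ω)
  set τX : Ω → ℝ := fun ω => τd (X ω) with hτXdef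
  have hτSM : StronglyMeasurable[(sigmaX X)] τX := (hτdm.comp hXsm).stronglyMeasurable
  have hτXb : ∀ ω, ‖τX ω‖ ≤ C0 := fun ω => hC0b (X ω)
  have hτXint : Integrable τX P :=
    (integrable_const C0).mono' ((hτdm.comp hX)).aestronglyMeasurable
      (ae_of_all _ fun ω => hτXb ω)
  set W : Ω → ℝ := fun ω => Y' ω - τX ω with hWdef
  have hWint : Integrable W P := hY'i.sub hτXint
  set I1 : Ω → ℝ := A1.indicator (fun _ => (1:ℝ)) with hI1def
  set I0 : Ω → ℝ := A0.indicator (fun _ => (1:ℝ)) with hI0def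
  set IT : Ω → ℝ := Tset.indicator (fun _ => (1:ℝ)) with hITdef
  have hI1app : ∀ ω, I1 ω = if R ω = 1 then 1 else 0 := by
    intro ω
    simp [hI1def, Set.indicator_apply, hA1def, Set.mem_setOf_eq]
  have hI0app : ∀ ω, I0 ω = if R ω = 0 then 1 else 0 := by
    intro ω
    simp [hI0def, Set.indicator_apply, hA0def, Set.mem_setOf_eq]
  have hITapp : ∀ ω, IT ω = if T ω = t then 1 else 0 := by
    intro ω
    simp [hITdef, Set.indicator_apply, hTsetdef, Set.mem_setOf_eq]
  have hI1b : ∀ ω, ‖I1 ω‖ ≤ 1 := by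
    intro ω
    rw [hI1app]
    by_cases h : R ω = 1 <;> simp [h]
  have hI0b : ∀ ω, ‖I0 ω‖ ≤ 1 := by
    intro ω
    rw [hI0app]
    by_cases h : R ω = 0 <;> simp [h]
  have hITb : ∀ ω, ‖IT ω‖ ≤ 1 := by
    intro ω
    rw [hITapp]
    by_cases h : T ω = t <;> simp [h]
  have hI1int : Integrable I1 P := (integrable_const 1).indicator hA1meas
  set lamX := MeasureTheory.condExp (sigmaX X) P I1 with hlamXdef
  set π0 := MeasureTheory.condExp (sigmaX X) P₀ IT with hπ0def
  have hlamX01 : ∀ᵐ ω ∂P, 0 ≤ lamX ω ∧ lamX ω ≤ 1 := condexp_indicator_mem hm hA1meas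
  have hlamXb : ∀ᵐ ω ∂P, ‖lamX ω‖ ≤ 1 := by
    filter_upwards [hlamX01] with ω h
    rw [Real.norm_eq_abs, abs_le]
    exact ⟨by linarith [h.1], h.2⟩
  have hπ0ae : ∀ᵐ ω ∂P, ε ≤ π0 ω ∧ π0 ω ≤ 1 - ε := by
    have hq : cprob (sigmaX X) P₀ Tset = π0 := rfl
    rwa [hq] at hpi0
  have hπ0b : ∀ᵐ ω ∂P, ‖π0 ω‖ ≤ 1 := by
    filter_upwards [hπ0ae] with ω h
    rw [Real.norm_eq_abs, abs_le]
    exact ⟨by linarith [h.1, hε], by linarith [h.2, hε]⟩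
  have hlamXSM : StronglyMeasurable[(sigmaX X)] lamX := stronglyMeasurable_condExp
  have hπ0SM : StronglyMeasurable[(sigmaX X)] π0 := stronglyMeasurable_condExp
  -- absolute continuity transfers
  have haeP₀ : ∀ {p : Ω → Prop}, (∀ᵐ ω ∂P, p ω) → (∀ᵐ ω ∂P₀, p ω) := by
    intro p h
    have hac : P₀ ≪ P := by
      rw [hP₀def]
      exact ProbabilityTheory.cond_absolutelyContinuous
    exact hac.ae_le h
  have hcondint : ∀ {A : Set Ω}, P A ≠ 0 → ∀ {F : Ω → ℝ}, Integrable F P →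
      Integrable F (ProbabilityTheory.cond P A) := by
    intro A hA0 F hF
    show Integrable F ((P A)⁻¹ • P.restrict A)
    exact (hF.restrict).smul_measure (ENNReal.inv_ne_top.mpr hA0)
  have hY'i₀ : Integrable Y' P₀ := hcondint hPA0 hY'i
  have hY'i₁ : Integrable Y' P₁ := hcondint hlam_pos.ne' hY'i
  have hτXint₀ : Integrable τX P₀ := hcondint hPA0 hτXint
  have hτXint₁ : Integrable τX P₁ := hcondint hlam_pos.ne' hτXint
  have hWint₀ : Integrable W P₀ := hY'i₀.sub hτXint₀
  have hWint₁ : Integrable W P₁ := hY'i₁.sub hτXint₁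
  have hITint₀ : Integrable IT P₀ := hcondint hPA0 ((integrable_const 1).indicator hTmeas)
  have hg2m : Measurable (fun ω => (Y₁ ω, Y₀ ω)) := hY₁m.prodMk hY₀m
  have hprcomp : (pr ∘ fun ω => (Y₁ ω, Y₀ ω)) = Y' := funext hprY
  have hprP : Integrable pr (P.map (fun ω => (Y₁ ω, Y₀ ω))) := by
    refine (integrable_map_measure hpr.aestronglyMeasurable hg2m.aemeasurable).mpr ?_
    rw [hprcomp]
    exact hY'i
  have hprP₀ : Integrable pr (P₀.map (fun ω => (Y₁ ω, Y₀ ω))) := by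
    refine (integrable_map_measure hpr.aestronglyMeasurable hg2m.aemeasurable).mpr ?_
    rw [hprcomp]
    exact hY'i₀
  -- generic integrability of bounded times integrable
  have hgaesm : AEStronglyMeasurable g P := (hgfunm.comp hX).aestronglyMeasurable
  have hI1aesm : AEStronglyMeasurable I1 P := (measurable_const.indicator hA1meas).aestronglyMeasurable
  have hI0aesm : AEStronglyMeasurable I0 P := (measurable_const.indicator hA0meas).aestronglyMeasurable
  have hITaesm : AEStronglyMeasurable IT P := (measurable_const.indicator hTmeas).aestronglyMeasurable
  have hlamXaesm : AEStronglyMeasurable lamX P := (hlamXSM.mono hm).aestronglyMeasurable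
  have hπ0aesm : AEStronglyMeasurable π0 P := (hπ0SM.mono hm).aestronglyMeasurable
  haveI : (MeasureTheory.ae P).NeBot := ae_neBot.mpr (IsProbabilityMeasure.ne_zero P)
  -- the A3 consequence
  have hA3' : ∀ (G : Ω → ℝ), StronglyMeasurable[(sigmaX X)] G → ∀ (C : ℝ), (∀ᵐ ω ∂P, ‖G ω‖ ≤ C) →
      ∫ ω, I1 ω * (G ω * W ω) ∂P = ∫ ω, lamX ω * (G ω * W ω) ∂P := by
    intro G hG C hGb
    have hCpos : 0 ≤ C := by
      obtain ⟨ω, hω⟩ := hGb.exists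
      exact le_trans (norm_nonneg _) hω
    have hGaesm : AEStronglyMeasurable G P := (hG.mono hm).aestronglyMeasurable
    have hfac := factor (μ := P) hm hR hg2m hA3 (measurableSet_singleton (1:ℝ)) hG hGb hprP
    have hfacY : ∫ ω, I1 ω * (G ω * Y' ω) ∂P = ∫ ω, lamX ω * (G ω * Y' ω) ∂P := by
      calc ∫ ω, I1 ω * (G ω * Y' ω) ∂P = ∫ ω, I1 ω * G ω * pr (Y₁ ω, Y₀ ω) ∂P :=
            integral_congr_ae (ae_of_all _ fun ω => by beta_reduce; rw [hprY ω]; ring)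
        _ = ∫ ω, lamX ω * G ω * pr (Y₁ ω, Y₀ ω) ∂P := hfac
        _ = ∫ ω, lamX ω * (G ω * Y' ω) ∂P :=
            integral_congr_ae (ae_of_all _ fun ω => by beta_reduce; rw [hprY ω]; ring)
    have hfacτ : ∫ ω, I1 ω * (G ω * τX ω) ∂P = ∫ ω, lamX ω * (G ω * τX ω) ∂P := by
      have h1 : ∫ ω, (fun ω' => G ω' * τX ω') ω * I1 ω ∂P
          = ∫ ω, (fun ω' => G ω' * τX ω') ω * (MeasureTheory.condExp (sigmaX X) P I1) ω ∂P :=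
        int_mul_condexp hm (hG.mul hτSM) (C := C * C0)
          (by filter_upwards [hGb] with ω h
              rw [norm_mul]
              exact mul_le_mul h (hτXb ω) (norm_nonneg _) hCpos) hI1int
      calc ∫ ω, I1 ω * (G ω * τX ω) ∂P = ∫ ω, (fun ω' => G ω' * τX ω') ω * I1 ω ∂P :=
            integral_congr_ae (ae_of_all _ fun ω => by simp only [Pi.mul_apply]; beta_reduce; ring)
        _ = ∫ ω, (fun ω' => G ω' * τX ω') ω * lamX ω ∂P := h1
        _ = ∫ ω, lamX ω * (G ω * τX ω) ∂P := integral_congr_ae (ae_of_all _ fun ω => by simp only [Pi.mul_apply]; beta_reduce; ring)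
    have hbI1G : ∀ᵐ ω ∂P, ‖I1 ω * G ω‖ ≤ C := by
      filter_upwards [hGb] with ω h
      rw [norm_mul]
      calc ‖I1 ω‖ * ‖G ω‖ ≤ 1 * C := mul_le_mul (hI1b ω) h (norm_nonneg _) zero_le_one
        _ = C := one_mul C
    have hblamXG : ∀ᵐ ω ∂P, ‖lamX ω * G ω‖ ≤ C := by
      filter_upwards [hGb, hlamXb] with ω h hl
      rw [norm_mul]
      calc ‖lamX ω‖ * ‖G ω‖ ≤ 1 * C := mul_le_mul hl h (norm_nonneg _) zero_le_one
        _ = C := one_mul C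
    have hiY : Integrable (fun ω => I1 ω * (G ω * Y' ω)) P :=
      (hY'i.bdd_mul (hI1aesm.mul hGaesm) hbI1G).congr (ae_of_all _ fun ω => by simp only [Pi.mul_apply]; beta_reduce; ring)
    have hiτ : Integrable (fun ω => I1 ω * (G ω * τX ω)) P :=
      (hτXint.bdd_mul (hI1aesm.mul hGaesm) hbI1G).congr (ae_of_all _ fun ω => by simp only [Pi.mul_apply]; beta_reduce; ring)
    have hlY : Integrable (fun ω => lamX ω * (G ω * Y' ω)) P :=
      (hY'i.bdd_mul (hlamXaesm.mul hGaesm) hblamXG).congr (ae_of_all _ fun ω => by simp only [Pi.mul_apply]; beta_reduce; ring)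
    have hlτ : Integrable (fun ω => lamX ω * (G ω * τX ω)) P :=
      (hτXint.bdd_mul (hlamXaesm.mul hGaesm) hblamXG).congr (ae_of_all _ fun ω => by simp only [Pi.mul_apply]; beta_reduce; ring)
    calc ∫ ω, I1 ω * (G ω * W ω) ∂P
        = (∫ ω, I1 ω * (G ω * Y' ω) ∂P) - ∫ ω, I1 ω * (G ω * τX ω) ∂P := by
          rw [← integral_sub hiY hiτ]
          exact integral_congr_ae (ae_of_all _ fun ω => by simp only [hWdef]; ring)
      _ = (∫ ω, lamX ω * (G ω * Y' ω) ∂P) - ∫ ω, lamX ω * (G ω * τX ω) ∂P := by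
          rw [hfacY, hfacτ]
      _ = ∫ ω, lamX ω * (G ω * W ω) ∂P := by
          rw [← integral_sub hlY hlτ]
          exact integral_congr_ae (ae_of_all _ fun ω => by simp only [hWdef]; ring)
  -- the A2 consequence
  have hA2' : ∫ ω, IT ω * (g ω * W ω) ∂P₀ = ∫ ω, π0 ω * (g ω * W ω) ∂P₀ := by
    have hgaesm₀ : AEStronglyMeasurable g P₀ := (hgfunm.comp hX).aestronglyMeasurable
    have hITaesm₀ : AEStronglyMeasurable IT P₀ :=
      (measurable_const.indicator hTmeas).aestronglyMeasurable
    have hπ0aesm₀ : AEStronglyMeasurable π0 P₀ := (hπ0SM.mono hm).aestronglyMeasurable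
    have hπ0b₀ : ∀ᵐ ω ∂P₀, ‖π0 ω‖ ≤ 1 := haeP₀ hπ0b
    have hfac := factor (μ := P₀) hm hT hg2m hA2 (measurableSet_singleton t) hgSM
      (haeP₀ hgb) hprP₀
    have hfacY : ∫ ω, IT ω * (g ω * Y' ω) ∂P₀ = ∫ ω, π0 ω * (g ω * Y' ω) ∂P₀ := by
      calc ∫ ω, IT ω * (g ω * Y' ω) ∂P₀ = ∫ ω, IT ω * g ω * pr (Y₁ ω, Y₀ ω) ∂P₀ :=
            integral_congr_ae (ae_of_all _ fun ω => by beta_reduce; rw [hprY ω]; ring)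
        _ = ∫ ω, π0 ω * g ω * pr (Y₁ ω, Y₀ ω) ∂P₀ := hfac
        _ = ∫ ω, π0 ω * (g ω * Y' ω) ∂P₀ :=
            integral_congr_ae (ae_of_all _ fun ω => by beta_reduce; rw [hprY ω]; ring)
    have hfacτ : ∫ ω, IT ω * (g ω * τX ω) ∂P₀ = ∫ ω, π0 ω * (g ω * τX ω) ∂P₀ := by
      have h1 : ∫ ω, (fun ω' => g ω' * τX ω') ω * IT ω ∂P₀
          = ∫ ω, (fun ω' => g ω' * τX ω') ω * (MeasureTheory.condExp (sigmaX X) P₀ IT) ω ∂P₀ :=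
        int_mul_condexp hm (hgSM.mul hτSM) (C := B * C0)
          (haeP₀ (ae_of_all _ fun ω => by
            rw [norm_mul]
            exact mul_le_mul (hgfunb (X ω)) (hτXb ω) (norm_nonneg _) hB0)) hITint₀
      calc ∫ ω, IT ω * (g ω * τX ω) ∂P₀ = ∫ ω, (fun ω' => g ω' * τX ω') ω * IT ω ∂P₀ :=
            integral_congr_ae (ae_of_all _ fun ω => by simp only [Pi.mul_apply]; beta_reduce; ring)
        _ = ∫ ω, (fun ω' => g ω' * τX ω') ω * π0 ω ∂P₀ := h1
        _ = ∫ ω, π0 ω * (g ω * τX ω) ∂P₀ := integral_congr_ae (ae_of_all _ fun ω => by simp only [Pi.mul_apply]; beta_reduce; ring)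
    have hbITg : ∀ᵐ ω ∂P₀, ‖IT ω * g ω‖ ≤ B := ae_of_all _ fun ω => by
      rw [norm_mul]
      calc ‖IT ω‖ * ‖g ω‖ ≤ 1 * B := mul_le_mul (hITb ω) (hgfunb (X ω)) (norm_nonneg _) zero_le_one
        _ = B := one_mul B
    have hbπ0g : ∀ᵐ ω ∂P₀, ‖π0 ω * g ω‖ ≤ B := by
      filter_upwards [hπ0b₀] with ω h
      rw [norm_mul]
      calc ‖π0 ω‖ * ‖g ω‖ ≤ 1 * B := mul_le_mul h (hgfunb (X ω)) (norm_nonneg _) zero_le_one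
        _ = B := one_mul B
    have hiY : Integrable (fun ω => IT ω * (g ω * Y' ω)) P₀ :=
      (hY'i₀.bdd_mul (hITaesm₀.mul hgaesm₀) hbITg).congr (ae_of_all _ fun ω => by simp only [Pi.mul_apply]; beta_reduce; ring)
    have hiτ : Integrable (fun ω => IT ω * (g ω * τX ω)) P₀ :=
      (hτXint₀.bdd_mul (hITaesm₀.mul hgaesm₀) hbITg).congr (ae_of_all _ fun ω => by simp only [Pi.mul_apply]; beta_reduce; ring)
    have hlY : Integrable (fun ω => π0 ω * (g ω * Y' ω)) P₀ :=
      (hY'i₀.bdd_mul (hπ0aesm₀.mul hgaesm₀) hbπ0g).congr (ae_of_all _ fun ω => by simp only [Pi.mul_apply]; beta_reduce; ring)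
    have hlτ : Integrable (fun ω => π0 ω * (g ω * τX ω)) P₀ :=
      (hτXint₀.bdd_mul (hπ0aesm₀.mul hgaesm₀) hbπ0g).congr (ae_of_all _ fun ω => by simp only [Pi.mul_apply]; beta_reduce; ring)
    calc ∫ ω, IT ω * (g ω * W ω) ∂P₀
        = (∫ ω, IT ω * (g ω * Y' ω) ∂P₀) - ∫ ω, IT ω * (g ω * τX ω) ∂P₀ := by
          rw [← integral_sub hiY hiτ]
          exact integral_congr_ae (ae_of_all _ fun ω => by simp only [hWdef]; ring)
      _ = (∫ ω, π0 ω * (g ω * Y' ω) ∂P₀) - ∫ ω, π0 ω * (g ω * τX ω) ∂P₀ := by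
          rw [hfacY, hfacτ]
      _ = ∫ ω, π0 ω * (g ω * W ω) ∂P₀ := by
          rw [← integral_sub hlY hlτ]
          exact integral_congr_ae (ae_of_all _ fun ω => by simp only [hWdef]; ring)
  -- the A1 consequence
  have hA1' : ∫ ω, IT ω * (g ω * W ω) ∂P₁ = c * ∫ ω, g ω * W ω ∂P₁ := by
    set uu : ℝ → ℝ := ({t} : Set ℝ).indicator (fun _ => 1) with huudef
    have huum : Measurable uu := measurable_const.indicator (measurableSet_singleton t)
    set vv : ℝ × ℝ × 𝒳 → ℝ := fun p => gfun p.2.2 * (pr (p.1, p.2.1) - τd p.2.2) with hvvdef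
    have hvvm : Measurable vv :=
      (hgfunm.comp (measurable_snd.comp measurable_snd)).mul
        ((hpr.comp (measurable_fst.prodMk (measurable_fst.comp measurable_snd))).sub
          (hτdm.comp (measurable_snd.comp measurable_snd)))
    have hZm : Measurable (fun ω => (Y₁ ω, Y₀ ω, X ω)) := hY₁m.prodMk (hY₀m.prodMk hX)
    have hind : IndepFun (uu ∘ T) (vv ∘ (fun ω => (Y₁ ω, Y₀ ω, X ω))) P₁ := hA1.comp huum hvvm
    have hmul := hind.integral_mul_eq_mul_integral ((huum.comp hT).aestronglyMeasurable)
      ((hvvm.comp hZm).aestronglyMeasurable)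
    have huuIT : ∀ ω, uu (T ω) = IT ω := by
      intro ω
      by_cases h : T ω = t <;>
        simp [huudef, hITdef, Set.indicator_apply, h, hTsetdef, Set.mem_setOf_eq]
    have hvvgW : ∀ ω, vv (Y₁ ω, Y₀ ω, X ω) = g ω * W ω := by
      intro ω
      simp only [hvvdef, hWdef, hτXdef, hgdef]
      rw [hprY ω]
    have e1 : ∫ ω, IT ω * (g ω * W ω) ∂P₁
        = ∫ ω, ((uu ∘ T) * (vv ∘ fun ω' => (Y₁ ω', Y₀ ω', X ω'))) ω ∂P₁ := by
      refine integral_congr_ae (ae_of_all _ fun ω => ?_)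
      simp only [Pi.mul_apply, Function.comp_apply, huuIT ω, hvvgW ω]
    have e2 : ∫ ω, (uu ∘ T) ω ∂P₁ = c := by
      have : (uu ∘ T) = Tset.indicator (fun _ => (1:ℝ)) := by
        funext ω
        rw [Function.comp_apply, huuIT ω, hITdef]
      rw [this, integral_indicator_const (1:ℝ) hTmeas, smul_eq_mul, mul_one, measureReal_def]
    have e3 : ∫ ω, (vv ∘ fun ω' => (Y₁ ω', Y₀ ω', X ω')) ω ∂P₁ = ∫ ω, g ω * W ω ∂P₁ := by
      refine integral_congr_ae (ae_of_all _ fun ω => ?_)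
      simp only [Function.comp_apply, hvvgW ω]
    rw [e1]
    show ∫ ω, ((uu ∘ T) * (vv ∘ fun ω' => (Y₁ ω', Y₀ ω', X ω'))) ω ∂P₁ = _
    rw [hmul, e2, e3]
  -- various integrability facts over P
  have hbITg : ∀ᵐ ω ∂P, ‖IT ω * g ω‖ ≤ B := ae_of_all _ fun ω => by
    rw [norm_mul]
    calc ‖IT ω‖ * ‖g ω‖ ≤ 1 * B := mul_le_mul (hITb ω) (hgfunb (X ω)) (norm_nonneg _) zero_le_one
      _ = B := one_mul B
  have hintITgW : Integrable (fun ω => IT ω * (g ω * W ω)) P :=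
    (hWint.bdd_mul (hITaesm.mul hgaesm) hbITg).congr
      (ae_of_all _ fun ω => by simp only [Pi.mul_apply]; beta_reduce; ring)
  have hbI1ITg : ∀ᵐ ω ∂P, ‖I1 ω * (IT ω * g ω)‖ ≤ B := by
    filter_upwards [hbITg] with ω h
    rw [norm_mul]
    calc ‖I1 ω‖ * ‖IT ω * g ω‖ ≤ 1 * B := mul_le_mul (hI1b ω) h (norm_nonneg _) zero_le_one
      _ = B := one_mul B
  have hbI0ITg : ∀ᵐ ω ∂P, ‖I0 ω * (IT ω * g ω)‖ ≤ B := by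
    filter_upwards [hbITg] with ω h
    rw [norm_mul]
    calc ‖I0 ω‖ * ‖IT ω * g ω‖ ≤ 1 * B := mul_le_mul (hI0b ω) h (norm_nonneg _) zero_le_one
      _ = B := one_mul B
  have hintI1ITgW : Integrable (fun ω => I1 ω * (IT ω * (g ω * W ω))) P :=
    (hWint.bdd_mul (hI1aesm.mul (hITaesm.mul hgaesm)) hbI1ITg).congr
      (ae_of_all _ fun ω => by simp only [Pi.mul_apply]; beta_reduce; ring)
  have hintI0ITgW : Integrable (fun ω => I0 ω * (IT ω * (g ω * W ω))) P :=
    (hWint.bdd_mul (hI0aesm.mul (hITaesm.mul hgaesm)) hbI0ITg).congr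
      (ae_of_all _ fun ω => by simp only [Pi.mul_apply]; beta_reduce; ring)
  have hbπ0g : ∀ᵐ ω ∂P, ‖π0 ω * g ω‖ ≤ B := by
    filter_upwards [hπ0b] with ω h
    rw [norm_mul]
    calc ‖π0 ω‖ * ‖g ω‖ ≤ 1 * B := mul_le_mul h (hgfunb (X ω)) (norm_nonneg _) zero_le_one
      _ = B := one_mul B
  have hintπ0gW : Integrable (fun ω => π0 ω * (g ω * W ω)) P :=
    (hWint.bdd_mul (hπ0aesm.mul hgaesm) hbπ0g).congr
      (ae_of_all _ fun ω => by simp only [Pi.mul_apply]; beta_reduce; ring)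
  have hbI1π0g : ∀ᵐ ω ∂P, ‖I1 ω * (π0 ω * g ω)‖ ≤ B := by
    filter_upwards [hbπ0g] with ω h
    rw [norm_mul]
    calc ‖I1 ω‖ * ‖π0 ω * g ω‖ ≤ 1 * B := mul_le_mul (hI1b ω) h (norm_nonneg _) zero_le_one
      _ = B := one_mul B
  have hintI1π0gW : Integrable (fun ω => I1 ω * (π0 ω * (g ω * W ω))) P :=
    (hWint.bdd_mul (hI1aesm.mul (hπ0aesm.mul hgaesm)) hbI1π0g).congr
      (ae_of_all _ fun ω => by simp only [Pi.mul_apply]; beta_reduce; ring)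
  have hblamXπ0g : ∀ᵐ ω ∂P, ‖lamX ω * (π0 ω * g ω)‖ ≤ B := by
    filter_upwards [hbπ0g, hlamXb] with ω h hl
    rw [norm_mul]
    calc ‖lamX ω‖ * ‖π0 ω * g ω‖ ≤ 1 * B := mul_le_mul hl h (norm_nonneg _) zero_le_one
      _ = B := one_mul B
  have hintlamXπ0gW : Integrable (fun ω => lamX ω * (π0 ω * (g ω * W ω))) P :=
    (hWint.bdd_mul (hlamXaesm.mul (hπ0aesm.mul hgaesm)) hblamXπ0g).congr
      (ae_of_all _ fun ω => by simp only [Pi.mul_apply]; beta_reduce; ring)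
  have hblamXg : ∀ᵐ ω ∂P, ‖lamX ω * g ω‖ ≤ B := by
    filter_upwards [hlamXb] with ω hl
    rw [norm_mul]
    calc ‖lamX ω‖ * ‖g ω‖ ≤ 1 * B := mul_le_mul hl (hgfunb (X ω)) (norm_nonneg _) zero_le_one
      _ = B := one_mul B
  have hintlamXgW : Integrable (fun ω => lamX ω * (g ω * W ω)) P :=
    (hWint.bdd_mul (hlamXaesm.mul hgaesm) hblamXg).congr
      (ae_of_all _ fun ω => by simp only [Pi.mul_apply]; beta_reduce; ring)
  have hintlamXW : Integrable (fun ω => lamX ω * W ω) P := hWint.bdd_mul hlamXaesm hlamXb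
  have hIsum : ∀ ω, I1 ω + I0 ω = 1 := by
    intro ω
    rw [hI1app, hI0app]
    rcases hRbin ω with h | h <;> simp [h] <;> norm_num
  -- the main identity
  have hM : ∫ ω, IT ω * (g ω * W ω) ∂P = ∫ ω, I1 ω * W ω ∂P := by
    -- split by R
    have step1 : ∫ ω, IT ω * (g ω * W ω) ∂P
        = (∫ ω, I1 ω * (IT ω * (g ω * W ω)) ∂P) + ∫ ω, I0 ω * (IT ω * (g ω * W ω)) ∂P := by
      rw [← integral_add hintI1ITgW hintI0ITgW]
      refine integral_congr_ae (ae_of_all _ fun ω => ?_)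
      beta_reduce
      linear_combination (-(IT ω * (g ω * W ω))) * (hIsum ω)
    -- R = 1 part
    have hS2 : lam1 * ∫ ω, IT ω * (g ω * W ω) ∂P₁ = ∫ ω, I1 ω * (IT ω * (g ω * W ω)) ∂P :=
      integral_cond hA1meas _
    have hS4 : lam1 * ∫ ω, g ω * W ω ∂P₁ = ∫ ω, I1 ω * (g ω * W ω) ∂P :=
      integral_cond hA1meas _
    have hS6 : ∫ ω, I1 ω * (g ω * W ω) ∂P = ∫ ω, lamX ω * (g ω * W ω) ∂P :=
      hA3' g hgSM B hgb
    have e1 : ∫ ω, I1 ω * (IT ω * (g ω * W ω)) ∂P = c * ∫ ω, lamX ω * (g ω * W ω) ∂P := by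
      rw [← hS2, hA1', ← hS6, ← hS4]
      ring
    -- R = 0 part
    have hS5 : (P A0).toReal * ∫ ω, IT ω * (g ω * W ω) ∂P₀
        = ∫ ω, I0 ω * (IT ω * (g ω * W ω)) ∂P := integral_cond hA0meas _
    have hS5' : (P A0).toReal * ∫ ω, π0 ω * (g ω * W ω) ∂P₀
        = ∫ ω, I0 ω * (π0 ω * (g ω * W ω)) ∂P := integral_cond hA0meas _
    have hS7a : ∫ ω, I1 ω * (π0 ω * (g ω * W ω)) ∂P
        = ∫ ω, lamX ω * (π0 ω * (g ω * W ω)) ∂P := by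
      have h := hA3' (fun ω => π0 ω * g ω) (hπ0SM.mul hgSM) B
        (by filter_upwards [hbπ0g] with ω hh; exact hh)
      calc ∫ ω, I1 ω * (π0 ω * (g ω * W ω)) ∂P
          = ∫ ω, I1 ω * ((fun ω' => π0 ω' * g ω') ω * W ω) ∂P :=
            integral_congr_ae (ae_of_all _ fun ω => by beta_reduce; ring)
        _ = ∫ ω, lamX ω * ((fun ω' => π0 ω' * g ω') ω * W ω) ∂P := h
        _ = ∫ ω, lamX ω * (π0 ω * (g ω * W ω)) ∂P :=
            integral_congr_ae (ae_of_all _ fun ω => by beta_reduce; ring)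
    have hS7 : ∫ ω, I0 ω * (π0 ω * (g ω * W ω)) ∂P
        = ∫ ω, (1 - lamX ω) * (π0 ω * (g ω * W ω)) ∂P := by
      have ha : ∫ ω, I0 ω * (π0 ω * (g ω * W ω)) ∂P
          = (∫ ω, π0 ω * (g ω * W ω) ∂P) - ∫ ω, I1 ω * (π0 ω * (g ω * W ω)) ∂P := by
        rw [← integral_sub hintπ0gW hintI1π0gW]
        refine integral_congr_ae (ae_of_all _ fun ω => ?_)
        beta_reduce
        linear_combination (π0 ω * (g ω * W ω)) * (hIsum ω)
      rw [ha, hS7a, ← integral_sub hintπ0gW hintlamXπ0gW]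
      exact integral_congr_ae (ae_of_all _ fun ω => by beta_reduce; ring)
    have e2 : ∫ ω, I0 ω * (IT ω * (g ω * W ω)) ∂P
        = ∫ ω, (1 - lamX ω) * (π0 ω * (g ω * W ω)) ∂P := by
      rw [← hS5, hA2', hS5', hS7]
    -- the lamX form of the right-hand side
    have hS8 : ∫ ω, I1 ω * W ω ∂P = ∫ ω, lamX ω * W ω ∂P := by
      have h := hA3' (fun _ => (1:ℝ)) stronglyMeasurable_const 1
        (ae_of_all _ fun ω => by norm_num)
      calc ∫ ω, I1 ω * W ω ∂P = ∫ ω, I1 ω * ((fun _ : Ω => (1:ℝ)) ω * W ω) ∂P :=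
            integral_congr_ae (ae_of_all _ fun ω => by beta_reduce; ring)
        _ = ∫ ω, lamX ω * ((fun _ : Ω => (1:ℝ)) ω * W ω) ∂P := h
        _ = ∫ ω, lamX ω * W ω ∂P := integral_congr_ae (ae_of_all _ fun ω => by beta_reduce; ring)
    -- combine into a single integral
    have hintc : Integrable (fun ω => c * (lamX ω * (g ω * W ω))) P := hintlamXgW.const_mul c
    have hint1m : Integrable (fun ω => (1 - lamX ω) * (π0 ω * (g ω * W ω))) P := by
      have := hintπ0gW.sub hintlamXπ0gW
      exact this.congr (ae_of_all _ fun ω => by simp only [Pi.sub_apply]; beta_reduce; ring)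
    have hD : (∫ ω, IT ω * (g ω * W ω) ∂P) - ∫ ω, I1 ω * W ω ∂P
        = ∫ ω, ((c * lamX ω + (1 - lamX ω) * π0 ω) * g ω - lamX ω) * W ω ∂P := by
      rw [step1, e1, e2, hS8]
      have hc' : c * ∫ ω, lamX ω * (g ω * W ω) ∂P = ∫ ω, c * (lamX ω * (g ω * W ω)) ∂P :=
        (integral_const_mul c _).symm
      have t1 : ∫ ω, (c * (lamX ω * (g ω * W ω)) + (1 - lamX ω) * (π0 ω * (g ω * W ω))) ∂P
          = (∫ ω, c * (lamX ω * (g ω * W ω)) ∂P)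
            + ∫ ω, (1 - lamX ω) * (π0 ω * (g ω * W ω)) ∂P := integral_add hintc hint1m
      have t2 : ∫ ω, (c * (lamX ω * (g ω * W ω)) + (1 - lamX ω) * (π0 ω * (g ω * W ω))
              - lamX ω * W ω) ∂P
          = (∫ ω, (c * (lamX ω * (g ω * W ω)) + (1 - lamX ω) * (π0 ω * (g ω * W ω))) ∂P)
            - ∫ ω, lamX ω * W ω ∂P := integral_sub (hintc.add hint1m) hintlamXW
      rw [hc', ← t1, ← t2]
      exact integral_congr_ae (ae_of_all _ fun ω => by beta_reduce; ring)
    -- the bias term vanishes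
    have hHW0 : ∫ ω, ((c * lamX ω + (1 - lamX ω) * π0 ω) * g ω - lamX ω) * W ω ∂P = 0 := by
      rcases hrob with hrobL | ⟨hlam, hpid⟩
      · -- case (i) : correct outcome model
        set HH : Ω → ℝ := fun ω => (c * lamX ω + (1 - lamX ω) * π0 ω) * g ω - lamX ω with hHHdef
        have hHHSM : StronglyMeasurable[(sigmaX X)] HH :=
          (((stronglyMeasurable_const.mul hlamXSM).add
            ((stronglyMeasurable_const.sub hlamXSM).mul hπ0SM)).mul hgSM).sub hlamXSM
        have hHHb : ∀ᵐ ω ∂P, ‖HH ω‖ ≤ 3 * B + 1 := by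
          filter_upwards [hlamX01, hπ0b, hlamXb] with ω h1 h2 h3
          simp only [hHHdef]
          rw [Real.norm_eq_abs]
          have hgB := hgfunb (X ω)
          rw [Real.norm_eq_abs] at h2 h3
          rw [Real.norm_eq_abs] at hgB
          have habs : |(c * lamX ω + (1 - lamX ω) * π0 ω) * g ω - lamX ω|
              ≤ |c * lamX ω + (1 - lamX ω) * π0 ω| * |g ω| + |lamX ω| := by
            calc |(c * lamX ω + (1 - lamX ω) * π0 ω) * g ω - lamX ω|
                ≤ |(c * lamX ω + (1 - lamX ω) * π0 ω) * g ω| + |lamX ω| := abs_sub _ _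
              _ = |c * lamX ω + (1 - lamX ω) * π0 ω| * |g ω| + |lamX ω| := by rw [abs_mul]
          refine le_trans habs ?_
          have h2' := abs_le.mp h2
          have h4 : |c * lamX ω + (1 - lamX ω) * π0 ω| ≤ 3 := by
            rw [abs_le]
            constructor
            · nlinarith [mul_nonneg hc0 h1.1,
                mul_nonneg (by linarith [h1.2] : (0:ℝ) ≤ 1 - lamX ω)
                  (by linarith [h2'.1] : (0:ℝ) ≤ 1 + π0 ω)]
            · nlinarith [mul_le_one₀ hc1 h1.1 h1.2,
                mul_nonneg (by linarith [h1.2] : (0:ℝ) ≤ 1 - lamX ω)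
                  (by linarith [h2'.2] : (0:ℝ) ≤ 1 - π0 ω)]
          have hgB' : |g ω| ≤ B := hgB
          have h5 : |c * lamX ω + (1 - lamX ω) * π0 ω| * |g ω| ≤ 3 * B :=
            mul_le_mul h4 hgB' (abs_nonneg _) (by norm_num)
          linarith [h3, h5]
        have hHHaesm : AEStronglyMeasurable HH P := (hHHSM.mono hm).aestronglyMeasurable
        have hHY : Integrable (fun ω => HH ω * Y' ω) P := hY'i.bdd_mul hHHaesm hHHb
        have hHτ : Integrable (fun ω => HH ω * τX ω) P := hτXint.bdd_mul hHHaesm hHHb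
        have key : ∫ ω, HH ω * Y' ω ∂P = ∫ ω, HH ω * (MeasureTheory.condExp (sigmaX X) P Y') ω ∂P :=
          int_mul_condexp hm hHHSM hHHb hY'i
        have hτeq : ∫ ω, HH ω * τX ω ∂P
            = ∫ ω, HH ω * (MeasureTheory.condExp (sigmaX X) P Y') ω ∂P := by
          refine integral_congr_ae ?_
          filter_upwards [hrobL] with ω h
          rw [h]
          rfl
        have hsplit : ∫ ω, ((c * lamX ω + (1 - lamX ω) * π0 ω) * g ω - lamX ω) * W ω ∂P
            = (∫ ω, HH ω * Y' ω ∂P) - ∫ ω, HH ω * τX ω ∂P := by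
          rw [← integral_sub hHY hHτ]
          refine integral_congr_ae (ae_of_all _ fun ω => by
            simp only [hHHdef, hWdef]; beta_reduce; ring)
        rw [hsplit, key, hτeq, sub_self]
      · -- case (ii) : correct treatment/selection models
        have hlam' : (fun ω => lamd (X ω)) =ᵐ[P] lamX := hlam
        have hpid' : (fun ω => πd (X ω)) =ᵐ[P] π0 := hpid
        have hzero : (fun ω => ((c * lamX ω + (1 - lamX ω) * π0 ω) * g ω - lamX ω) * W ω)
            =ᵐ[P] fun _ => (0:ℝ) := by
          filter_upwards [hlam', hpid'] with ω h1 h2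
          beta_reduce
          rw [← h1, ← h2]
          have hdne : lamd (X ω) * c + (1 - lamd (X ω)) * πd (X ω) ≠ 0 := by
            have := hdpos (X ω)
            simp only [hdfundef] at this
            exact this.ne'
          have hg' : g ω = lamd (X ω) / (lamd (X ω) * c + (1 - lamd (X ω)) * πd (X ω)) := rfl
          rw [hg']
          have hcan : (c * lamd (X ω) + (1 - lamd (X ω)) * πd (X ω)) * (lamd (X ω) / (lamd (X ω) * c + (1 - lamd (X ω)) * πd (X ω))) = lamd (X ω) := by
            rw [mul_div_assoc', div_eq_iff hdne]; ring
          rw [hcan]; ring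
        rw [integral_congr_ae hzero, integral_zero]
    linarith [hD, hHW0]
  -- final assembly
  set ν : ℝ := ∫ ω', Y' ω' ∂P₁ with hνdef
  have hpoint : ∀ ω,
      ((if T ω = t then (1:ℝ) else 0) * lamd (X ω) * Y ω
          / (lam1 * (lamd (X ω) * c + (1 - lamd (X ω)) * πd (X ω)))
        + (R ω - (if T ω = t then (1:ℝ) else 0) * lamd (X ω)
            / (lamd (X ω) * c + (1 - lamd (X ω)) * πd (X ω))) * τd (X ω) / lam1
        - (R ω / lam1) * ν)
      = (1/lam1) * (IT ω * (g ω * W ω) + I1 ω * τX ω - I1 ω * ν) := by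
    intro ω
    have hdne : lamd (X ω) * c + (1 - lamd (X ω)) * πd (X ω) ≠ 0 := by
      have := hdpos (X ω)
      simp only [hdfundef] at this
      exact this.ne'
    have hl1ne : lam1 ≠ 0 := hlam1pos.ne'
    have hgval : g ω = lamd (X ω) / (lamd (X ω) * c + (1 - lamd (X ω)) * πd (X ω)) := rfl
    have hWval : W ω = Y' ω - τd (X ω) := rfl
    have hτval : τX ω = τd (X ω) := rfl
    rw [hITapp, hI1app, hgval, hWval, hτval]
    by_cases htt : T ω = t
    · rw [hcons ω htt]
      rcases hRbin ω with hr | hr <;>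
        · rw [hr, if_pos htt]
          norm_num
          field_simp
          ring
    · rcases hRbin ω with hr | hr <;>
        · rw [hr, if_neg htt]
          norm_num
          try field_simp
          try ring
  have hintI1τ : Integrable (fun ω => I1 ω * τX ω) P :=
    hτXint.bdd_mul hI1aesm (ae_of_all _ hI1b)
  have hintI1ν : Integrable (fun ω => I1 ω * ν) P := hI1int.mul_const ν
  have hintI1Y' : Integrable (fun ω => I1 ω * Y' ω) P :=
    hY'i.bdd_mul hI1aesm (ae_of_all _ hI1b)
  have hI1Y' : lam1 * ν = ∫ ω, I1 ω * Y' ω ∂P := integral_cond hA1meas Y'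
  have hI1tot : ∫ ω, I1 ω ∂P = lam1 := by
    rw [hI1def, integral_indicator_const (1:ℝ) hA1meas, smul_eq_mul, mul_one, measureReal_def]
  have hI1νtot : ∫ ω, I1 ω * ν ∂P = lam1 * ν := by
    rw [integral_mul_const, hI1tot]
  have hI1Wsplit : ∫ ω, I1 ω * W ω ∂P
      = (∫ ω, I1 ω * Y' ω ∂P) - ∫ ω, I1 ω * τX ω ∂P := by
    rw [← integral_sub hintI1Y' hintI1τ]
    exact integral_congr_ae (ae_of_all _ fun ω => by
      simp only [hWdef]; beta_reduce; ring)
  calc ∫ ω, ((if T ω = t then (1 : ℝ) else 0) * lamd (X ω) * Y ω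
          / (lam1 * (lamd (X ω) * c + (1 - lamd (X ω)) * πd (X ω)))
        + (R ω - (if T ω = t then (1 : ℝ) else 0) * lamd (X ω)
            / (lamd (X ω) * c + (1 - lamd (X ω)) * πd (X ω))) * τd (X ω) / lam1
        - (R ω / lam1) * ν) ∂P
      = ∫ ω, (1/lam1) * (IT ω * (g ω * W ω) + I1 ω * τX ω - I1 ω * ν) ∂P :=
        integral_congr_ae (ae_of_all _ fun ω => hpoint ω)
    _ = (1/lam1) * ∫ ω, (IT ω * (g ω * W ω) + I1 ω * τX ω - I1 ω * ν) ∂P :=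
        integral_const_mul _ _
    _ = 0 := by
        have hadd : ∫ ω, (IT ω * (g ω * W ω) + I1 ω * τX ω - I1 ω * ν) ∂P
            = (∫ ω, IT ω * (g ω * W ω) ∂P) + (∫ ω, I1 ω * τX ω ∂P)
              - ∫ ω, I1 ω * ν ∂P := by
          have hintsum : Integrable (fun ω => IT ω * (g ω * W ω) + I1 ω * τX ω) P :=
            (hintITgW.add hintI1τ).congr (ae_of_all _ fun ω => by simp only [Pi.add_apply])
          rw [integral_sub hintsum hintI1ν, integral_add hintITgW hintI1τ]
        rw [hadd, hM, hI1Wsplit, ← hI1Y', hI1νtot]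
        ring

end Stmt16Aux

theorem stmt16
    {Ω 𝒳 : Type*} [MeasurableSpace Ω] [MeasurableSpace 𝒳] [StandardBorelSpace 𝒳]
    (P : Measure Ω) [IsProbabilityMeasure P]
    (X : Ω → 𝒳) (R T Y₁ Y₀ Y : Ω → ℝ) (Yt : ℝ → Ω → ℝ)
    (hX : Measurable X) (hR : Measurable R) (hT : Measurable T)
    (hY₁m : Measurable Y₁) (hY₀m : Measurable Y₀)
    (hRbin : ∀ ω, R ω = 0 ∨ R ω = 1) (hTbin : ∀ ω, T ω = 0 ∨ T ω = 1)
    (hY₁2 : MemLp Y₁ 2 P) (hY₀2 : MemLp Y₀ 2 P)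
    (hY : Y = fun ω => T ω * Y₁ ω + (1 - T ω) * Y₀ ω)
    (hYt1 : Yt 1 = Y₁) (hYt0 : Yt 0 = Y₀)
    (ε : ℝ) (hε : 0 < ε)
    (hlam_pos : 0 < P {ω | R ω = 1}) (hlam_lt : P {ω | R ω = 1} < 1)
    (hlamX : ∀ᵐ ω ∂P, ε ≤ cprob (sigmaX X) P {ω' | R ω' = 1} ω ∧
      cprob (sigmaX X) P {ω' | R ω' = 1} ω ≤ 1 - ε)
    (hpi : ∀ r ∈ ({0, 1} : Set ℝ), ∀ t ∈ ({0, 1} : Set ℝ), ∀ᵐ ω ∂P,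
      ε ≤ cprob (sigmaX X) (ProbabilityTheory.cond P {ω' | R ω' = r}) {ω' | T ω' = t} ω ∧
      cprob (sigmaX X) (ProbabilityTheory.cond P {ω' | R ω' = r}) {ω' | T ω' = t} ω ≤ 1 - ε)
    (hA1 : IndepFun T (fun ω => (Y₁ ω, Y₀ ω, X ω)) (ProbabilityTheory.cond P {ω | R ω = 1}))
    (hA2 : CondIndepFunGiven (sigmaX X) T (fun ω => (Y₁ ω, Y₀ ω))
      (ProbabilityTheory.cond P {ω | R ω = 0}))
    (hA3 : CondIndepFunGiven (sigmaX X) R (fun ω => (Y₁ ω, Y₀ ω)) P)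
    (t : ℝ) (ht : t = 0 ∨ t = 1)
    (lamd : 𝒳 → ℝ) (hlamdm : Measurable lamd) (hlamdr : ∀ x, lamd x ∈ Set.Icc ε (1 - ε))
    (πd : 𝒳 → ℝ) (hπdm : Measurable πd) (hπdr : ∀ x, πd x ∈ Set.Icc ε (1 - ε))
    (τd : 𝒳 → ℝ) (hτdm : Measurable τd) (hτdb : ∃ C, ∀ x, |τd x| ≤ C)
    (hrob : (fun ω => τd (X ω)) =ᵐ[P] cexp (sigmaX X) P (Yt t) ∨
      ((fun ω => lamd (X ω)) =ᵐ[P] cprob (sigmaX X) P {ω' | R ω' = 1} ∧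
        (fun ω => πd (X ω)) =ᵐ[P] cprob (sigmaX X) (ProbabilityTheory.cond P {ω' | R ω' = 0}) {ω' | T ω' = t}))
    :
    ∫ ω, ((if T ω = t then (1 : ℝ) else 0) * lamd (X ω) * Y ω / ((P {ω' | R ω' = 1}).toReal * (lamd (X ω) * ((ProbabilityTheory.cond P {ω' | R ω' = 1}) {ω' | T ω' = t}).toReal + (1 - lamd (X ω)) * πd (X ω)))
      + (R ω - (if T ω = t then (1 : ℝ) else 0) * lamd (X ω) / (lamd (X ω) * ((ProbabilityTheory.cond P {ω' | R ω' = 1}) {ω' | T ω' = t}).toReal + (1 - lamd (X ω)) * πd (X ω))) * τd (X ω) / (P {ω' | R ω' = 1}).toReal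
      - (R ω / (P {ω' | R ω' = 1}).toReal) * (∫ ω', Yt t ω' ∂(ProbabilityTheory.cond P {ω'' | R ω'' = 1}))) ∂P = 0 := by
  rcases ht with rfl | rfl
  · rw [hYt0] at hrob ⊢
    exact Stmt16Aux.main_aux P X R T Y₁ Y₀ Y Y₀ (fun p => p.2) hX hR hT hY₁m hY₀m
      measurable_snd (fun ω => rfl) hRbin (hY₀2.integrable one_le_two) 0
      (fun ω hT0 => by simp only [hY]; rw [hT0]; ring)
      ε hε hlam_pos hlam_lt (hpi 0 (by simp) 0 (by simp)) hA1 hA2 hA3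
      lamd hlamdm hlamdr πd hπdm hπdr τd hτdm hτdb hrob
  · rw [hYt1] at hrob ⊢
    exact Stmt16Aux.main_aux P X R T Y₁ Y₀ Y Y₁ (fun p => p.1) hX hR hT hY₁m hY₀m
      measurable_fst (fun ω => rfl) hRbin (hY₁2.integrable one_le_two) 1
      (fun ω hT1 => by simp only [hY]; rw [hT1]; ring)
      ε hε hlam_pos hlam_lt (hpi 0 (by simp) 1 (by simp)) hA1 hA2 hA3
      lamd hlamdm hlamdr πd hπdm hπdr τd hτdm hτdb hrob
end
end
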